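/- arXiv:2103.14112 — 10 statements merged into one kernel-verified Lean document; each statement's English description precedes it below -/
import Mathlib

section
/- Let Π = (Σ_in, Σ_out, P) be an LCL problem in normal form that is mixing. Then Π is not in the class MEASURE: there exist a standard Borel space X, an aperiodic Borel automorphism S of X, a Borel probability measure μ on X, and a Borel map i : X → Σ_in such that no Borel map f : X → Σ_out satisfies P(i x, i (S x), f x, f (S x)) for μ-almost every x ∈ X. -/
open MeasureTheory

section LCL

variable {Sin Sout : Type}

/-- `BlockType P B t a b`: there is a directed path from `(0, a)` to `(t, b)` in the
block graph of the block `B` (of length `t`) of the LCL problem with constraint `P`. -/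
def BlockType (P : Sin → Sin → Sout → Sout → Prop) (B : ℕ → Sin) (t : ℕ)
    (a b : Sout) : Prop :=
  ∃ g : ℕ → Sout, g 0 = a ∧ g t = b ∧ ∀ j < t, P (B j) (B (j + 1)) (g j) (g (j + 1))

/-- A subpartition `(Υ, ∇)` of `Sout`: an equivalence relation `nabla` on a subset
`dom` of `Sout`, together with an equivalence relation `pp` (the relation `ℙ`) on all of
`Sout` that is coarser than `nabla` on `dom`, and a partial order `preceq` (`⪯`) on the
`ℙ`-classes (modelled as a `ℙ`-invariant preorder on `Sout` which is antisymmetric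
modulo `ℙ`). -/
structure Subpartition (Sout : Type) where
  dom : Set Sout
  nabla : Sout → Sout → Prop
  nabla_dom_left : ∀ {a b}, nabla a b → a ∈ dom
  nabla_dom_right : ∀ {a b}, nabla a b → b ∈ dom
  nabla_refl : ∀ a ∈ dom, nabla a a
  nabla_symm : ∀ {a b}, nabla a b → nabla b a
  nabla_trans : ∀ {a b c}, nabla a b → nabla b c → nabla a c
  pp : Sout → Sout → Prop
  pp_equiv : Equivalence pp
  pp_coarser : ∀ {a b}, nabla a b → pp a b
  preceq : Sout → Sout → Prop
  preceq_refl : ∀ a, preceq a a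
  preceq_trans : ∀ {a b c}, preceq a b → preceq b c → preceq a c
  preceq_antisymm : ∀ {a b}, preceq a b → preceq b a → pp a b
  preceq_congr : ∀ {a a' b b'}, pp a a' → pp b b' → preceq a b → preceq a' b'

/-- The setoid of the equivalence relation `∇` on its domain. -/
def Subpartition.domSetoid (sp : Subpartition Sout) : Setoid sp.dom where
  r x y := sp.nabla x y
  iseqv := ⟨fun x => sp.nabla_refl x x.2, fun h => sp.nabla_symm h,
    fun h h' => sp.nabla_trans h h'⟩

/-- The set of `∇`-classes of a subpartition. -/
def Subpartition.Classes (sp : Subpartition Sout) : Type := Quotient sp.domSetoid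

/-- The `∇`-class of an element of the domain of `∇`. -/
def Subpartition.cls (sp : Subpartition Sout) (a : sp.dom) : sp.Classes :=
  Quotient.mk sp.domSetoid a

/-- `B` (of length `t`) is a permutation `σ`-block on the subpartition `sp`,
witnessed by the permutation `π` of the set of `∇`-classes. -/
def IsPermutationBlock (P : Sin → Sin → Sout → Sout → Prop) (σ : Sin)
    (sp : Subpartition Sout) (B : ℕ → Sin) (t : ℕ)
    (π : Equiv.Perm sp.Classes) : Prop :=
  B 0 = σ ∧ B t = σ ∧
  (∀ a b : sp.dom, π (sp.cls a) = sp.cls b → sp.pp a b) ∧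
  (∀ a b : Sout, BlockType P B t a b → sp.preceq a b) ∧
  (∀ a b : Sout, a ∉ sp.dom → BlockType P B t a b → ¬ sp.pp a b) ∧
  (∀ a b : sp.dom, BlockType P B t (a : Sout) (b : Sout) → sp.pp a b →
    π (sp.cls a) = sp.cls b)

/-- `Γ_{σ,(Υ,∇)}`: the set of permutations of the `∇`-classes induced by
permutation `σ`-blocks on the subpartition. -/
def Gamma (P : Sin → Sin → Sout → Sout → Prop) (σ : Sin) (sp : Subpartition Sout) :
    Set (Equiv.Perm sp.Classes) :=
  {π | ∃ B t, IsPermutationBlock P σ sp B t π}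

/-- `Π` is `(σ, Υ, ∇)`-mixing: there is at least one permutation `σ`-block on the
subpartition and no `∇`-class is fixed by all elements of `Γ_{σ,(Υ,∇)}`. -/
def IsMixingAt (P : Sin → Sin → Sout → Sout → Prop) (σ : Sin)
    (sp : Subpartition Sout) : Prop :=
  (∃ B t π, IsPermutationBlock P σ sp B t π) ∧
  ¬ ∃ c : sp.Classes, ∀ π ∈ Gamma P σ sp, π c = c

/-- `Π` is mixing if it is `(σ, Υ, ∇)`-mixing for some `σ` and some subpartition. -/
def IsMixing (P : Sin → Sin → Sout → Sout → Prop) : Prop :=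
  ∃ (σ : Sin) (sp : Subpartition Sout), IsMixingAt P σ sp

/-- An automorphism is aperiodic if no nonzero integer power has a fixed point. -/
def Aperiodic {X : Type} (S : Equiv.Perm X) : Prop :=
  ∀ (n : ℤ) (x : X), (S ^ n) x = x → n = 0

/-- The class `BOREL`. -/
def InBOREL (P : Sin → Sin → Sout → Sout → Prop) : Prop :=
  ∀ (X : Type) [MeasurableSpace X] [StandardBorelSpace X],
    ∀ S : Equiv.Perm X, Measurable S → Measurable S.symm → Aperiodic S →
    ∀ i : X → Sin, (∀ σ : Sin, MeasurableSet (i ⁻¹' {σ})) →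
    ∃ f : X → Sout, (∀ τ : Sout, MeasurableSet (f ⁻¹' {τ})) ∧
      ∀ x, P (i x) (i (S x)) (f x) (f (S x))

/-- The class `MEASURE`. -/
def InMEASURE (P : Sin → Sin → Sout → Sout → Prop) : Prop :=
  ∀ (X : Type) [MeasurableSpace X] [StandardBorelSpace X],
    ∀ S : Equiv.Perm X, Measurable S → Measurable S.symm → Aperiodic S →
    ∀ μ : Measure X, IsProbabilityMeasure μ →
    ∀ i : X → Sin, (∀ σ : Sin, MeasurableSet (i ⁻¹' {σ})) →
    ∃ f : X → Sout, (∀ τ : Sout, MeasurableSet (f ⁻¹' {τ})) ∧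
      ∀ᵐ x ∂μ, P (i x) (i (S x)) (f x) (f (S x))

/-- The class `BAIRE`. -/
def InBAIRE (P : Sin → Sin → Sout → Sout → Prop) : Prop :=
  ∀ (X : Type) [TopologicalSpace X] [PolishSpace X] [MeasurableSpace X] [BorelSpace X],
    ∀ S : Equiv.Perm X, Measurable S → Measurable S.symm → Aperiodic S →
    ∀ i : X → Sin, (∀ σ : Sin, MeasurableSet (i ⁻¹' {σ})) →
    ∃ f : X → Sout, (∀ τ : Sout, MeasurableSet (f ⁻¹' {τ})) ∧
      {x | P (i x) (i (S x)) (f x) (f (S x))} ∈ residual X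

/-- The shift action of `ℤ` on a space of doubly infinite sequences. -/
def shiftZ {α : Type} (n : ℤ) (y : ℤ → α) : ℤ → α := fun k => y (n + k)

/-- `μ` is the product over `ℤ` of products over `ℕ` of uniform (coin-flipping)
measures on `{0,1}`: every finite cylinder has the expected measure. -/
def IsCoinFlipMeasure (μ : Measure (ℤ → ℕ → Bool)) : Prop :=
  IsProbabilityMeasure μ ∧
  ∀ (s : Finset (ℤ × ℕ)) (ε : ℤ × ℕ → Bool),
    μ {x | ∀ p ∈ s, x p.1 p.2 = ε p} = (1 / 2 : ENNReal) ^ s.card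

/-- The class `fiid`. -/
def InFIID (P : Sin → Sin → Sout → Sout → Prop) : Prop :=
  letI : MeasurableSpace Sin := ⊤
  letI : MeasurableSpace Sout := ⊤
  ∃ F : (ℤ → Sin) × (ℤ → ℕ → Bool) → (ℤ → Sout),
    Measurable F ∧
    (∀ (n : ℤ) (I : ℤ → Sin) (x : ℤ → ℕ → Bool),
      F (shiftZ n I, shiftZ n x) = shiftZ n (F (I, x))) ∧
    ∀ μ : Measure (ℤ → ℕ → Bool), IsCoinFlipMeasure μ →
      ∀ I : ℤ → Sin, ∀ᵐ x ∂μ,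
        ∀ i : ℤ, P (I i) (I (i + 1)) (F (I, x) i) (F (I, x) (i + 1))

end LCL
/- ===================  Part A: block combinatorics =================== -/

section Blocks

variable {Sin Sout : Type}
variable (P : Sin → Sin → Sout → Sout → Prop) (σ : Sin) (sp : Subpartition Sout)

/-- Concatenation of two blocks. -/
def catB (B : ℕ → Sin) (t : ℕ) (B' : ℕ → Sin) : ℕ → Sin :=
  fun j => if j < t then B j else B' (j - t)

lemma blockType_cat {B B' : ℕ → Sin} {t t' : ℕ} (hBt : B t = B' 0) {a b c : Sout}
    (h1 : BlockType P B t a b) (h2 : BlockType P B' t' b c) :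
    BlockType P (catB B t B') (t + t') a c := by
  obtain ⟨g, hg0, hgt, hg⟩ := h1
  obtain ⟨g', hg'0, hg't, hg'⟩ := h2
  refine ⟨fun j => if j < t then g j else g' (j - t), ?_, ?_, ?_⟩
  · by_cases h : 0 < t
    · simp [h, hg0]
    · have ht0 : t = 0 := by omega
      subst ht0
      simpa using hg'0.trans (hg0.symm.trans hgt).symm
  · have : ¬ t + t' < t := by omega
    simp only [this, if_false]
    rw [Nat.add_sub_cancel_left]; exact hg't
  · intro j hj
    by_cases h : j < t
    · by_cases h' : j + 1 < t
      · simpa [catB, h, h'] using hg j h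
      · have hjt : j + 1 = t := by omega
        have e1 : catB B t B' j = B j := if_pos h
        have e2 : catB B t B' (j + 1) = B' (j + 1 - t) := if_neg (by omega)
        have e3 : j + 1 - t = 0 := by omega
        simp only [e1, e2, e3, if_pos h, if_neg (by omega : ¬ j + 1 < t)]
        rw [← hBt, hg'0, ← hgt, ← hjt]
        exact hg j h
    · have e1 : catB B t B' j = B' (j - t) := if_neg h
      have e2 : catB B t B' (j + 1) = B' (j + 1 - t) := if_neg (by omega)
      have e3 : j + 1 - t = (j - t) + 1 := by omega
      simp only [e1, e2, e3, if_neg h, if_neg (by omega : ¬ j + 1 < t)]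
      exact hg' (j - t) (by omega)

lemma blockType_cat_rev {B B' : ℕ → Sin} {t t' : ℕ} (hBt : B t = B' 0) {a c : Sout}
    (h : BlockType P (catB B t B') (t + t') a c) :
    ∃ b, BlockType P B t a b ∧ BlockType P B' t' b c := by
  obtain ⟨g, hg0, hgt, hg⟩ := h
  refine ⟨g t, ⟨g, hg0, rfl, ?_⟩, ⟨fun j => g (t + j), rfl, ?_, ?_⟩⟩
  · intro j hj
    have := hg j (by omega)
    have e1 : catB B t B' j = B j := if_pos hj
    by_cases h' : j + 1 < t
    · have e2 : catB B t B' (j + 1) = B (j + 1) := if_pos h'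
      rwa [e1, e2] at this
    · have hjt : j + 1 = t := by omega
      have e2 : catB B t B' (j + 1) = B' (j + 1 - t) := if_neg (by omega)
      have e3 : j + 1 - t = 0 := by omega
      rw [e1, e2, e3, ← hBt, ← hjt] at this
      exact this
  · rw [← hgt]
  · intro j hj
    have := hg (t + j) (by omega)
    have e1 : catB B t B' (t + j) = B' j := by
      rw [catB, if_neg (by omega)]; congr 1; omega
    have e2 : catB B t B' (t + j + 1) = B' (j + 1) := by
      rw [catB, if_neg (by omega)]; congr 1; omega
    rw [e1, e2] at this
    have e4 : t + j + 1 = t + (j + 1) := by omega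
    rwa [e4] at this

lemma isPermutationBlock_cat {B B' : ℕ → Sin} {t t' : ℕ}
    {π π' : Equiv.Perm sp.Classes}
    (hB : IsPermutationBlock P σ sp B t π) (hB' : IsPermutationBlock P σ sp B' t' π') :
    IsPermutationBlock P σ sp (catB B t B') (t + t') (π' * π) := by
  obtain ⟨hB0, hBt, hc1, hc2, hc3, hc4⟩ := hB
  obtain ⟨hB'0, hB't, hc1', hc2', hc3', hc4'⟩ := hB'
  have hmid : B t = B' 0 := by rw [hBt, hB'0]
  refine ⟨?_, ?_, ?_, ?_, ?_, ?_⟩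
  · by_cases h : 0 < t
    · rw [catB, if_pos h]; exact hB0
    · have ht0 : t = 0 := by omega
      subst ht0; rw [catB, if_neg (by omega)]; simpa using hB'0
  · rw [catB, if_neg (by omega), Nat.add_sub_cancel_left]; exact hB't
  · -- condition 1
    intro a b hab
    obtain ⟨m, hm⟩ := Quotient.exists_rep (π (sp.cls a))
    have hm' : sp.cls m = π (sp.cls a) := hm
    have h1 : sp.pp (a : Sout) (m : Sout) := hc1 a m hm'.symm
    have h2 : sp.pp (m : Sout) (b : Sout) := by
      apply hc1' m b
      rw [hm']
      simpa [Equiv.Perm.mul_apply] using hab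
    exact sp.pp_equiv.trans h1 h2
  · -- condition 2
    intro a c hac
    obtain ⟨b, h1, h2⟩ := blockType_cat_rev P hmid hac
    exact sp.preceq_trans (hc2 a b h1) (hc2' b c h2)
  · -- condition 3
    intro a c ha hac hppac
    obtain ⟨b, h1, h2⟩ := blockType_cat_rev P hmid hac
    have hnab : ¬ sp.pp a b := hc3 a b ha h1
    have hab : sp.preceq a b := hc2 a b h1
    have hbc : sp.preceq b c := hc2' b c h2
    have hba : sp.preceq b a :=
      sp.preceq_congr (sp.pp_equiv.refl b) (sp.pp_equiv.symm hppac) hbc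
    exact hnab (sp.preceq_antisymm hab hba)
  · -- condition 4
    intro a c hac hppac
    obtain ⟨b, h1, h2⟩ := blockType_cat_rev P hmid hac
    have hab : sp.preceq (a : Sout) b := hc2 a b h1
    have hbc : sp.preceq b (c : Sout) := hc2' b c h2
    have hba : sp.preceq b (a : Sout) :=
      sp.preceq_congr (sp.pp_equiv.refl b) (sp.pp_equiv.symm hppac) hbc
    have hppab : sp.pp (a : Sout) b := sp.preceq_antisymm hab hba
    have hppbc : sp.pp b (c : Sout) := sp.pp_equiv.trans (sp.pp_equiv.symm hppab) hppac
    have hbdom : b ∈ sp.dom := by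
      by_contra hb
      exact hc3' b c hb h2 hppbc
    have e1 : π (sp.cls a) = sp.cls ⟨b, hbdom⟩ := hc4 a ⟨b, hbdom⟩ h1 hppab
    have e2 : π' (sp.cls ⟨b, hbdom⟩) = sp.cls c := hc4' ⟨b, hbdom⟩ c h2 hppbc
    simp [Equiv.Perm.mul_apply, e1, e2]

lemma Gamma_mul_mem {π π' : Equiv.Perm sp.Classes}
    (h : π ∈ Gamma P σ sp) (h' : π' ∈ Gamma P σ sp) : π' * π ∈ Gamma P σ sp := by
  obtain ⟨B, t, hB⟩ := h
  obtain ⟨B', t', hB'⟩ := h'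
  exact ⟨catB B t B', t + t', isPermutationBlock_cat P σ sp hB hB'⟩

lemma Gamma_pow_mem {π : Equiv.Perm sp.Classes}
    (h : π ∈ Gamma P σ sp) : ∀ k : ℕ, π ^ (k + 1) ∈ Gamma P σ sp := by
  intro k
  induction k with
  | zero => simpa using h
  | succ k ih =>
    have := Gamma_mul_mem P σ sp ih h
    rwa [← pow_succ'] at this

instance instFiniteDom [Finite Sout] : Finite sp.dom := Subtype.finite

instance instFiniteClasses [Finite Sout] : Finite sp.Classes :=
  inferInstanceAs (Finite (Quotient sp.domSetoid))

lemma Gamma_one_mem {π : Equiv.Perm sp.Classes} [Finite Sout]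
    (h : π ∈ Gamma P σ sp) : (1 : Equiv.Perm sp.Classes) ∈ Gamma P σ sp := by
  have hpos : 0 < orderOf π := orderOf_pos π
  have := Gamma_pow_mem P σ sp h (orderOf π - 1)
  rwa [Nat.sub_add_cancel hpos, pow_orderOf_eq_one] at this

lemma Gamma_pow_mem' {π : Equiv.Perm sp.Classes} [Finite Sout]
    (h : π ∈ Gamma P σ sp) : ∀ k : ℕ, π ^ k ∈ Gamma P σ sp := by
  intro k
  cases k with
  | zero => simpa using Gamma_one_mem P σ sp h
  | succ k => exact Gamma_pow_mem P σ sp h k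

lemma Gamma_inv_mem {π : Equiv.Perm sp.Classes} [Finite Sout]
    (h : π ∈ Gamma P σ sp) : π⁻¹ ∈ Gamma P σ sp := by
  have hpos : 0 < orderOf π := orderOf_pos π
  have h1 : π ^ (orderOf π - 1) * π = 1 := by
    rw [← pow_succ, Nat.sub_add_cancel hpos, pow_orderOf_eq_one]
  have h2 : π ^ (orderOf π - 1) = π⁻¹ := eq_inv_of_mul_eq_one_left h1
  exact h2 ▸ Gamma_pow_mem' P σ sp h _

/-- The subgroup generated by `Γ`. -/
def Gc : Subgroup (Equiv.Perm sp.Classes) := Subgroup.closure (Gamma P σ sp)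

lemma mem_Gamma_of_mem_Gc [Finite Sout] (hne : (Gamma P σ sp).Nonempty)
    {π : Equiv.Perm sp.Classes} (h : π ∈ Gc P σ sp) : π ∈ Gamma P σ sp := by
  obtain ⟨π₀, hπ₀⟩ := hne
  induction h using Subgroup.closure_induction with
  | mem x hx => exact hx
  | one => exact Gamma_one_mem P σ sp hπ₀
  | mul x y _ _ hx hy => exact Gamma_mul_mem P σ sp hy hx
  | inv x _ hx => exact Gamma_inv_mem P σ sp hx

/-- length-0 blocks force `dom = univ` and trivial permutation. -/
lemma zero_block_trivial {B : ℕ → Sin} {π : Equiv.Perm sp.Classes}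
    (hB : IsPermutationBlock P σ sp B 0 π) :
    sp.dom = Set.univ ∧ π = 1 := by
  obtain ⟨hB0, hBt, hc1, hc2, hc3, hc4⟩ := hB
  have hdiag : ∀ a : Sout, BlockType P B 0 a a := fun a => ⟨fun _ => a, rfl, rfl, by omega⟩
  have hdom : sp.dom = Set.univ := by
    ext a
    simp only [Set.mem_univ, iff_true]
    by_contra ha
    exact hc3 a a ha (hdiag a) (sp.pp_equiv.refl a)
  constructor
  · exact hdom
  · ext c
    simp only [Equiv.Perm.coe_one, id_eq]
    induction c using Quotient.ind with
    | _ a => exact hc4 a a (hdiag a) (sp.pp_equiv.refl a)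

lemma exists_pos_block [Finite Sout] [Nonempty Sout] (hmix : IsMixingAt P σ sp) :
    ∃ B t π, 1 ≤ t ∧ π ∈ Gamma P σ sp ∧ IsPermutationBlock P σ sp B t π := by
  obtain ⟨⟨B, t, π, hB⟩, hnofix⟩ := hmix
  rcases Nat.eq_zero_or_pos t with ht0 | htpos
  · subst ht0
    obtain ⟨hdom, hπ1⟩ := zero_block_trivial P σ sp hB
    -- Classes nonempty
    obtain ⟨a⟩ := (inferInstance : Nonempty Sout)
    have hadom : a ∈ sp.dom := hdom ▸ Set.mem_univ a
    set c₀ : sp.Classes := sp.cls ⟨a, hadom⟩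
    -- there is a non-identity element of Γ
    by_contra hcon
    push_neg at hcon
    apply hnofix
    refine ⟨c₀, fun π' hπ' => ?_⟩
    obtain ⟨B', t', hB'⟩ := hπ'
    rcases Nat.eq_zero_or_pos t' with ht'0 | ht'pos
    · subst ht'0
      rw [(zero_block_trivial P σ sp hB').2]
      rfl
    · exact absurd hB' (hcon B' t' π' (by omega) ⟨B', t', hB'⟩)
  · exact ⟨B, t, π, htpos, ⟨B, t, hB⟩, hB⟩

/-- every element of `Γ` can be realized by a block whose permutation is itself,
and there are blocks of positive length realizing any power. -/
lemma exists_block_pow [Finite Sout] {B : ℕ → Sin} {t : ℕ} {π : Equiv.Perm sp.Classes}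
    (hB : IsPermutationBlock P σ sp B t π) :
    ∀ k : ℕ, ∃ C, IsPermutationBlock P σ sp C ((k + 1) * t) (π ^ (k + 1)) := by
  intro k
  induction k with
  | zero => exact ⟨B, by simpa using hB⟩
  | succ k ih =>
    obtain ⟨C, hC⟩ := ih
    have h2 := isPermutationBlock_cat P σ sp hC hB
    rw [← pow_succ'] at h2
    have e : (k + 1) * t + t = (k + 1 + 1) * t := by ring
    rw [e] at h2
    exact ⟨_, h2⟩

/-- Main block existence: under mixing, every element of the closure subgroup is
realized by a block of positive length. -/
lemma exists_block_of_mem_Gc [Finite Sout] [Nonempty Sout] (hmix : IsMixingAt P σ sp)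
    {γ : Equiv.Perm sp.Classes} (hγ : γ ∈ Gc P σ sp) :
    ∃ Bt : (ℕ → Sin) × ℕ, 1 ≤ Bt.2 ∧ IsPermutationBlock P σ sp Bt.1 Bt.2 γ := by
  obtain ⟨B₀, t₀, π₀, ht₀, hπ₀Γ, hB₀⟩ := exists_pos_block P σ sp hmix
  have hγΓ : γ ∈ Gamma P σ sp := mem_Gamma_of_mem_Gc P σ sp ⟨π₀, hπ₀Γ⟩ hγ
  obtain ⟨Bγ, tγ, hBγ⟩ := hγΓ
  -- identity block of positive length
  have hpos : 0 < orderOf π₀ := orderOf_pos π₀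
  obtain ⟨C, hC⟩ := exists_block_pow P σ sp hB₀ (orderOf π₀ - 1)
  rw [Nat.sub_add_cancel hpos, pow_orderOf_eq_one] at hC
  refine ⟨⟨catB Bγ tγ C, tγ + orderOf π₀ * t₀⟩, by have := Nat.mul_pos hpos ht₀; omega, ?_⟩
  have := isPermutationBlock_cat P σ sp hBγ hC
  rw [one_mul] at this
  exact this

end Blocks
/- ===================  Part B: the space construction =================== -/

section Space
open MeasureTheory TopologicalSpace
open scoped ENNReal symmDiff

variable {Sin Sout : Type} [Fintype Sout] [Nonempty Sout]
variable (P : Sin → Sin → Sout → Sout → Prop) (σ : Sin) (sp : Subpartition Sout)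

/-- the alphabet: subgroup of `Perm Classes` generated by `Γ`. -/
abbrev Alp := ↥(Gc P σ sp)

local instance : TopologicalSpace (Alp P σ sp) := ⊥
local instance : DiscreteTopology (Alp P σ sp) := ⟨rfl⟩
local instance : MeasurableSpace (Alp P σ sp) := borel _
local instance : BorelSpace (Alp P σ sp) := ⟨rfl⟩
local instance : IsTopologicalGroup (Alp P σ sp) :=
  { toContinuousMul := ⟨continuous_of_discreteTopology⟩
    toContinuousInv := ⟨continuous_of_discreteTopology⟩ }
local instance : MeasurableSingletonClass (Alp P σ sp) :=
  ⟨fun a => (isOpen_discrete {a}).measurableSet⟩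

/-- the aperiodicity factor. -/
abbrev Yfac : Type := (m : ℕ) → Multiplicative (ZMod (m + 2))

local instance (m : ℕ) : MeasurableSpace (Multiplicative (ZMod (m + 2))) := borel _
local instance (m : ℕ) : BorelSpace (Multiplicative (ZMod (m + 2))) := ⟨rfl⟩

/-- the randomness factor. -/
abbrev Om := ℤ → Alp P σ sp

/-- the base space: a compact metrizable group. -/
abbrev Zsp := Yfac × Om P σ sp

noncomputable def K0Z : PositiveCompacts (Zsp P σ sp) :=
  ⟨⟨Set.univ, isCompact_univ⟩, by rw [interior_univ]; exact Set.univ_nonempty⟩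

/-- Haar probability measure on the base. -/
noncomputable def muZ : Measure (Zsp P σ sp) := Measure.haarMeasure (K0Z P σ sp)

instance : IsProbabilityMeasure (muZ P σ sp) :=
  ⟨by simpa [muZ, K0Z] using Measure.haarMeasure_self (K₀ := K0Z P σ sp)⟩

instance : (muZ P σ sp).IsMulLeftInvariant := by
  unfold muZ; infer_instance

instance : SigmaFinite (muZ P σ sp) := by infer_instance

/-- invariance of Haar measure under continuous group automorphisms. -/
lemma measurePreserving_mulEquiv (φ : Zsp P σ sp ≃* Zsp P σ sp) (hc : Continuous φ) :
    MeasurePreserving φ (muZ P σ sp) (muZ P σ sp) := by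
  have hm : Measurable φ := hc.measurable
  refine ⟨hm, ?_⟩
  set ν := (muZ P σ sp).map φ with hν_def
  have hν : IsProbabilityMeasure ν := Measure.isProbabilityMeasure_map hm.aemeasurable
  have hinv : ν.IsMulLeftInvariant := by
    constructor
    intro g
    have hmg : Measurable (fun x : Zsp P σ sp => g * x) :=
      (continuous_const.mul continuous_id).measurable
    have hmg' : Measurable (fun x : Zsp P σ sp => φ.symm g * x) :=
      (continuous_const.mul continuous_id).measurable
    rw [hν_def, Measure.map_map hmg hm]
    have hcomp : ((g * ·) ∘ φ) = φ ∘ (φ.symm g * ·) := by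
      funext x
      simp only [Function.comp_apply]
      rw [map_mul, MulEquiv.apply_symm_apply]
    rw [hcomp, ← Measure.map_map hm hmg', MeasureTheory.map_mul_left_eq_self]
  have huniq : ν = ν ↑(K0Z P σ sp) • Measure.haarMeasure (K0Z P σ sp) :=
    Measure.haarMeasure_unique ν (K0Z P σ sp)
  have hone : ν ↑(K0Z P σ sp) = 1 := by
    have : (↑(K0Z P σ sp) : Set (Zsp P σ sp)) = Set.univ := rfl
    rw [this]
    exact measure_univ
  rw [huniq, hone, one_smul]
  rfl

/-- the shift on `Om` as a group automorphism. -/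
def shiftE : Om P σ sp ≃* Om P σ sp where
  toFun w := fun k => w (k + 1)
  invFun w := fun k => w (k - 1)
  left_inv w := funext fun k => by simp
  right_inv w := funext fun k => by simp
  map_mul' v w := rfl

lemma continuous_shiftE : Continuous (shiftE P σ sp) :=
  continuous_pi fun k => continuous_apply (k + 1)

lemma continuous_shiftE_symm : Continuous (shiftE P σ sp).symm :=
  continuous_pi fun k => continuous_apply (k - 1)

/-- the step element in `Yfac`. -/
def g0Y : Yfac := fun _ => Multiplicative.ofAdd 1

/-- the base transformation. -/
noncomputable def Tz : Zsp P σ sp → Zsp P σ sp := fun z => (g0Y * z.1, shiftE P σ sp z.2)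

noncomputable def TzInv : Zsp P σ sp → Zsp P σ sp :=
  fun z => (g0Y⁻¹ * z.1, (shiftE P σ sp).symm z.2)

lemma TzInv_Tz (z : Zsp P σ sp) : TzInv P σ sp (Tz P σ sp z) = z := by
  simp [Tz, TzInv, ← mul_assoc]

lemma Tz_TzInv (z : Zsp P σ sp) : Tz P σ sp (TzInv P σ sp z) = z := by
  simp [Tz, TzInv, ← mul_assoc]

lemma measurePreserving_Tz : MeasurePreserving (Tz P σ sp) (muZ P σ sp) (muZ P σ sp) := by
  have h1 : MeasurePreserving (fun z : Zsp P σ sp => ((g0Y, 1) : Zsp P σ sp) * z)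
      (muZ P σ sp) (muZ P σ sp) := measurePreserving_mul_left _ _
  have h2 : MeasurePreserving
      ((MulEquiv.refl Yfac).prodCongr (shiftE P σ sp)) (muZ P σ sp) (muZ P σ sp) :=
    measurePreserving_mulEquiv P σ sp _
      (continuous_id.prodMap (continuous_shiftE P σ sp))
  have : Tz P σ sp = (fun z : Zsp P σ sp => ((g0Y, 1) : Zsp P σ sp) * z) ∘
      ((MulEquiv.refl Yfac).prodCongr (shiftE P σ sp)) := by
    funext z
    obtain ⟨z1, z2⟩ := z
    simp [Tz, MulEquiv.prodCongr, Prod.mk_mul_mk, Prod.map]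
  rw [this]
  exact h1.comp h2

lemma measurable_Tz : Measurable (Tz P σ sp) := (measurePreserving_Tz P σ sp).measurable

lemma measurable_TzInv : Measurable (TzInv P σ sp) := by
  apply Measurable.prod
  · exact (continuous_const.mul continuous_fst).measurable
  · exact ((continuous_shiftE_symm P σ sp).comp continuous_snd).measurable

lemma Tz_iter_snd (k : ℕ) (z : Zsp P σ sp) :
    ((Tz P σ sp)^[k] z).2 = fun j => z.2 (j + k) := by
  induction k with
  | zero => simp
  | succ k ih =>
    rw [Function.iterate_succ_apply']
    funext j
    have : ((Tz P σ sp) ((Tz P σ sp)^[k] z)).2 j = ((Tz P σ sp)^[k] z).2 (j + 1) := rfl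
    rw [this, ih]
    congr 1
    push_cast
    ring

lemma Tz_iter_fst (k : ℕ) (z : Zsp P σ sp) :
    ((Tz P σ sp)^[k] z).1 = g0Y ^ k * z.1 := by
  induction k with
  | zero => simp
  | succ k ih =>
    rw [Function.iterate_succ_apply']
    have : ((Tz P σ sp) ((Tz P σ sp)^[k] z)).1 = g0Y * ((Tz P σ sp)^[k] z).1 := rfl
    rw [this, ih, ← mul_assoc, ← pow_succ']

/- ---------- blocks attached to letters ---------- -/

open scoped Classical in
/-- the block (word, length) attached to a letter of the alphabet. -/
noncomputable def blkB [Nonempty Sin] (a : Alp P σ sp) : (ℕ → Sin) × ℕ :=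
  if h : ∃ Bt : (ℕ → Sin) × ℕ, 1 ≤ Bt.2 ∧
      IsPermutationBlock P σ sp Bt.1 Bt.2 (a : Equiv.Perm sp.Classes) then
    h.choose
  else ⟨fun _ => σ, 1⟩

variable [Nonempty Sin]

lemma blkB_pos (a : Alp P σ sp) : 1 ≤ (blkB P σ sp a).2 := by
  unfold blkB
  split
  · rename_i h
    exact h.choose_spec.1
  · simp

lemma blkB_spec (hmix : IsMixingAt P σ sp) (a : Alp P σ sp) :
    IsPermutationBlock P σ sp (blkB P σ sp a).1 (blkB P σ sp a).2 (a : Equiv.Perm sp.Classes) := by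
  have hex := exists_block_of_mem_Gc P σ sp hmix a.2
  unfold blkB
  split
  · rename_i h
    exact h.choose_spec.2
  · exact absurd hex ‹_›

/- ---------- the tower space ---------- -/

/-- height function on the base. -/
noncomputable def htZ : Zsp P σ sp → ℕ := fun z => (blkB P σ sp (z.2 0)).2

lemma htZ_pos (z : Zsp P σ sp) : 0 < htZ P σ sp z := blkB_pos P σ sp _

lemma measurable_letter : Measurable (fun z : Zsp P σ sp => z.2 0) :=
  (measurable_pi_apply 0).comp measurable_snd

lemma measurableSet_letter (a : Alp P σ sp) : MeasurableSet {z : Zsp P σ sp | z.2 0 = a} :=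
  measurable_letter P σ sp (measurableSet_singleton a)

/-- the tower: pairs `(z, j)` with `j < htZ z`. -/
noncomputable def Xset : Set (Zsp P σ sp × ℕ) := {q | q.2 < htZ P σ sp q.1}

lemma measurableSet_Xset : MeasurableSet (Xset P σ sp) := by
  have : Xset P σ sp =
      ⋃ a : Alp P σ sp, ({z : Zsp P σ sp | z.2 0 = a} ×ˢ Set.Iio (blkB P σ sp a).2) := by
    ext ⟨z, j⟩
    simp only [Xset, Set.mem_setOf_eq, Set.mem_iUnion, Set.mem_prod, Set.mem_Iio]
    constructor
    · intro hj; exact ⟨z.2 0, rfl, hj⟩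
    · rintro ⟨a, ha, hj⟩
      simpa [htZ, ha] using hj
  rw [this]
  exact MeasurableSet.iUnion fun a =>
    (measurableSet_letter P σ sp a).prod measurableSet_Iio

/-- the tower space. -/
abbrev Xsp := ↥(Xset P σ sp)

noncomputable instance : StandardBorelSpace (Xsp P σ sp) :=
  (measurableSet_Xset P σ sp).standardBorel

/-- embedding of the `j`-th level of the tower. -/
noncomputable def eX (z : Zsp P σ sp) (j : ℕ) : Xsp P σ sp :=
  ⟨(z, if j < htZ P σ sp z then j else 0), by
    show (if j < htZ P σ sp z then j else 0) < htZ P σ sp z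
    split
    · assumption
    · exact htZ_pos P σ sp z⟩

lemma eX_val {z : Zsp P σ sp} {j : ℕ} (h : j < htZ P σ sp z) :
    (eX P σ sp z j).val = (z, j) := by simp [eX, h]

lemma measurableSet_Sj (j : ℕ) : MeasurableSet {z : Zsp P σ sp | j < htZ P σ sp z} := by
  have : {z : Zsp P σ sp | j < htZ P σ sp z} =
      ⋃ (a : Alp P σ sp) (_ : j < (blkB P σ sp a).2), {z : Zsp P σ sp | z.2 0 = a} := by
    ext z
    simp only [Set.mem_setOf_eq, Set.mem_iUnion]
    constructor
    · intro hj; exact ⟨z.2 0, hj, rfl⟩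
    · rintro ⟨a, hj, ha⟩; simpa [htZ, ha] using hj
  rw [this]
  exact MeasurableSet.iUnion fun a => MeasurableSet.iUnion fun _ =>
    measurableSet_letter P σ sp a

lemma measurable_eX (j : ℕ) : Measurable (fun z => eX P σ sp z j) := by
  apply Measurable.subtype_mk
  apply Measurable.prodMk measurable_id
  exact Measurable.ite (measurableSet_Sj P σ sp j) measurable_const measurable_const

/- the successor map on the tower -/

noncomputable def SXfun : Zsp P σ sp × ℕ → Zsp P σ sp × ℕ := fun q =>
  if q.2 + 1 < htZ P σ sp q.1 then (q.1, q.2 + 1) else (Tz P σ sp q.1, 0)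

noncomputable def SXinvfun : Zsp P σ sp × ℕ → Zsp P σ sp × ℕ := fun q =>
  if q.2 = 0 then (TzInv P σ sp q.1, htZ P σ sp (TzInv P σ sp q.1) - 1) else (q.1, q.2 - 1)

lemma SXfun_mem (x : Xsp P σ sp) : SXfun P σ sp x.val ∈ Xset P σ sp := by
  unfold SXfun
  split
  · exact ‹_›
  · exact htZ_pos P σ sp _

lemma SXfun_pair (z : Zsp P σ sp) (j : ℕ) :
    SXfun P σ sp (z, j) =
      if j + 1 < htZ P σ sp z then (z, j + 1) else (Tz P σ sp z, 0) := rfl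

lemma SXinvfun_pair (z : Zsp P σ sp) (j : ℕ) :
    SXinvfun P σ sp (z, j) =
      if j = 0 then (TzInv P σ sp z, htZ P σ sp (TzInv P σ sp z) - 1) else (z, j - 1) := rfl

lemma SXinvfun_mem (x : Xsp P σ sp) : SXinvfun P σ sp x.val ∈ Xset P σ sp := by
  unfold SXinvfun
  split
  · show htZ P σ sp (TzInv P σ sp x.val.1) - 1 < htZ P σ sp (TzInv P σ sp x.val.1)
    have := htZ_pos P σ sp (TzInv P σ sp x.val.1)
    omega
  · show x.val.2 - 1 < htZ P σ sp x.val.1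
    have : x.val.2 < htZ P σ sp x.val.1 := x.2
    omega

/-- the tower transformation. -/
noncomputable def SX : Equiv.Perm (Xsp P σ sp) where
  toFun x := ⟨SXfun P σ sp x.val, SXfun_mem P σ sp x⟩
  invFun x := ⟨SXinvfun P σ sp x.val, SXinvfun_mem P σ sp x⟩
  left_inv := by
    rintro ⟨⟨z, j⟩, hx⟩
    have hj : j < htZ P σ sp z := hx
    apply Subtype.ext
    show SXinvfun P σ sp (SXfun P σ sp (z, j)) = (z, j)
    rw [SXfun_pair]
    by_cases h : j + 1 < htZ P σ sp z
    · rw [if_pos h, SXinvfun_pair, if_neg (by omega)]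
      simp
    · rw [if_neg h, SXinvfun_pair, if_pos rfl, TzInv_Tz]
      have h2 : htZ P σ sp z - 1 = j := by omega
      rw [h2]
  right_inv := by
    rintro ⟨⟨z, j⟩, hx⟩
    have hj : j < htZ P σ sp z := hx
    apply Subtype.ext
    show SXfun P σ sp (SXinvfun P σ sp (z, j)) = (z, j)
    rw [SXinvfun_pair]
    by_cases h : j = 0
    · rw [if_pos h, SXfun_pair]
      have hpos := htZ_pos P σ sp (TzInv P σ sp z)
      rw [if_neg (by omega), Tz_TzInv, h]
    · rw [if_neg h, SXfun_pair, if_pos (by omega)]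
      have h2 : j - 1 + 1 = j := by omega
      rw [h2]

lemma measurable_SXfun : Measurable (SXfun P σ sp) := by
  apply Measurable.ite
  · have : {q : Zsp P σ sp × ℕ | q.2 + 1 < htZ P σ sp q.1} =
        ⋃ (a : Alp P σ sp),
          ({z : Zsp P σ sp | z.2 0 = a} ×ˢ {j : ℕ | j + 1 < (blkB P σ sp a).2}) := by
      ext ⟨z, j⟩
      simp only [Set.mem_setOf_eq, Set.mem_iUnion, Set.mem_prod]
      constructor
      · intro hj; exact ⟨z.2 0, rfl, hj⟩
      · rintro ⟨a, ha, hj⟩; simpa [htZ, ha] using hj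
    rw [this]
    exact MeasurableSet.iUnion fun a =>
      (measurableSet_letter P σ sp a).prod
        (MeasurableSet.of_discrete)
  · exact measurable_fst.prodMk (measurable_snd.add_const 1)
  · exact ((measurable_Tz P σ sp).comp measurable_fst).prodMk measurable_const

lemma measurable_SXinvfun : Measurable (SXinvfun P σ sp) := by
  apply Measurable.ite
  · exact (measurable_snd (measurableSet_singleton 0))
  · refine Measurable.prodMk ?_ ?_
    · exact (measurable_TzInv P σ sp).comp measurable_fst
    · have : Measurable (fun q : Zsp P σ sp × ℕ => htZ P σ sp (TzInv P σ sp q.1)) := by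
        have h1 : Measurable (htZ P σ sp) := by
          have : htZ P σ sp = (fun a : Alp P σ sp => (blkB P σ sp a).2) ∘
              (fun z : Zsp P σ sp => z.2 0) := rfl
          rw [this]
          exact (measurable_of_countable _).comp (measurable_letter P σ sp)
        exact (h1.comp ((measurable_TzInv P σ sp).comp measurable_fst))
      exact this.sub measurable_const
  · exact measurable_fst.prodMk (measurable_snd.sub_const 1)

lemma measurable_SX : Measurable (SX P σ sp) :=
  Measurable.subtype_mk ((measurable_SXfun P σ sp).comp measurable_subtype_coe)

lemma measurable_SX_symm : Measurable (SX P σ sp).symm :=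
  Measurable.subtype_mk ((measurable_SXinvfun P σ sp).comp measurable_subtype_coe)

/- ===================  Part C: aperiodicity, measure, input =================== -/


lemma g0Y_pow_eq_one {r : ℕ} (h : g0Y ^ r = 1) : r = 0 := by
  have h1 := congrFun h r
  rw [Pi.pow_apply] at h1
  have h2 : ((Multiplicative.ofAdd (1 : ZMod (r + 2)))) ^ r
      = Multiplicative.ofAdd ((r : ZMod (r + 2))) := by
    rw [← ofAdd_nsmul]
    congr 1
    simp [nsmul_eq_mul]
  rw [g0Y] at h1
  rw [h2] at h1
  have h3 : ((r : ZMod (r + 2))) = 0 := by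
    have := congrArg Multiplicative.toAdd h1
    simpa using this
  have h4 : (r + 2) ∣ r := (ZMod.natCast_eq_zero_iff r (r + 2)).mp h3
  exact Nat.eq_zero_of_dvd_of_lt h4 (by omega)

lemma SX_iter_struct (m : ℕ) (x : Xsp P σ sp) :
    ∃ r : ℕ, (((SX P σ sp)^[m] x) : Xsp P σ sp).val.1.1 = g0Y ^ r * x.val.1.1 ∧
      (r = 0 → (((SX P σ sp)^[m] x) : Xsp P σ sp).val.2 = x.val.2 + m) := by
  induction m with
  | zero => exact ⟨0, by simp, by simp⟩
  | succ m ih =>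
    obtain ⟨r, h1, h2⟩ := ih
    set x' := (SX P σ sp)^[m] x with hx'
    rw [Function.iterate_succ_apply']
    have hval : (SX P σ sp x').val = SXfun P σ sp x'.val := rfl
    by_cases hc : x'.val.2 + 1 < htZ P σ sp x'.val.1
    · refine ⟨r, ?_, ?_⟩
      · rw [hval]
        unfold SXfun
        rw [if_pos hc]
        exact h1
      · intro hr
        rw [hval]
        unfold SXfun
        rw [if_pos hc]
        show x'.val.2 + 1 = x.val.2 + (m + 1)
        have := h2 hr
        omega
    · refine ⟨r + 1, ?_, by omega⟩
      rw [hval]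
      unfold SXfun
      rw [if_neg hc]
      show (Tz P σ sp x'.val.1).1 = g0Y ^ (r + 1) * x.val.1.1
      have : (Tz P σ sp x'.val.1).1 = g0Y * x'.val.1.1 := rfl
      rw [this, h1, ← mul_assoc, ← pow_succ']

lemma SX_pow_apply (m : ℕ) (x : Xsp P σ sp) :
    ((SX P σ sp) ^ m) x = (SX P σ sp)^[m] x := by
  induction m with
  | zero => simp
  | succ m ih =>
    rw [pow_succ', Equiv.Perm.mul_apply, ih, Function.iterate_succ_apply']

lemma aperiodic_SX : Aperiodic (SX P σ sp) := by
  have key : ∀ (m : ℕ) (x : Xsp P σ sp), (SX P σ sp)^[m] x = x → m = 0 := by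
    intro m x hm
    obtain ⟨r, h1, h2⟩ := SX_iter_struct P σ sp m x
    rw [hm] at h1 h2
    have hr : g0Y ^ r = 1 := by
      have := h1.symm
      rwa [mul_eq_right] at this
    have hr0 : r = 0 := g0Y_pow_eq_one hr
    have := h2 hr0
    omega
  intro n x hx
  match n with
  | Int.ofNat m =>
    have : ((SX P σ sp) ^ (Int.ofNat m)) x = ((SX P σ sp) ^ m) x := by
      norm_cast
    rw [this, SX_pow_apply] at hx
    simpa using key m x hx
  | Int.negSucc m =>
    rw [zpow_negSucc] at hx
    have : ((SX P σ sp) ^ (m + 1)) x = x := by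
      have h5 := congrArg ((SX P σ sp) ^ (m + 1)) hx
      rw [← Equiv.Perm.mul_apply, mul_inv_cancel, Equiv.Perm.one_apply] at h5
      exact h5.symm
    rw [SX_pow_apply] at this
    exact absurd (key (m + 1) x this) (by omega)

/- ---------- the invariant measure on the tower ---------- -/

noncomputable def Sjset (j : ℕ) : Set (Zsp P σ sp) := {z | j < htZ P σ sp z}

noncomputable def nuX : Measure (Xsp P σ sp) :=
  Measure.sum fun j : ℕ =>
    ((muZ P σ sp).restrict (Sjset P σ sp j)).map (fun z => eX P σ sp z j)

noncomputable def Hm : ℝ≥0∞ := ∑' j : ℕ, muZ P σ sp (Sjset P σ sp j)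

lemma nuX_apply {A : Set (Xsp P σ sp)} (hA : MeasurableSet A) :
    nuX P σ sp A
      = ∑' j : ℕ, muZ P σ sp ((fun z => eX P σ sp z j) ⁻¹' A ∩ Sjset P σ sp j) := by
  rw [nuX, Measure.sum_apply _ hA]
  congr 1
  funext j
  rw [Measure.map_apply (measurable_eX P σ sp j) hA,
    Measure.restrict_apply ((measurable_eX P σ sp j) hA)]

lemma nuX_univ : nuX P σ sp Set.univ = Hm P σ sp := by
  rw [nuX_apply P σ sp MeasurableSet.univ]
  simp [Hm]

lemma one_le_Hm : 1 ≤ Hm P σ sp := by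
  have h0 : Sjset P σ sp 0 = Set.univ :=
    Set.eq_univ_of_forall fun z => htZ_pos P σ sp z
  have : muZ P σ sp (Sjset P σ sp 0) = 1 := by rw [h0]; exact measure_univ
  calc (1 : ℝ≥0∞) = muZ P σ sp (Sjset P σ sp 0) := this.symm
  _ ≤ Hm P σ sp := ENNReal.le_tsum 0

lemma Hm_ne_top : Hm P σ sp ≠ ⊤ := by
  obtain ⟨Mb, hMb⟩ : ∃ M : ℕ, ∀ a : Alp P σ sp, (blkB P σ sp a).2 ≤ M := by
    obtain ⟨M, hM⟩ := Set.Finite.bddAbove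
      (Set.finite_range (fun a : Alp P σ sp => (blkB P σ sp a).2))
    exact ⟨M, fun a => hM (Set.mem_range_self a)⟩
  have hz : ∀ j ∉ Finset.range Mb, muZ P σ sp (Sjset P σ sp j) = 0 := by
    intro j hj
    have : Sjset P σ sp j = ∅ := by
      ext z
      simp only [Sjset, Set.mem_setOf_eq, Set.mem_empty_iff_false, iff_false, not_lt]
      calc htZ P σ sp z ≤ Mb := hMb _
      _ ≤ j := by simpa using hj
    rw [this, measure_empty]
  rw [Hm, tsum_eq_sum hz]
  exact (ENNReal.sum_lt_top.mpr fun j _ => measure_lt_top _ _).ne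

noncomputable def muX : Measure (Xsp P σ sp) := (Hm P σ sp)⁻¹ • nuX P σ sp

instance : IsProbabilityMeasure (muX P σ sp) := by
  constructor
  rw [muX, Measure.smul_apply, smul_eq_mul, nuX_univ]
  exact ENNReal.inv_mul_cancel (by have := one_le_Hm P σ sp; intro h; simp [h] at this)
    (Hm_ne_top P σ sp)

lemma muZ_null_of_muX_null {A : Set (Xsp P σ sp)} (hA : MeasurableSet A)
    (h : muX P σ sp A = 0) (j : ℕ) :
    muZ P σ sp ((fun z => eX P σ sp z j) ⁻¹' A ∩ Sjset P σ sp j) = 0 := by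
  have hnu : nuX P σ sp A = 0 := by
    rw [muX, Measure.smul_apply, smul_eq_mul] at h
    rcases mul_eq_zero.mp h with h' | h'
    · exact absurd h' (ENNReal.inv_ne_zero.mpr (Hm_ne_top P σ sp))
    · exact h'
  rw [nuX_apply P σ sp hA] at hnu
  exact ENNReal.tsum_eq_zero.mp hnu j

/- ---------- the tower dynamics over the base ---------- -/

lemma SX_eX_step {z : Zsp P σ sp} {j : ℕ} (h : j + 1 < htZ P σ sp z) :
    SX P σ sp (eX P σ sp z j) = eX P σ sp z (j + 1) := by
  apply Subtype.ext
  have h0 : j < htZ P σ sp z := by omega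
  show SXfun P σ sp (eX P σ sp z j).val = (eX P σ sp z (j + 1)).val
  rw [eX_val P σ sp h0, eX_val P σ sp h, SXfun_pair, if_pos h]

lemma SX_eX_top {z : Zsp P σ sp} {j : ℕ} (hj : j + 1 = htZ P σ sp z) :
    SX P σ sp (eX P σ sp z j) = eX P σ sp (Tz P σ sp z) 0 := by
  apply Subtype.ext
  have h0 : j < htZ P σ sp z := by omega
  show SXfun P σ sp (eX P σ sp z j).val = (eX P σ sp (Tz P σ sp z) 0).val
  rw [eX_val P σ sp h0, eX_val P σ sp (htZ_pos P σ sp (Tz P σ sp z)), SXfun_pair,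
    if_neg (by omega)]

/- ---------- the input labeling ---------- -/

noncomputable def iInp : Xsp P σ sp → Sin :=
  fun x => (blkB P σ sp (x.val.1.2 0)).1 x.val.2

lemma measurableSet_iInp_preimage (s : Sin) :
    MeasurableSet (iInp P σ sp ⁻¹' {s}) := by
  have hrw : iInp P σ sp ⁻¹' {s} = Subtype.val ⁻¹'
      (⋃ (a : Alp P σ sp) (j : ℕ) (_ : (blkB P σ sp a).1 j = s),
        ({z : Zsp P σ sp | z.2 0 = a} ×ˢ ({j} : Set ℕ))) := by
    ext x
    simp only [Set.mem_preimage, Set.mem_singleton_iff, Set.mem_iUnion, Set.mem_prod,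
      Set.mem_setOf_eq]
    constructor
    · intro hx
      exact ⟨x.val.1.2 0, x.val.2, hx, rfl, rfl⟩
    · rintro ⟨a, j, hw, ha, hj⟩
      rw [iInp, ha, hj, hw]
  rw [hrw]
  apply MeasurableSet.preimage _ measurable_subtype_coe
  exact MeasurableSet.iUnion fun a => MeasurableSet.iUnion fun j =>
    MeasurableSet.iUnion fun _ =>
      (measurableSet_letter P σ sp a).prod (measurableSet_singleton j)

/- ===================  Part D: cylinder approximation =================== -/

/-- truncation of the random component outside a window. -/
noncomputable def pN (N : ℕ) : Zsp P σ sp → Zsp P σ sp :=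
  fun z => (z.1, fun k => if k.natAbs ≤ N then z.2 k else 1)

lemma measurable_pN (N : ℕ) : Measurable (pN P σ sp N) := by
  apply Measurable.prodMk measurable_fst
  apply measurable_pi_lambda
  intro k
  by_cases h : k.natAbs ≤ N
  · simp only [pN, h, if_true]; exact (measurable_pi_apply k).comp (measurable_snd)
  · simpa [pN, h] using measurable_const

lemma pN_comp {N N' : ℕ} (h : N ≤ N') (z : Zsp P σ sp) :
    pN P σ sp N (pN P σ sp N' z) = pN P σ sp N z := by
  unfold pN
  refine Prod.ext rfl ?_
  funext k
  by_cases hk : k.natAbs ≤ N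
  · simp [hk, le_trans hk h]
  · simp [hk]

/-- the σ-algebra of cylinder-approximable sets. -/
noncomputable def APms : MeasurableSpace (Zsp P σ sp) where
  MeasurableSet' A := MeasurableSet A ∧
    ∀ ε : ℝ≥0∞, 0 < ε → ∃ (N : ℕ) (E : Set (Zsp P σ sp)), MeasurableSet E ∧
      muZ P σ sp (A ∆ (pN P σ sp N ⁻¹' E)) < ε
  measurableSet_empty := by
    refine ⟨MeasurableSet.empty, fun ε hε => ⟨0, ∅, MeasurableSet.empty, ?_⟩⟩
    rw [Set.preimage_empty, symmDiff_self]
    simpa using hε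
  measurableSet_compl := by
    rintro A ⟨hA, hap⟩
    refine ⟨hA.compl, fun ε hε => ?_⟩
    obtain ⟨N, E, hE, hlt⟩ := hap ε hε
    refine ⟨N, Eᶜ, hE.compl, ?_⟩
    rwa [Set.preimage_compl, compl_symmDiff_compl]
  measurableSet_iUnion := by
    intro f hf
    have hfm : ∀ i, MeasurableSet (f i) := fun i => (hf i).1
    refine ⟨MeasurableSet.iUnion hfm, fun ε hε => ?_⟩
    rcases eq_or_ne ε ⊤ with rfl | hεtop
    · refine ⟨0, ∅, MeasurableSet.empty, ?_⟩
      calc muZ P σ sp ((⋃ i, f i) ∆ (pN P σ sp 0 ⁻¹' ∅)) ≤ 1 := prob_le_one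
      _ < ⊤ := by simp
    set ε2 := ε / 2 with hε2_def
    have hε2 : 0 < ε2 := ENNReal.div_pos hε.ne' (by norm_num)
    have hq : 0 < ε2 / 2 := ENNReal.div_pos hε2.ne' (by norm_num)
    set U := ⋃ i, f i with hU_def
    have htendsto := tendsto_measure_iUnion_accumulate (μ := muZ P σ sp) (f := f)
    obtain ⟨n, hn⟩ : ∃ n, muZ P σ sp U ≤ muZ P σ sp (Set.accumulate f n) + ε2 / 2 := by
      rcases eq_or_ne (muZ P σ sp U) 0 with h0 | h0
      · exact ⟨0, by simp [h0]⟩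
      · have hlt : muZ P σ sp U - ε2 / 2 < muZ P σ sp U :=
          ENNReal.sub_lt_self (measure_ne_top _ _) h0 hq.ne'
        obtain ⟨n, hn⟩ := ((tendsto_order.1 htendsto).1 _ hlt).exists
        exact ⟨n, tsub_le_iff_right.mp hn.le⟩
    have hAccm : MeasurableSet (Set.accumulate f n) := by
      rw [Set.accumulate_def]
      exact MeasurableSet.biUnion (Set.to_countable _) (fun j _ => hfm j)
    have hsub : Set.accumulate f n ⊆ U := by
      rw [Set.accumulate_def]
      exact Set.iUnion₂_subset fun j _ => Set.subset_iUnion f j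
    have hmiss : muZ P σ sp (U \ Set.accumulate f n) ≤ ε2 / 2 := by
      have h1 : muZ P σ sp (Set.accumulate f n) + muZ P σ sp (U \ Set.accumulate f n)
          = muZ P σ sp U := by
        rw [measure_add_diff hAccm.nullMeasurableSet U, Set.union_eq_self_of_subset_left hsub]
      have h2 : muZ P σ sp (Set.accumulate f n) + muZ P σ sp (U \ Set.accumulate f n)
          ≤ muZ P σ sp (Set.accumulate f n) + ε2 / 2 := h1.le.trans hn
      exact (ENNReal.add_le_add_iff_left (measure_ne_top _ _)).mp h2
    -- approximate each piece
    set δ := ε2 / 2 / (n + 1) with hδ_def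
    have hδ : 0 < δ := ENNReal.div_pos hq.ne' (by simp)
    obtain ⟨Ns, Es, hEs, hlts⟩ : ∃ (Ns : ℕ → ℕ) (Es : ℕ → Set (Zsp P σ sp)),
        (∀ i, MeasurableSet (Es i)) ∧
          ∀ i, muZ P σ sp ((f i) ∆ (pN P σ sp (Ns i) ⁻¹' Es i)) < δ := by
      choose Ns Es h1 h2 using fun i => (hf i).2 δ hδ
      exact ⟨Ns, Es, h1, h2⟩
    set N := (Finset.range (n + 1)).sup Ns with hN_def
    have hNs_le : ∀ i ≤ n, Ns i ≤ N :=
      fun i hi => Finset.le_sup (Finset.mem_range.mpr (by omega))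
    set E := ⋃ (i : ℕ) (_ : i ≤ n), pN P σ sp (Ns i) ⁻¹' Es i with hE_def
    have hEm : MeasurableSet E :=
      MeasurableSet.biUnion (Set.to_countable _)
        (fun i _ => (measurable_pN P σ sp (Ns i)) (hEs i))
    refine ⟨N, E, hEm, ?_⟩
    have hpre : pN P σ sp N ⁻¹' E = E := by
      rw [hE_def]
      ext z
      simp only [Set.mem_preimage, Set.mem_iUnion]
      constructor
      · rintro ⟨i, hi, hz⟩
        rw [pN_comp P σ sp (hNs_le i hi)] at hz
        exact ⟨i, hi, hz⟩
      · rintro ⟨i, hi, hz⟩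
        rw [← pN_comp P σ sp (hNs_le i hi)] at hz
        exact ⟨i, hi, hz⟩
    rw [hpre]
    -- inclusion
    have hincl : U ∆ E ⊆ (U \ Set.accumulate f n) ∪
        ⋃ (i : ℕ) (_ : i ≤ n), (f i) ∆ (pN P σ sp (Ns i) ⁻¹' Es i) := by
      intro x hx
      rcases Set.mem_symmDiff.mp hx with ⟨hxU, hxE⟩ | ⟨hxE, hxU⟩
      · by_cases hacc : x ∈ Set.accumulate f n
        · rw [Set.accumulate_def] at hacc
          obtain ⟨j, hj, hxj⟩ := Set.mem_iUnion₂.mp hacc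
          refine Set.mem_union_right _ (Set.mem_iUnion₂.mpr ⟨j, hj, ?_⟩)
          refine Set.mem_symmDiff.mpr (Or.inl ⟨hxj, fun hc => hxE ?_⟩)
          rw [hE_def]
          exact Set.mem_iUnion₂.mpr ⟨j, hj, hc⟩
        · exact Set.mem_union_left _ ⟨hxU, hacc⟩
      · rw [hE_def] at hxE
        obtain ⟨i, hi, hxi⟩ := Set.mem_iUnion₂.mp hxE
        refine Set.mem_union_right _ (Set.mem_iUnion₂.mpr ⟨i, hi, ?_⟩)
        exact Set.mem_symmDiff.mpr (Or.inr ⟨hxi, fun hc => hxU (Set.mem_iUnion.mpr ⟨i, hc⟩)⟩)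
    calc muZ P σ sp (U ∆ E)
        ≤ muZ P σ sp ((U \ Set.accumulate f n) ∪
            ⋃ (i : ℕ) (_ : i ≤ n), (f i) ∆ (pN P σ sp (Ns i) ⁻¹' Es i)) :=
          measure_mono hincl
      _ ≤ muZ P σ sp (U \ Set.accumulate f n) +
            muZ P σ sp (⋃ (i : ℕ) (_ : i ≤ n), (f i) ∆ (pN P σ sp (Ns i) ⁻¹' Es i)) :=
          measure_union_le _ _
      _ ≤ ε2 / 2 + ∑ i ∈ Finset.range (n + 1),
            muZ P σ sp ((f i) ∆ (pN P σ sp (Ns i) ⁻¹' Es i)) := by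
          refine add_le_add hmiss ?_
          have : (⋃ (i : ℕ) (_ : i ≤ n), (f i) ∆ (pN P σ sp (Ns i) ⁻¹' Es i)) =
              ⋃ i ∈ Finset.range (n + 1), (f i) ∆ (pN P σ sp (Ns i) ⁻¹' Es i) := by
            ext x
            simp [Nat.lt_succ_iff]
          rw [this]
          exact measure_biUnion_finset_le _ _
      _ ≤ ε2 / 2 + (n + 1) * δ := by
          refine add_le_add le_rfl ?_
          have h := Finset.sum_le_card_nsmul (Finset.range (n + 1))
            (fun i => muZ P σ sp ((f i) ∆ (pN P σ sp (Ns i) ⁻¹' Es i))) δ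
            (fun i _ => (hlts i).le)
          simpa [Finset.card_range, nsmul_eq_mul] using h
      _ ≤ ε2 / 2 + ε2 / 2 := by
          refine add_le_add le_rfl ?_
          have := ENNReal.mul_div_le (a := ((n : ℝ≥0∞) + 1)) (b := ε2 / 2)
          simpa [hδ_def] using this
      _ = ε2 := ENNReal.add_halves ε2
      _ < ε := ENNReal.half_lt_self hε.ne' hεtop

lemma le_APms : (inferInstance : MeasurableSpace (Zsp P σ sp)) ≤ APms P σ sp := by
  have hrfl : (inferInstance : MeasurableSpace (Zsp P σ sp)) =
      MeasurableSpace.comap Prod.fst inferInstance ⊔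
        MeasurableSpace.comap Prod.snd inferInstance := rfl
  rw [hrfl]
  apply sup_le
  · rintro s ⟨B, hB, rfl⟩
    refine ⟨hB.preimage measurable_fst, fun ε hε =>
      ⟨0, Prod.fst ⁻¹' B, hB.preimage measurable_fst, ?_⟩⟩
    have h2 : pN P σ sp 0 ⁻¹' (Prod.fst ⁻¹' B) = Prod.fst ⁻¹' B := rfl
    rw [h2, symmDiff_self]
    simpa using hε
  · have hpi : (MeasurableSpace.pi : MeasurableSpace (Om P σ sp)) =
        ⨆ k : ℤ, MeasurableSpace.comap (fun w : Om P σ sp => w k)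
          (inferInstance : MeasurableSpace (Alp P σ sp)) := rfl
    show MeasurableSpace.comap (Prod.snd : Zsp P σ sp → Om P σ sp)
        (MeasurableSpace.pi) ≤ APms P σ sp
    rw [hpi, MeasurableSpace.comap_iSup]
    apply iSup_le
    intro k
    rw [MeasurableSpace.comap_comp]
    rintro s ⟨B, hB, rfl⟩
    have hmeas : MeasurableSet (((fun w : Om P σ sp => w k) ∘ (Prod.snd : Zsp P σ sp → Om P σ sp)) ⁻¹' B) :=
      hB.preimage ((measurable_pi_apply k).comp measurable_snd)
    refine ⟨hmeas, fun ε hε => ⟨k.natAbs, _, hmeas, ?_⟩⟩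
    have h2 : pN P σ sp k.natAbs ⁻¹' (((fun w : Om P σ sp => w k) ∘ (Prod.snd : Zsp P σ sp → Om P σ sp)) ⁻¹' B)
        = ((fun w : Om P σ sp => w k) ∘ (Prod.snd : Zsp P σ sp → Om P σ sp)) ⁻¹' B := by
      ext z
      simp [pN, Function.comp]
    rw [h2, symmDiff_self]
    simpa using hε

lemma approx_cyl {A : Set (Zsp P σ sp)} (hA : MeasurableSet A) {ε : ℝ≥0∞} (hε : 0 < ε) :
    ∃ (N : ℕ) (E : Set (Zsp P σ sp)), MeasurableSet E ∧
      muZ P σ sp (A ∆ (pN P σ sp N ⁻¹' E)) < ε :=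
  (le_APms P σ sp A hA).2 ε hε

/- ===================  Part E1: ordered products of letters =================== -/

noncomputable def PrW (w : Om P σ sp) : ℕ → Alp P σ sp
  | 0 => 1
  | (k+1) => w (k : ℤ) * PrW w k

noncomputable def SfW (w : Om P σ sp) (a : ℕ) : ℕ → Alp P σ sp
  | 0 => 1
  | (j+1) => w ((a + j : ℕ) : ℤ) * SfW w a j

lemma PrW_congr {w u : Om P σ sp} (m : ℕ) (h : ∀ j : ℕ, j < m → w (j : ℤ) = u (j : ℤ)) :
    PrW P σ sp w m = PrW P σ sp u m := by
  induction m with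
  | zero => rfl
  | succ m ih =>
    show w (m : ℤ) * PrW P σ sp w m = u (m : ℤ) * PrW P σ sp u m
    rw [h m (by omega), ih (fun j hj => h j (by omega))]

lemma SfW_congr {w u : Om P σ sp} (a j : ℕ)
    (h : ∀ i : ℕ, a ≤ i → i < a + j → w (i : ℤ) = u (i : ℤ)) :
    SfW P σ sp w a j = SfW P σ sp u a j := by
  induction j with
  | zero => rfl
  | succ j ih =>
    show w ((a + j : ℕ) : ℤ) * SfW P σ sp w a j = u ((a + j : ℕ) : ℤ) * SfW P σ sp u a j
    rw [h (a + j) (by omega) (by omega), ih (fun i h1 h2 => h i h1 (by omega))]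

lemma PrW_split (w : Om P σ sp) (a j : ℕ) :
    PrW P σ sp w (a + 1 + j) = SfW P σ sp w (a + 1) j * (w (a : ℤ) * PrW P σ sp w a) := by
  induction j with
  | zero =>
    show PrW P σ sp w (a + 1) = 1 * (w (a : ℤ) * PrW P σ sp w a)
    rw [one_mul]
    rfl
  | succ j ih =>
    have h1 : a + 1 + (j + 1) = (a + 1 + j) + 1 := rfl
    rw [h1]
    show w ((a + 1 + j : ℕ) : ℤ) * PrW P σ sp w (a + 1 + j) = _
    rw [ih]
    show _ = (w ((a + 1 + j : ℕ) : ℤ) * SfW P σ sp w (a + 1) j) *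
      (w (a : ℤ) * PrW P σ sp w a)
    rw [mul_assoc]
/- ===================  Part E2: no measurable a.e. solution =================== -/

variable [Fintype Sin]

lemma f_pre_measurable {f : Xsp P σ sp → Sout} (hf : ∀ τ : Sout, MeasurableSet (f ⁻¹' {τ}))
    (V : Set Sout) : MeasurableSet (f ⁻¹' V) := by
  have hrw : f ⁻¹' V = ⋃ (s : Sout) (_ : s ∈ V), f ⁻¹' {s} := by
    ext x
    simp only [Set.mem_preimage, Set.mem_iUnion, Set.mem_singleton_iff]
    exact ⟨fun hx => ⟨f x, hx, rfl⟩, fun ⟨s, hs, hxs⟩ => hxs ▸ hs⟩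
  rw [hrw]
  exact MeasurableSet.iUnion fun s => MeasurableSet.iUnion fun _ => hf s

lemma no_solution (hmix : IsMixingAt P σ sp) (f : Xsp P σ sp → Sout)
    (hf : ∀ τ : Sout, MeasurableSet (f ⁻¹' {τ}))
    (hae : ∀ᵐ x ∂(muX P σ sp), P (iInp P σ sp x) (iInp P σ sp (SX P σ sp x))
      (f x) (f (SX P σ sp x))) : False := by
  classical
  haveI : Fintype (Alp P σ sp) := Fintype.ofFinite _
  haveI : Fintype sp.Classes := Fintype.ofFinite _
  set T := Tz P σ sp with hT_def
  set μ := muZ P σ sp with hμ_def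
  -- the solution along the bottom of the tower
  set φ : Zsp P σ sp → Sout := fun z => f (eX P σ sp z 0) with hφ_def
  have hφpre : ∀ V : Set Sout, MeasurableSet (φ ⁻¹' V) := fun V =>
    (f_pre_measurable P σ sp hf V).preimage (measurable_eX P σ sp 0)
  -- the constraint set
  set Con : Set (Xsp P σ sp) :=
    {x | P (iInp P σ sp x) (iInp P σ sp (SX P σ sp x)) (f x) (f (SX P σ sp x))} with hCon_def
  have hConM : MeasurableSet Con := by
    have hrw : Con = ⋃ (q : (Sin × Sin) × Sout × Sout) (_ : P q.1.1 q.1.2 q.2.1 q.2.2),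
        ((iInp P σ sp ⁻¹' {q.1.1} ∩ SX P σ sp ⁻¹' (iInp P σ sp ⁻¹' {q.1.2}))
          ∩ (f ⁻¹' {q.2.1} ∩ SX P σ sp ⁻¹' (f ⁻¹' {q.2.2}))) := by
      ext x
      simp only [hCon_def, Set.mem_setOf_eq, Set.mem_iUnion, Set.mem_inter_iff,
        Set.mem_preimage, Set.mem_singleton_iff]
      constructor
      · intro hx
        exact ⟨((iInp P σ sp x, iInp P σ sp (SX P σ sp x)), (f x, f (SX P σ sp x))),
          hx, ⟨rfl, rfl⟩, ⟨rfl, rfl⟩⟩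
      · rintro ⟨q, hq, ⟨h1, h2⟩, ⟨h3, h4⟩⟩
        rw [h1, h2, h3, h4]
        exact hq
    rw [hrw]
    exact MeasurableSet.iUnion fun q => MeasurableSet.iUnion fun _ =>
      (((measurableSet_iInp_preimage P σ sp _).inter
        ((measurableSet_iInp_preimage P σ sp _).preimage (measurable_SX P σ sp))).inter
        ((hf _).inter ((hf _).preimage (measurable_SX P σ sp))))
  have hConN : muX P σ sp Conᶜ = 0 := by
    have := ae_iff.mp hae
    exact this
  have hZcon : ∀ j : ℕ, μ ((fun z => eX P σ sp z j) ⁻¹' Conᶜ ∩ Sjset P σ sp j) = 0 :=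
    fun j => muZ_null_of_muX_null P σ sp hConM.compl hConN j
  -- the block-path set
  set E₀ : Set (Zsp P σ sp) :=
    {z | BlockType P (blkB P σ sp (z.2 0)).1 (blkB P σ sp (z.2 0)).2 (φ z) (φ (T z))}
    with hE₀_def
  have spec := blkB_spec P σ sp hmix
  -- pointwise: the constraint set yields block paths
  have hE₀sub : ∀ z : Zsp P σ sp, (∀ j : ℕ, j < htZ P σ sp z → eX P σ sp z j ∈ Con) →
      z ∈ E₀ := by
    intro z hz
    have hnn : htZ P σ sp z = (blkB P σ sp (z.2 0)).2 := rfl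
    refine ⟨fun j => if j < htZ P σ sp z then f (eX P σ sp z j) else f (eX P σ sp (T z) 0),
      ?_, ?_, ?_⟩
    · show (if 0 < htZ P σ sp z then f (eX P σ sp z 0) else f (eX P σ sp (T z) 0)) = φ z
      rw [if_pos (htZ_pos P σ sp z)]
    · show (if (blkB P σ sp (z.2 0)).2 < htZ P σ sp z then
          f (eX P σ sp z ((blkB P σ sp (z.2 0)).2)) else f (eX P σ sp (T z) 0)) = φ (T z)
      rw [if_neg (by omega)]
    · intro j hj
      show P ((blkB P σ sp (z.2 0)).1 j) ((blkB P σ sp (z.2 0)).1 (j + 1))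
        (if j < htZ P σ sp z then f (eX P σ sp z j) else f (eX P σ sp (T z) 0))
        (if j + 1 < htZ P σ sp z then f (eX P σ sp z (j + 1)) else f (eX P σ sp (T z) 0))
      have hjh : j < htZ P σ sp z := by omega
      have hcon := hz j hjh
      rw [hCon_def, Set.mem_setOf_eq] at hcon
      have hij : iInp P σ sp (eX P σ sp z j) = (blkB P σ sp (z.2 0)).1 j := by
        rw [iInp, eX_val P σ sp hjh]
      rw [if_pos hjh]
      by_cases hj1 : j + 1 < htZ P σ sp z
      · have hstep : SX P σ sp (eX P σ sp z j) = eX P σ sp z (j + 1) :=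
          SX_eX_step P σ sp hj1
        have hij1 : iInp P σ sp (eX P σ sp z (j + 1)) = (blkB P σ sp (z.2 0)).1 (j + 1) := by
          rw [iInp, eX_val P σ sp hj1]
        rw [if_pos hj1]
        rw [hij, hstep, hij1] at hcon
        exact hcon
      · have hjn : j + 1 = htZ P σ sp z := by omega
        have hstep : SX P σ sp (eX P σ sp z j) = eX P σ sp (T z) 0 :=
          SX_eX_top P σ sp hjn
        have hij1 : iInp P σ sp (eX P σ sp (T z) 0) = (blkB P σ sp ((T z).2 0)).1 0 := by
          rw [iInp, eX_val P σ sp (htZ_pos P σ sp (T z))]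
        rw [if_neg (by omega)]
        rw [hij, hstep, hij1] at hcon
        have he1 : (blkB P σ sp ((T z).2 0)).1 0 = σ := (spec ((T z).2 0)).1
        have he2 : (blkB P σ sp (z.2 0)).1 (j + 1) = σ := by
          rw [hjn, hnn]
          exact (spec (z.2 0)).2.1
        rw [he1] at hcon
        rw [he2]
        exact hcon
  have hE₀M : MeasurableSet E₀ := by
    have hrw : E₀ = ⋃ (a : Alp P σ sp) (s : Sout) (s' : Sout)
        (_ : BlockType P (blkB P σ sp a).1 (blkB P σ sp a).2 s s'),
        ({z : Zsp P σ sp | z.2 0 = a} ∩ φ ⁻¹' {s} ∩ T ⁻¹' (φ ⁻¹' {s'})) := by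
      ext z
      simp only [hE₀_def, Set.mem_setOf_eq, Set.mem_iUnion, Set.mem_inter_iff,
        Set.mem_preimage, Set.mem_singleton_iff]
      constructor
      · intro hz
        exact ⟨z.2 0, φ z, φ (T z), hz, ⟨rfl, rfl⟩, rfl⟩
      · rintro ⟨a, s, s', hbt, ⟨ha, hs⟩, hs'⟩
        rw [ha, hs, hs']
        exact hbt
    rw [hrw]
    exact MeasurableSet.iUnion fun a => MeasurableSet.iUnion fun s =>
      MeasurableSet.iUnion fun s' => MeasurableSet.iUnion fun _ =>
        (((measurableSet_letter P σ sp a).inter (hφpre {s})).inter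
          ((hφpre {s'}).preimage (measurable_Tz P σ sp)))
  have hE₀N : μ E₀ᶜ = 0 := by
    have hsub : E₀ᶜ ⊆ ⋃ j : ℕ, ((fun z => eX P σ sp z j) ⁻¹' Conᶜ ∩ Sjset P σ sp j) := by
      intro z hz
      by_contra hno
      simp only [Set.mem_iUnion, Set.mem_inter_iff, Set.mem_preimage, not_exists, not_and] at hno
      refine hz (hE₀sub z fun j hj => ?_)
      by_contra hcon
      exact hno j hcon hj
    exact measure_mono_null hsub (measure_iUnion_null fun j => hZcon j)
  -- the poset argument
  set U : Sout → Set (Zsp P σ sp) := fun s => φ ⁻¹' {u | sp.preceq s u} with hU_def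
  have hUM : ∀ s, MeasurableSet (U s) := fun s => hφpre _
  have hTpres := measurePreserving_Tz P σ sp
  have hUs_null : ∀ s : Sout, μ ((T ⁻¹' U s) ∆ U s) = 0 := by
    intro s
    have hfwd : μ (U s \ T ⁻¹' U s) = 0 := by
      refine measure_mono_null (fun z hz => ?_) hE₀N
      intro hz0
      refine hz.2 ?_
      have hle : sp.preceq (φ z) (φ (T z)) := (spec (z.2 0)).2.2.2.1 _ _ hz0
      exact sp.preceq_trans hz.1 hle
    have hTUM : MeasurableSet (T ⁻¹' U s) := (hUM s).preimage (measurable_Tz P σ sp)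
    have hpre : μ (T ⁻¹' U s) = μ (U s) :=
      hTpres.measure_preimage (hUM s).nullMeasurableSet
    have h1 : μ (U s ∩ T ⁻¹' U s) + μ (U s \ T ⁻¹' U s) = μ (U s) :=
      measure_inter_add_diff _ hTUM
    have h3 : μ (U s ∩ T ⁻¹' U s) = μ (U s) := by
      rw [← h1, hfwd, add_zero]
    have h2 : μ (T ⁻¹' U s ∩ U s) + μ (T ⁻¹' U s \ U s) = μ (T ⁻¹' U s) :=
      measure_inter_add_diff _ (hUM s)
    rw [Set.inter_comm, h3, hpre] at h2
    have hback : μ (T ⁻¹' U s \ U s) = 0 := by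
      have h4 : μ (U s) + μ (T ⁻¹' U s \ U s) = μ (U s) + 0 := by
        rw [add_zero]; exact h2
      exact (ENNReal.add_right_inj (measure_ne_top μ (U s))).mp h4
    rw [Set.symmDiff_def]
    exact measure_union_null hback hfwd
  set E₁ : Set (Zsp P σ sp) := E₀ ∩ ⋂ s : Sout, ((T ⁻¹' U s) ∆ U s)ᶜ with hE₁_def
  have hE₁M : MeasurableSet E₁ := by
    refine hE₀M.inter (MeasurableSet.iInter fun s => ?_)
    have : MeasurableSet ((T ⁻¹' U s) ∆ U s) :=
      MeasurableSet.symmDiff ((hUM s).preimage (measurable_Tz P σ sp)) (hUM s)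
    exact this.compl
  have hE₁N : μ E₁ᶜ = 0 := by
    rw [hE₁_def, Set.compl_inter, Set.compl_iInter]
    refine measure_union_null hE₀N (measure_iUnion_null fun s => ?_)
    rw [compl_compl]
    exact hUs_null s
  -- pointwise facts on E₁
  have hppE1 : ∀ z ∈ E₁, sp.pp (φ z) (φ (T z)) ∧ φ z ∈ sp.dom := by
    intro z hz
    obtain ⟨hz0, hz1⟩ := hz
    have hBT : BlockType P (blkB P σ sp (z.2 0)).1 (blkB P σ sp (z.2 0)).2
        (φ z) (φ (T z)) := hz0
    have hle : sp.preceq (φ z) (φ (T z)) := (spec (z.2 0)).2.2.2.1 _ _ hBT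
    have hzs := Set.mem_iInter.mp hz1 (φ (T z))
    have hmem : z ∈ T ⁻¹' U (φ (T z)) := by
      show sp.preceq (φ (T z)) (φ (T z))
      exact sp.preceq_refl _
    have hUz : z ∈ U (φ (T z)) := by
      by_contra hno
      exact hzs (Set.mem_symmDiff.mpr (Or.inl ⟨hmem, hno⟩))
    have hge : sp.preceq (φ (T z)) (φ z) := hUz
    have hpp := sp.preceq_antisymm hle hge
    refine ⟨hpp, ?_⟩
    by_contra hnd
    exact (spec (z.2 0)).2.2.2.2.1 _ _ hnd hBT hpp
  -- the domain is nonempty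
  have hE₁ne : E₁.Nonempty := by
    by_contra hno
    rw [Set.not_nonempty_iff_eq_empty] at hno
    rw [hno, Set.compl_empty] at hE₁N
    simpa using hE₁N
  obtain ⟨z₁, hz₁⟩ := hE₁ne
  set c₀ : sp.Classes := sp.cls ⟨φ z₁, (hppE1 z₁ hz₁).2⟩ with hc₀_def
  set gcls : Sout → sp.Classes :=
    fun s => if h : s ∈ sp.dom then sp.cls ⟨s, h⟩ else c₀ with hgcls_def
  set ψ : Zsp P σ sp → sp.Classes := fun z => gcls (φ z) with hψ_def
  set Ac : sp.Classes → Set (Zsp P σ sp) := fun c => ψ ⁻¹' {c} with hAc_def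
  have hAcM : ∀ c, MeasurableSet (Ac c) := fun c => hφpre (gcls ⁻¹' {c})
  -- the cocycle set
  set E₂ : Set (Zsp P σ sp) :=
    {z | ψ (T z) = ((z.2 0 : Alp P σ sp) : Equiv.Perm sp.Classes) (ψ z)} with hE₂_def
  have hE₂M : MeasurableSet E₂ := by
    have hrw : E₂ = ⋃ (a : Alp P σ sp) (c : sp.Classes),
        ({z : Zsp P σ sp | z.2 0 = a} ∩ Ac c ∩
          T ⁻¹' (Ac ((a : Equiv.Perm sp.Classes) c))) := by
      ext z
      simp only [hE₂_def, Set.mem_setOf_eq, Set.mem_iUnion, Set.mem_inter_iff,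
        Set.mem_preimage, hAc_def, Set.mem_singleton_iff]
      constructor
      · intro hz
        exact ⟨z.2 0, ψ z, ⟨rfl, rfl⟩, hz⟩
      · rintro ⟨a, c, ⟨ha, hc⟩, hz⟩
        rw [ha, hc]
        exact hz
    rw [hrw]
    exact MeasurableSet.iUnion fun a => MeasurableSet.iUnion fun c =>
      (((measurableSet_letter P σ sp a).inter (hAcM c)).inter
        ((hAcM _).preimage (measurable_Tz P σ sp)))
  have hE₂N : μ E₂ᶜ = 0 := by
    have hsub : E₁ ∩ T ⁻¹' E₁ ⊆ E₂ := by
      rintro z ⟨hz1, hz2⟩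
      obtain ⟨hpp, hdz⟩ := hppE1 z hz1
      have hd2 : φ (T z) ∈ sp.dom := (hppE1 _ hz2).2
      have hBT : BlockType P (blkB P σ sp (z.2 0)).1 (blkB P σ sp (z.2 0)).2
          (φ z) (φ (T z)) := hz1.1
      have hc4 := (spec (z.2 0)).2.2.2.2.2 ⟨φ z, hdz⟩ ⟨φ (T z), hd2⟩ hBT hpp
      show ψ (T z) = _
      rw [hψ_def]
      simp only [hgcls_def]
      rw [dif_pos hd2, dif_pos hdz]
      exact hc4.symm
    have : E₂ᶜ ⊆ E₁ᶜ ∪ T ⁻¹' E₁ᶜ := by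
      intro z hz
      by_contra hno
      simp only [Set.mem_union, Set.mem_compl_iff, Set.mem_preimage, not_or, not_not] at hno
      exact hz (hsub ⟨hno.1, hno.2⟩)
    refine measure_mono_null this (measure_union_null hE₁N ?_)
    rw [hTpres.measure_preimage hE₁M.compl.nullMeasurableSet]
    exact hE₁N
  -- iterated cocycle
  have coc_iter : ∀ (m : ℕ) (z : Zsp P σ sp), (∀ k : ℕ, k < m → T^[k] z ∈ E₂) →
      ψ (T^[m] z) = ((PrW P σ sp z.2 m : Alp P σ sp) : Equiv.Perm sp.Classes) (ψ z) := by
    intro m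
    induction m with
    | zero =>
      intro z _
      show ψ z = ((1 : Alp P σ sp) : Equiv.Perm sp.Classes) (ψ z)
      rw [OneMemClass.coe_one]
      rfl
    | succ m ih =>
      intro z hz
      rw [Function.iterate_succ_apply']
      have hm : T^[m] z ∈ E₂ := hz m (by omega)
      have h1 : ψ (T (T^[m] z)) =
          (((T^[m] z).2 0 : Alp P σ sp) : Equiv.Perm sp.Classes) (ψ (T^[m] z)) := hm
      have hw : (T^[m] z).2 0 = z.2 (m : ℤ) := by
        rw [hT_def, Tz_iter_snd]
        norm_num
      rw [h1, hw, ih z (fun k hk => hz k (by omega))]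
      show _ = ((PrW P σ sp z.2 (m + 1) : Alp P σ sp) : Equiv.Perm sp.Classes) (ψ z)
      have hPr : PrW P σ sp z.2 (m + 1) = z.2 (m : ℤ) * PrW P σ sp z.2 m := rfl
      rw [hPr, Subgroup.coe_mul, Equiv.Perm.mul_apply]
  -- quantitative setup
  set kA := Fintype.card (Alp P σ sp) with hkA_def
  set kK := Fintype.card sp.Classes with hkK_def
  set M : ℕ := (kK + 1) * (2 * (kA + 1)) with hM_def
  have hM0' : M ≠ 0 := by
    rw [hM_def]
    exact Nat.mul_ne_zero (by omega) (by omega)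
  have hM0 : (M : ℝ≥0∞) ≠ 0 := Nat.cast_ne_zero.mpr hM0'
  set δ : ℝ≥0∞ := ((M * 2 : ℕ) : ℝ≥0∞)⁻¹ with hδ_def
  have hδpos : 0 < δ := ENNReal.inv_pos.mpr (ENNReal.natCast_ne_top _)
  -- approximate the class sets by cylinders
  obtain ⟨Nc, Ec, hEcM, hEclt⟩ : ∃ (Nc : sp.Classes → ℕ) (Ec : sp.Classes → Set (Zsp P σ sp)),
      (∀ c, MeasurableSet (Ec c)) ∧
        ∀ c, μ ((Ac c) ∆ (pN P σ sp (Nc c) ⁻¹' Ec c)) < δ := by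
    choose Nc Ec h1 h2 using fun c : sp.Classes => approx_cyl P σ sp (hAcM c) hδpos
    exact ⟨Nc, Ec, h1, h2⟩
  set N := Finset.univ.sup Nc with hN_def
  set B : sp.Classes → Set (Zsp P σ sp) := fun c => pN P σ sp (Nc c) ⁻¹' Ec c with hB_def
  have hBM : ∀ c, MeasurableSet (B c) := fun c => (measurable_pN P σ sp (Nc c)) (hEcM c)
  have hBcyl : ∀ (c : sp.Classes) (z z' : Zsp P σ sp), pN P σ sp N z = pN P σ sp N z' →
      (z ∈ B c ↔ z' ∈ B c) := by
    intro c z z' hzz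
    have hle : Nc c ≤ N := Finset.le_sup (Finset.mem_univ c)
    show pN P σ sp (Nc c) z ∈ Ec c ↔ pN P σ sp (Nc c) z' ∈ Ec c
    rw [← pN_comp P σ sp hle z, ← pN_comp P σ sp hle z', hzz]
  set D : Set (Zsp P σ sp) := ⋃ c : sp.Classes, (Ac c) ∆ (B c) with hD_def
  have hDM : MeasurableSet D :=
    MeasurableSet.iUnion fun c => (hAcM c).symmDiff (hBM c)
  have hD_le : μ D ≤ (kK : ℝ≥0∞) * δ := by
    calc μ D ≤ ∑' c : sp.Classes, μ ((Ac c) ∆ (B c)) := measure_iUnion_le _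
    _ = ∑ c : sp.Classes, μ ((Ac c) ∆ (B c)) := tsum_fintype _
    _ ≤ (kK : ℝ≥0∞) * δ := by
        have h := Finset.sum_le_card_nsmul Finset.univ
          (fun c : sp.Classes => μ ((Ac c) ∆ (B c))) δ (fun c _ => (hEclt c).le)
        simpa [hkK_def, nsmul_eq_mul, Finset.card_univ] using h
  have hψD : ∀ z z' : Zsp P σ sp, pN P σ sp N z = pN P σ sp N z' →
      z ∉ D → z' ∉ D → ψ z' = ψ z := by
    intro z z' hzz hzD hz'D
    have hz_not : ∀ c, ¬ (z ∈ (Ac c) ∆ (B c)) := fun c hc =>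
      hzD (Set.mem_iUnion.mpr ⟨c, hc⟩)
    have hz'_not : ∀ c, ¬ (z' ∈ (Ac c) ∆ (B c)) := fun c hc =>
      hz'D (Set.mem_iUnion.mpr ⟨c, hc⟩)
    have hzA : z ∈ Ac (ψ z) := rfl
    have hzB : z ∈ B (ψ z) := by
      by_contra hno
      exact hz_not (ψ z) (Set.mem_symmDiff.mpr (Or.inl ⟨hzA, hno⟩))
    have hz'B : z' ∈ B (ψ z) := (hBcyl (ψ z) z z' hzz).mp hzB
    have hz'A : z' ∈ Ac (ψ z) := by
      by_contra hno
      exact hz'_not (ψ z) (Set.mem_symmDiff.mpr (Or.inr ⟨hz'B, hno⟩))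
    exact hz'A
  -- the good set
  set n := 2 * N + 2 with hn_def
  set Gn : Set (Zsp P σ sp) := ⋂ (k : ℕ) (_ : k < n), T^[k] ⁻¹' E₂ with hGn_def
  have hGnM : MeasurableSet Gn :=
    MeasurableSet.iInter fun k => MeasurableSet.iInter fun _ =>
      hE₂M.preimage ((hTpres.iterate k).measurable)
  have hGnN : μ Gnᶜ = 0 := by
    rw [hGn_def, Set.compl_iInter]
    refine measure_iUnion_null fun k => ?_
    rw [Set.compl_iInter]
    refine measure_iUnion_null fun _ => ?_
    have hc : (T^[k] ⁻¹' E₂)ᶜ = T^[k] ⁻¹' E₂ᶜ := rfl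
    rw [hc, (hTpres.iterate k).measure_preimage hE₂M.compl.nullMeasurableSet]
    exact hE₂N
  set base : Set (Zsp P σ sp) := (Gn ∩ Dᶜ) ∩ T^[n] ⁻¹' Dᶜ with hbase_def
  have hTnD : μ (T^[n] ⁻¹' D) = μ D :=
    (hTpres.iterate n).measure_preimage hDM.nullMeasurableSet
  have hbaseC : μ baseᶜ ≤ 2 * ((kK : ℝ≥0∞) * δ) := by
    have hsub : baseᶜ ⊆ Gnᶜ ∪ (D ∪ T^[n] ⁻¹' D) := by
      intro z hz
      by_contra hno
      simp only [Set.mem_union, Set.mem_compl_iff, not_or, not_not] at hno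
      exact hz ⟨⟨hno.1, hno.2.1⟩, hno.2.2⟩
    calc μ baseᶜ ≤ μ (Gnᶜ ∪ (D ∪ T^[n] ⁻¹' D)) := measure_mono hsub
    _ ≤ μ Gnᶜ + (μ D + μ (T^[n] ⁻¹' D)) :=
        le_trans (measure_union_le _ _) (by gcongr; exact measure_union_le _ _)
    _ = μ D + μ D := by rw [hGnN, hTnD, zero_add]
    _ ≤ (kK : ℝ≥0∞) * δ + (kK : ℝ≥0∞) * δ := add_le_add hD_le hD_le
    _ = 2 * ((kK : ℝ≥0∞) * δ) := (two_mul _).symm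
  -- the translations
  set k₀ : ℤ := ((N + 1 : ℕ) : ℤ) with hk₀_def
  set Φ : Alp P σ sp → Zsp P σ sp → Zsp P σ sp :=
    fun g z => ((1 : Yfac), Pi.mulSingle k₀ g) * z with hΦ_def
  have hΦpres : ∀ g, MeasurePreserving (Φ g) μ μ :=
    fun g => measurePreserving_mul_left μ _
  set Wg : Set (Zsp P σ sp) := base ∩ ⋂ g : Alp P σ sp, Φ g ⁻¹' base with hWg_def
  have hbaseM : MeasurableSet base :=
    ((hGnM.inter hDM.compl).inter (hDM.compl.preimage (hTpres.iterate n).measurable))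
  have hWgC_lt : μ Wgᶜ < 1 := by
    have hsub : Wgᶜ ⊆ baseᶜ ∪ ⋃ g : Alp P σ sp, Φ g ⁻¹' baseᶜ := by
      intro z hz
      by_contra hno
      simp only [Set.mem_union, Set.mem_compl_iff, Set.mem_iUnion, Set.mem_preimage,
        not_or, not_exists, not_not] at hno
      exact hz ⟨hno.1, Set.mem_iInter.mpr fun g => hno.2 g⟩
    have hbound : μ Wgᶜ ≤ ((kA : ℝ≥0∞) + 1) * (2 * ((kK : ℝ≥0∞) * δ)) := by
      calc μ Wgᶜ ≤ μ baseᶜ + μ (⋃ g : Alp P σ sp, Φ g ⁻¹' baseᶜ) :=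
          le_trans (measure_mono hsub) (measure_union_le _ _)
      _ ≤ μ baseᶜ + ∑' g : Alp P σ sp, μ (Φ g ⁻¹' baseᶜ) := by
          gcongr
          exact measure_iUnion_le _
      _ = μ baseᶜ + ∑ g : Alp P σ sp, μ (Φ g ⁻¹' baseᶜ) := by rw [tsum_fintype]
      _ = μ baseᶜ + ∑ g : Alp P σ sp, μ baseᶜ := by
          congr 1
          refine Finset.sum_congr rfl fun g _ => ?_
          exact (hΦpres g).measure_preimage hbaseM.compl.nullMeasurableSet
      _ = ((kA : ℝ≥0∞) + 1) * μ baseᶜ := by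
          rw [Finset.sum_const, Finset.card_univ, nsmul_eq_mul, ← hkA_def]
          ring
      _ ≤ ((kA : ℝ≥0∞) + 1) * (2 * ((kK : ℝ≥0∞) * δ)) := by gcongr
    have harith : ((kA : ℝ≥0∞) + 1) * (2 * ((kK : ℝ≥0∞) * δ)) ≤ (2 : ℝ≥0∞)⁻¹ := by
      have h1 : ((kA : ℝ≥0∞) + 1) * (2 * ((kK : ℝ≥0∞) * δ)) = 
          (((kK : ℝ≥0∞)) * (2 * ((kA : ℝ≥0∞) + 1))) * δ := by ring
      rw [h1]
      have h2 : ((kK : ℝ≥0∞)) * (2 * ((kA : ℝ≥0∞) + 1)) ≤ (M : ℝ≥0∞) := by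
        rw [hM_def]
        push_cast
        have : (kK : ℝ≥0∞) ≤ (kK : ℝ≥0∞) + 1 := le_self_add
        gcongr
      calc (((kK : ℝ≥0∞)) * (2 * ((kA : ℝ≥0∞) + 1))) * δ ≤ (M : ℝ≥0∞) * δ := by gcongr
      _ = (2 : ℝ≥0∞)⁻¹ := by
          rw [hδ_def]
          push_cast
          rw [ENNReal.mul_inv (Or.inl hM0) (Or.inl (ENNReal.natCast_ne_top M)),
            ← mul_assoc, ENNReal.mul_inv_cancel hM0 (ENNReal.natCast_ne_top M), one_mul]
    calc μ Wgᶜ ≤ (2 : ℝ≥0∞)⁻¹ := le_trans hbound harith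
    _ < 1 := by norm_num
  have hWgne : Wg.Nonempty := by
    by_contra hno
    rw [Set.not_nonempty_iff_eq_empty] at hno
    rw [hno, Set.compl_empty] at hWgC_lt
    simp at hWgC_lt
  obtain ⟨z₀, hz₀⟩ := hWgne
  have hz₀base : z₀ ∈ base := hz₀.1
  have hz₀g : ∀ g : Alp P σ sp, Φ g z₀ ∈ base :=
    fun g => Set.mem_iInter.mp hz₀.2 g
  -- pointwise identifications
  have hΦfst : ∀ g, (Φ g z₀).1 = z₀.1 := by
    intro g
    show (1 : Yfac) * z₀.1 = z₀.1
    rw [one_mul]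
  have hΦsnd : ∀ g (k : ℤ), k ≠ k₀ → (Φ g z₀).2 k = z₀.2 k := by
    intro g k hk
    show ((Pi.mulSingle k₀ g * z₀.2 : Om P σ sp)) k = z₀.2 k
    rw [Pi.mul_apply, Pi.mulSingle_apply, if_neg hk, one_mul]
  have hΦk₀ : ∀ g, (Φ g z₀).2 k₀ = g * z₀.2 k₀ := by
    intro g
    show ((Pi.mulSingle k₀ g * z₀.2 : Om P σ sp)) k₀ = g * z₀.2 k₀
    rw [Pi.mul_apply, Pi.mulSingle_apply, if_pos rfl]
  have key1 : ∀ g, pN P σ sp N (Φ g z₀) = pN P σ sp N z₀ := by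
    intro g
    unfold pN
    refine Prod.ext (by rw [hΦfst g]) ?_
    funext k
    by_cases hk : k.natAbs ≤ N
    · simp only [hk, if_true]
      refine hΦsnd g k ?_
      rw [hk₀_def]
      omega
    · simp [hk]
  have key2 : ∀ g, pN P σ sp N (T^[n] (Φ g z₀)) = pN P σ sp N (T^[n] z₀) := by
    intro g
    unfold pN
    refine Prod.ext ?_ ?_
    · show (T^[n] (Φ g z₀)).1 = (T^[n] z₀).1
      rw [hT_def, Tz_iter_fst, Tz_iter_fst, hΦfst g]
    · funext k
      by_cases hk : k.natAbs ≤ N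
      · simp only [hk, if_true]
        have h1 : (T^[n] (Φ g z₀)).2 k = (Φ g z₀).2 (k + n) := by
          rw [hT_def, Tz_iter_snd]
        have h2 : (T^[n] z₀).2 k = z₀.2 (k + n) := by
          rw [hT_def, Tz_iter_snd]
        rw [h1, h2]
        refine hΦsnd g (k + n) ?_
        rw [hk₀_def, hn_def]
        omega
      · simp [hk]
  have keyψ1 : ∀ g, ψ (Φ g z₀) = ψ z₀ :=
    fun g => hψD z₀ (Φ g z₀) (key1 g).symm hz₀base.1.2 (hz₀g g).1.2
  have keyψ2 : ∀ g, ψ (T^[n] (Φ g z₀)) = ψ (T^[n] z₀) :=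
    fun g => hψD (T^[n] z₀) (T^[n] (Φ g z₀)) (key2 g).symm hz₀base.2 (hz₀g g).2
  -- the cocycle equations
  have heq : ∀ g : Alp P σ sp, ψ (T^[n] (Φ g z₀)) =
      ((PrW P σ sp (Φ g z₀).2 n : Alp P σ sp) : Equiv.Perm sp.Classes) (ψ (Φ g z₀)) := by
    intro g
    refine coc_iter n (Φ g z₀) fun k hk => ?_
    have := (hz₀g g).1.1
    rw [hGn_def] at this
    exact Set.mem_iInter.mp (Set.mem_iInter.mp this k) hk
  -- product decomposition
  have hsplit : ∀ g : Alp P σ sp, PrW P σ sp (Φ g z₀).2 n =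
      SfW P σ sp z₀.2 (N + 2) N * (g * (z₀.2 k₀ * PrW P σ sp z₀.2 (N + 1))) := by
    intro g
    have hn2 : n = (N + 1) + 1 + N := by rw [hn_def]; ring
    rw [hn2, PrW_split]
    have hSf : SfW P σ sp (Φ g z₀).2 (N + 1 + 1) N = SfW P σ sp z₀.2 (N + 2) N := by
      have h1 : N + 1 + 1 = N + 2 := rfl
      rw [h1]
      refine SfW_congr P σ sp (N + 2) N fun i h1 h2 => ?_
      refine hΦsnd g (i : ℤ) ?_
      rw [hk₀_def]
      omega
    have hPr : PrW P σ sp (Φ g z₀).2 (N + 1) = PrW P σ sp z₀.2 (N + 1) := by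
      refine PrW_congr P σ sp (N + 1) fun j hj => ?_
      refine hΦsnd g (j : ℤ) ?_
      rw [hk₀_def]
      omega
    have hval : (Φ g z₀).2 ((N + 1 : ℕ) : ℤ) = g * z₀.2 k₀ := by
      rw [← hk₀_def]
      exact hΦk₀ g
    rw [hSf, hPr, hval, mul_assoc]
  -- extract the fixed class
  set L := SfW P σ sp z₀.2 (N + 2) N with hL_def
  set R := z₀.2 k₀ * PrW P σ sp z₀.2 (N + 1) with hR_def
  set c₁ := ψ z₀ with hc₁_def
  set c₂ := ψ (T^[n] z₀) with hc₂_def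
  set d : sp.Classes := (R : Equiv.Perm sp.Classes) c₁ with hd_def
  have heq' : ∀ g : Alp P σ sp,
      c₂ = (L : Equiv.Perm sp.Classes) ((g : Equiv.Perm sp.Classes) d) := by
    intro g
    have h1 := heq g
    rw [keyψ1 g, keyψ2 g, hsplit g] at h1
    rw [hd_def, h1]
    simp [Subgroup.coe_mul, Equiv.Perm.mul_apply]
  have hfix : ∀ g : Alp P σ sp, (g : Equiv.Perm sp.Classes) d = d := by
    intro g
    have h1 := (heq' g).symm.trans (heq' 1)
    have h2 := (Equiv.injective (L : Equiv.Perm sp.Classes)) h1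
    rw [OneMemClass.coe_one] at h2
    exact h2
  -- contradiction with mixing
  refine hmix.2 ⟨d, fun π hπ => ?_⟩
  exact hfix ⟨π, Subgroup.subset_closure hπ⟩

/- ===================  Part F: the main theorem =================== -/

/-- If an LCL problem `Π = (Σin, Σout, P)` in normal form is mixing,
then `Π` is not in the class `MEASURE`: there is a standard Borel space `X`, an aperiodic
Borel automorphism `S` of `X`, a Borel probability measure `μ` and a Borel input labeling
`i` admitting no Borel map `f` solving `Π` `μ`-almost everywhere. -/
theorem mixing_implies_not_MEASURE {Sin Sout : Type}
    [Fintype Sin] [Fintype Sout] [Nonempty Sin] [Nonempty Sout]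
    (P : Sin → Sin → Sout → Sout → Prop) [∀ a b c d, Decidable (P a b c d)]
    (h : IsMixing P) :
    ∃ (X : Type) (_ : MeasurableSpace X), StandardBorelSpace X ∧
      ∃ S : Equiv.Perm X, Measurable S ∧ Measurable S.symm ∧ Aperiodic S ∧
        ∃ μ : Measure X, IsProbabilityMeasure μ ∧
          ∃ i : X → Sin, (∀ σ : Sin, MeasurableSet (i ⁻¹' {σ})) ∧
            ∀ f : X → Sout, (∀ τ : Sout, MeasurableSet (f ⁻¹' {τ})) →
              ¬ (∀ᵐ x ∂μ, P (i x) (i (S x)) (f x) (f (S x))) := by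
  obtain ⟨σ, sp, hmix⟩ := h
  refine ⟨Xsp P σ sp, inferInstance, inferInstance, SX P σ sp, measurable_SX P σ sp,
    measurable_SX_symm P σ sp, aperiodic_SX P σ sp, muX P σ sp, inferInstance,
    iInp P σ sp, measurableSet_iInp_preimage P σ sp, ?_⟩
  intro f hf hae
  exact no_solution P σ sp hmix f hf hae

end Space
end

section
/- Let Π = (Σ_in, Σ_out, P) be an LCL problem in normal form and 𝓘 : ℤ → Σ_in an input labeling. Then the equivalence relation ≈⁺ on ℤ × Σ_out has at most 2^{|Σ_out|} equivalence classes, and likewise the equivalence relation ≈⁻ has at most 2^{|Σ_out|} equivalence classes. -/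
section InputGraph

variable {Sin Sout : Type}

/-- The edge relation of the input graph `G_𝓘` on `ℤ × Σout`: there is an edge from
`(i, a)` to `(i + 1, b)` iff `P (𝓘 i) (𝓘 (i+1)) a b` holds. -/
def InputEdge (P : Sin → Sin → Sout → Sout → Prop) (I : ℤ → Sin)
    (u v : ℤ × Sout) : Prop :=
  v.1 = u.1 + 1 ∧ P (I u.1) (I v.1) u.2 v.2

/-- `r_u`: the set of vertices reachable from `u` by a directed path in `G_𝓘`. -/
def rset (P : Sin → Sin → Sout → Sout → Prop) (I : ℤ → Sin) (u : ℤ × Sout) :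
    Set (ℤ × Sout) :=
  {v | Relation.ReflTransGen (InputEdge P I) u v}

/-- `l_u`: the set of vertices from which `u` is reachable by a directed path in `G_𝓘`. -/
def lset (P : Sin → Sin → Sout → Sout → Prop) (I : ℤ → Sin) (u : ℤ × Sout) :
    Set (ℤ × Sout) :=
  {v | Relation.ReflTransGen (InputEdge P I) v u}

/-- `u ≈⁺ v` iff the symmetric difference `r_u Δ r_v` is finite. -/
def RPlus (P : Sin → Sin → Sout → Sout → Prop) (I : ℤ → Sin)
    (u v : ℤ × Sout) : Prop :=
  (symmDiff (rset P I u) (rset P I v)).Finite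

/-- `u ≈⁻ v` iff the symmetric difference `l_u Δ l_v` is finite. -/
def RMinus (P : Sin → Sin → Sout → Sout → Prop) (I : ℤ → Sin)
    (u v : ℤ × Sout) : Prop :=
  (symmDiff (lset P I u) (lset P I v)).Finite

/-- The equivalence relation `ℜ`, the intersection of `≈⁺` and `≈⁻`. -/
def RRel (P : Sin → Sin → Sout → Sout → Prop) (I : ℤ → Sin)
    (u v : ℤ × Sout) : Prop :=
  RPlus P I u v ∧ RMinus P I u v

end InputGraph

section Aux

variable {Sin Sout : Type}

lemma level_le_of_mem_rset {P : Sin → Sin → Sout → Sout → Prop} {I : ℤ → Sin}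
    {u w : ℤ × Sout} (h : Relation.ReflTransGen (InputEdge P I) u w) : u.1 ≤ w.1 := by
  induction h with
  | refl => exact le_refl _
  | tail _ e ih => have := e.1; omega

lemma exists_through_level {P : Sin → Sin → Sout → Sout → Prop} {I : ℤ → Sin}
    {n : ℤ} {u w : ℤ × Sout} (h : Relation.ReflTransGen (InputEdge P I) u w)
    (h1 : u.1 ≤ n) (h2 : n ≤ w.1) :
    ∃ b, Relation.ReflTransGen (InputEdge P I) u (n, b) ∧
      Relation.ReflTransGen (InputEdge P I) (n, b) w := by
  induction h using Relation.ReflTransGen.head_induction_on with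
  | refl =>
      have : n = w.1 := le_antisymm h2 h1
      refine ⟨w.2, ?_, ?_⟩ <;> rw [this]
  | head e hrest ih =>
      rename_i y c
      rcases eq_or_lt_of_le h1 with heq | hlt
      · refine ⟨y.2, ?_, ?_⟩
        · rw [← heq]
        · rw [← heq]
          exact Relation.ReflTransGen.head e hrest
      · have hy : c.1 ≤ n := by have := e.1; omega
        obtain ⟨b, p1, p2⟩ := ih hy
        exact ⟨b, Relation.ReflTransGen.head e p1, p2⟩

lemma rplus_of_trace [Finite Sout] {P : Sin → Sin → Sout → Sout → Prop} {I : ℤ → Sin}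
    {u v : ℤ × Sout} {n : ℤ} (hu : u.1 ≤ n) (hv : v.1 ≤ n)
    (h : ∀ b, (n, b) ∈ rset P I u ↔ (n, b) ∈ rset P I v) : RPlus P I u v := by
  apply Set.Finite.subset ((Set.finite_Icc (min u.1 v.1) n).prod Set.finite_univ)
  intro w hw
  rw [Set.mem_symmDiff] at hw
  have hb : min u.1 v.1 ≤ w.1 ∧ w.1 ≤ n := by
    rcases hw with ⟨hwu, hwv⟩ | ⟨hwv, hwu⟩
    · refine ⟨le_trans (min_le_left _ _) (level_le_of_mem_rset hwu), ?_⟩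
      by_contra hgt
      push_neg at hgt
      obtain ⟨b, p1, p2⟩ := exists_through_level hwu hu (le_of_lt hgt)
      exact hwv (Relation.ReflTransGen.trans ((h b).1 p1) p2)
    · refine ⟨le_trans (min_le_right _ _) (level_le_of_mem_rset hwv), ?_⟩
      by_contra hgt
      push_neg at hgt
      obtain ⟨b, p1, p2⟩ := exists_through_level hwv hv (le_of_lt hgt)
      exact hwu (Relation.ReflTransGen.trans ((h b).2 p1) p2)
  exact ⟨Set.mem_Icc.2 hb, Set.mem_univ _⟩

lemma card_le_of_pairwise [Fintype Sout] {P : Sin → Sin → Sout → Sout → Prop}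
    {I : ℤ → Sin} (T : Finset (ℤ × Sout))
    (hT : ∀ u ∈ T, ∀ v ∈ T, u ≠ v → ¬ RPlus P I u v) :
    T.card ≤ 2 ^ Fintype.card Sout := by
  classical
  rcases T.eq_empty_or_nonempty with rfl | hne
  · simp [Nat.one_le_two_pow]
  set n : ℤ := (T.image Prod.fst).max' (hne.image _) with hn
  have hlev : ∀ u ∈ T, u.1 ≤ n := fun u hu =>
    Finset.le_max' _ _ (Finset.mem_image_of_mem _ hu)
  set φ : ℤ × Sout → Finset Sout :=
    fun u => Finset.univ.filter (fun b => (n, b) ∈ rset P I u) with hφ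
  have hinj : Set.InjOn φ T := by
    intro u hu v hv heq
    by_contra hne'
    apply hT u hu v hv hne'
    refine rplus_of_trace (hlev u hu) (hlev v hv) (fun b => ?_)
    have := Finset.ext_iff.1 heq b
    simpa [hφ, Finset.mem_filter] using this
  calc T.card = (T.image φ).card := (Finset.card_image_of_injOn hinj).symm
    _ ≤ Fintype.card (Finset Sout) := by
        simpa using Finset.card_le_univ (T.image φ)
    _ = 2 ^ Fintype.card Sout := Fintype.card_finset

lemma rplus_refl {P : Sin → Sin → Sout → Sout → Prop} {I : ℤ → Sin}
    (u : ℤ × Sout) : RPlus P I u u := by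
  simp [RPlus, symmDiff_self]

lemma rplus_symm {P : Sin → Sin → Sout → Sout → Prop} {I : ℤ → Sin}
    {u v : ℤ × Sout} (h : RPlus P I u v) : RPlus P I v u := by
  rwa [RPlus, symmDiff_comm]

lemma exists_transversal_RPlus [Fintype Sout] (P : Sin → Sin → Sout → Sout → Prop)
    (I : ℤ → Sin) :
    ∃ T : Finset (ℤ × Sout), T.card ≤ 2 ^ Fintype.card Sout ∧
      ∀ u : ℤ × Sout, ∃ v ∈ T, RPlus P I u v := by
  classical
  set S : Set ℕ := {m | ∃ T : Finset (ℤ × Sout),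
    (∀ u ∈ T, ∀ v ∈ T, u ≠ v → ¬ RPlus P I u v) ∧ T.card = m} with hS
  have hbdd : BddAbove S := by
    refine ⟨2 ^ Fintype.card Sout, fun m hm => ?_⟩
    obtain ⟨T, hT, hc⟩ := hm
    exact hc ▸ card_le_of_pairwise T hT
  have hne : S.Nonempty := ⟨0, ∅, by simp, rfl⟩
  obtain ⟨T, hT, hc⟩ : sSup S ∈ S := Nat.sSup_mem hne hbdd
  refine ⟨T, card_le_of_pairwise T hT, ?_⟩
  intro u
  by_contra hcon
  push_neg at hcon
  have hu : u ∉ T := fun h => hcon u h (rplus_refl u)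
  have hpair : ∀ x ∈ insert u T, ∀ y ∈ insert u T, x ≠ y → ¬ RPlus P I x y := by
    intro x hx y hy hxy h
    rcases Finset.mem_insert.1 hx with hx' | hx' <;>
      rcases Finset.mem_insert.1 hy with hy' | hy'
    · exact hxy (hx'.trans hy'.symm)
    · subst hx'; exact hcon y hy' h
    · subst hy'; exact hcon x hx' (rplus_symm h)
    · exact hT x hx' y hy' hxy h
  have hcard : (insert u T).card = sSup S + 1 := by
    rw [Finset.card_insert_of_notMem hu, hc]
  have hmem : sSup S + 1 ∈ S := ⟨insert u T, hpair, hcard⟩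
  have := le_csSup hbdd hmem
  omega

end Aux

section Rev

variable {Sin Sout : Type}

def negv (u : ℤ × Sout) : ℤ × Sout := (-u.1, u.2)

lemma negv_injective : Function.Injective (negv (Sout := Sout)) := by
  intro a b h
  rw [Prod.ext_iff] at h ⊢
  simp only [negv] at h
  exact ⟨by omega, h.2⟩

lemma rtg_rev {P : Sin → Sin → Sout → Sout → Prop} {I : ℤ → Sin} {u v : ℤ × Sout}
    (h : Relation.ReflTransGen (InputEdge P I) v u) :
    Relation.ReflTransGen
      (InputEdge (fun a b c d => P b a d c) (fun m => I (-m))) (negv u) (negv v) := by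
  induction h with
  | refl => exact Relation.ReflTransGen.refl
  | tail _ e ih =>
      rename_i b c _
      refine Relation.ReflTransGen.head ?_ ih
      refine ⟨by have := e.1; simp only [negv]; omega, ?_⟩
      simp only [negv, neg_neg]
      exact e.2

lemma mem_lset_iff {P : Sin → Sin → Sout → Sout → Prop} {I : ℤ → Sin} (u w : ℤ × Sout) :
    w ∈ lset P I u ↔
      negv w ∈ rset (fun a b c d => P b a d c) (fun m => I (-m)) (negv u) := by
  constructor
  · exact rtg_rev
  · intro h
    have h2 := rtg_rev (P := fun a b c d => P b a d c) (I := fun m => I (-m)) h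
    have hI : (fun m => I (- -m)) = I := funext fun m => by rw [neg_neg]
    simp only [negv, neg_neg, hI, lset, rset, Set.mem_setOf_eq] at h2 ⊢
    exact h2

lemma rminus_of_rplus_rev {P : Sin → Sin → Sout → Sout → Prop} {I : ℤ → Sin}
    {u v : ℤ × Sout}
    (h : RPlus (fun a b c d => P b a d c) (fun m => I (-m)) (negv u) (negv v)) :
    RMinus P I u v := by
  have heq : symmDiff (lset P I u) (lset P I v) =
      negv ⁻¹' symmDiff
        (rset (fun a b c d => P b a d c) (fun m => I (-m)) (negv u))
        (rset (fun a b c d => P b a d c) (fun m => I (-m)) (negv v)) := by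
    ext w
    simp [Set.mem_symmDiff, mem_lset_iff u w, mem_lset_iff v w]
  rw [RMinus, heq]
  exact Set.Finite.preimage (Function.Injective.injOn negv_injective) h

end Rev

/-- For any LCL problem `Π = (Σin, Σout, P)` in normal form and any
input labeling `𝓘 : ℤ → Σin`, the equivalence relations `≈⁺` and `≈⁻` on `ℤ × Σout`
each have at most `2 ^ |Σout|` equivalence classes (there is a set of at most
`2 ^ |Σout|` vertices meeting every class). -/
theorem card_classes_RPlus_RMinus_le {Sin Sout : Type}
    [Fintype Sin] [Fintype Sout] [Nonempty Sin] [Nonempty Sout]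
    (P : Sin → Sin → Sout → Sout → Prop) [∀ a b c d, Decidable (P a b c d)]
    (I : ℤ → Sin) :
    (∃ T : Finset (ℤ × Sout), T.card ≤ 2 ^ Fintype.card Sout ∧
      ∀ u : ℤ × Sout, ∃ v ∈ T, RPlus P I u v) ∧
    (∃ T : Finset (ℤ × Sout), T.card ≤ 2 ^ Fintype.card Sout ∧
      ∀ u : ℤ × Sout, ∃ v ∈ T, RMinus P I u v) := by
  classical
  constructor
  · exact exists_transversal_RPlus P I
  · obtain ⟨T, hcard, hT⟩ :=
      exists_transversal_RPlus (fun a b c d => P b a d c) (fun m => I (-m))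
    refine ⟨T.image negv, le_trans Finset.card_image_le hcard, fun u => ?_⟩
    obtain ⟨v, hv, hrp⟩ := hT (negv u)
    refine ⟨negv v, Finset.mem_image_of_mem _ hv, ?_⟩
    apply rminus_of_rplus_rev
    have : negv (negv v) = v := by simp [negv]
    rwa [this]
end

section
/- Let Π = (Σ_in, Σ_out, P) be an LCL problem in normal form, 𝓘 : ℤ → Σ_in an input labeling, and P an equivalence class of ℜ on the input graph G_𝓘. Assume that P meets slices arbitrarily far in both directions (for every k ∈ ℕ there are (j,b) ∈ P with j ≤ −k and (j',b') ∈ P with j' ≥ k). If P contains an infinite directed path (going to +∞ or to −∞), then P contains a doubly infinite directed path of G_𝓘. -/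
namespace Stmt9
variable {Sin Sout : Type} (P : Sin → Sin → Sout → Sout → Prop) (I : ℤ → Sin)

abbrev Reach (u v : ℤ × Sout) : Prop := Relation.ReflTransGen (InputEdge P I) u v

variable {P I}

lemma reach_fst_le {u v : ℤ × Sout} (h : Reach P I u v) : u.1 ≤ v.1 := by
  induction h with
  | refl => exact le_refl _
  | tail _ e ih => have := e.1; omega

lemma reach_eq_of_le {u v : ℤ × Sout} (h : Reach P I u v) (hle : v.1 ≤ u.1) : u = v := by
  rcases h.cases_head with rfl | ⟨c, e, h'⟩
  · rfl
  · exfalso; have := e.1; have := reach_fst_le h'; omega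

lemma exists_pred {v w : ℤ × Sout} (h : Reach P I v w) (hlt : v.1 < w.1) :
    ∃ x, Reach P I v x ∧ InputEdge P I x w := by
  induction h with
  | refl => omega
  | tail h' e _ => exact ⟨_, h', e⟩

lemma exists_succ {v w : ℤ × Sout} (h : Reach P I v w) (hlt : v.1 < w.1) :
    ∃ x, InputEdge P I v x ∧ Reach P I x w := by
  induction h with
  | refl => omega
  | @tail b c h' e ih =>
    by_cases hb : v.1 < b.1
    · obtain ⟨x, hx1, hx2⟩ := ih hb
      exact ⟨x, hx1, hx2.tail e⟩
    · have hvb : v = b := reach_eq_of_le h' (by omega)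
      subst hvb
      exact ⟨c, e, Relation.ReflTransGen.refl⟩

lemma exists_mid {u v : ℤ × Sout} (h : Reach P I u v) {i : ℤ} (h1 : u.1 ≤ i) (h2 : i ≤ v.1) :
    ∃ x, x.1 = i ∧ Reach P I u x ∧ Reach P I x v := by
  induction h with
  | refl => exact ⟨u, by omega, Relation.ReflTransGen.refl, Relation.ReflTransGen.refl⟩
  | @tail b c h' e ih =>
    by_cases hi : i ≤ b.1
    · obtain ⟨x, hx, hx1, hx2⟩ := ih hi
      exact ⟨x, hx, hx1, hx2.tail e⟩
    · have := e.1
      have := reach_fst_le h'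
      exact ⟨c, by omega, h'.tail e, Relation.ReflTransGen.refl⟩

lemma finite_sd_comm {α : Type*} {s t : Set α} (h : (symmDiff s t).Finite) :
    (symmDiff t s).Finite := by rwa [symmDiff_comm]

lemma finite_sd_trans {α : Type*} {s t r : Set α} (h1 : (symmDiff s t).Finite)
    (h2 : (symmDiff t r).Finite) : (symmDiff s r).Finite :=
  (h1.union h2).subset (symmDiff_triangle s t r)

lemma rrel_between {u₀ a b x : ℤ × Sout} (ha : RRel P I u₀ a) (hb : RRel P I u₀ b)
    (hax : Reach P I a x) (hxb : Reach P I x b) : RRel P I u₀ x := by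
  have h1 : rset P I b ⊆ rset P I x := fun y hy => hxb.trans hy
  have h2 : rset P I x ⊆ rset P I a := fun y hy => hax.trans hy
  have l1 : lset P I a ⊆ lset P I x := fun y hy => Relation.ReflTransGen.trans hy hax
  have l2 : lset P I x ⊆ lset P I b := fun y hy => Relation.ReflTransGen.trans hy hxb
  have habr : (symmDiff (rset P I a) (rset P I b)).Finite :=
    finite_sd_trans (finite_sd_comm ha.1) hb.1
  have habl : (symmDiff (lset P I b) (lset P I a)).Finite :=
    finite_sd_trans (finite_sd_comm hb.2) ha.2
  have hr : (symmDiff (rset P I a) (rset P I x)).Finite := by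
    refine habr.subset ?_
    rw [Set.symmDiff_def, Set.symmDiff_def]
    rintro y (⟨hy1, hy2⟩ | ⟨hy1, hy2⟩)
    · exact Or.inl ⟨hy1, fun hb' => hy2 (h1 hb')⟩
    · exact absurd (h2 hy1) hy2
  have hl : (symmDiff (lset P I b) (lset P I x)).Finite := by
    refine habl.subset ?_
    rw [Set.symmDiff_def, Set.symmDiff_def]
    rintro y (⟨hy1, hy2⟩ | ⟨hy1, hy2⟩)
    · exact Or.inl ⟨hy1, fun ha' => hy2 (l1 ha')⟩
    · exact absurd (l2 hy1) hy2
  exact ⟨finite_sd_trans ha.1 hr, finite_sd_trans hb.2 hl⟩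

lemma exists_infinite_fiber' {S : Type} [Finite S] (f : ℕ → S) :
    ∃ s, {m : ℕ | f m = s}.Infinite := by
  obtain ⟨s, hs⟩ := Finite.exists_infinite_fiber f
  exact ⟨s, Set.infinite_coe_iff.mp hs⟩

end Stmt9
namespace Stmt9
variable {Sin Sout : Type} (P : Sin → Sin → Sout → Sout → Prop) (I : ℤ → Sin)

def Good (u₀ w : ℤ × Sout) : Prop :=
  RRel P I u₀ w ∧
  (∀ m : ℤ, ∃ v, RRel P I u₀ v ∧ v.1 ≤ m ∧ Reach P I v w) ∧
  (∀ m : ℤ, ∃ v, RRel P I u₀ v ∧ m ≤ v.1 ∧ Reach P I w v)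

variable {P I}

lemma good_pred [Finite Sout] {u₀ w : ℤ × Sout} (hw : Good P I u₀ w) :
    ∃ x, Good P I u₀ x ∧ InputEdge P I x w := by
  obtain ⟨hwP, hB, hF⟩ := hw
  have hv : ∀ m : ℕ, ∃ v, RRel P I u₀ v ∧ v.1 ≤ min (w.1 - 1) (-(m : ℤ)) ∧ Reach P I v w :=
    fun m => hB _
  choose v hvP hvle hvw using hv
  have hx : ∀ m : ℕ, ∃ x, Reach P I (v m) x ∧ InputEdge P I x w := fun m =>
    exists_pred (hvw m) (by have := hvle m; omega)
  choose x hvx hxw using hx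
  have hxP : ∀ m, RRel P I u₀ (x m) := fun m =>
    rrel_between (hvP m) hwP (hvx m) (Relation.ReflTransGen.single (hxw m))
  have hx1 : ∀ m, (x m).1 = w.1 - 1 := fun m => by have := (hxw m).1; omega
  obtain ⟨s, hs⟩ := exists_infinite_fiber' (fun m => (x m).2)
  obtain ⟨m₀, hm₀⟩ := hs.nonempty
  have hxeq : ∀ m ∈ {m : ℕ | (x m).2 = s}, x m = x m₀ := fun m hm =>
    Prod.ext (by rw [hx1, hx1]) (hm.trans hm₀.symm)
  refine ⟨x m₀, ⟨hxP m₀, ?_, ?_⟩, hxw m₀⟩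
  · intro m
    obtain ⟨m', hm', hgt⟩ := hs.exists_gt (-m).toNat
    refine ⟨v m', hvP m', ?_, hxeq m' hm' ▸ hvx m'⟩
    have h1 := hvle m'
    have h2 : -m ≤ ((-m).toNat : ℤ) := Int.self_le_toNat _
    omega
  · intro m
    obtain ⟨vv, h1, h2, h3⟩ := hF m
    exact ⟨vv, h1, h2, (Relation.ReflTransGen.single (hxw m₀)).trans h3⟩

lemma good_succ [Finite Sout] {u₀ w : ℤ × Sout} (hw : Good P I u₀ w) :
    ∃ y, Good P I u₀ y ∧ InputEdge P I w y := by
  obtain ⟨hwP, hB, hF⟩ := hw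
  have hv : ∀ m : ℕ, ∃ v, RRel P I u₀ v ∧ max (w.1 + 1) (m : ℤ) ≤ v.1 ∧ Reach P I w v :=
    fun m => hF _
  choose v hvP hvle hwv using hv
  have hy : ∀ m : ℕ, ∃ y, InputEdge P I w y ∧ Reach P I y (v m) := fun m =>
    exists_succ (hwv m) (by have := hvle m; omega)
  choose y hwy hyv using hy
  have hyP : ∀ m, RRel P I u₀ (y m) := fun m =>
    rrel_between hwP (hvP m) (Relation.ReflTransGen.single (hwy m)) (hyv m)
  have hy1 : ∀ m, (y m).1 = w.1 + 1 := fun m => (hwy m).1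
  obtain ⟨s, hs⟩ := exists_infinite_fiber' (fun m => (y m).2)
  obtain ⟨m₀, hm₀⟩ := hs.nonempty
  have hyeq : ∀ m ∈ {m : ℕ | (y m).2 = s}, y m = y m₀ := fun m hm =>
    Prod.ext (by rw [hy1, hy1]) (hm.trans hm₀.symm)
  refine ⟨y m₀, ⟨hyP m₀, ?_, ?_⟩, hwy m₀⟩
  · intro m
    obtain ⟨vv, h1, h2, h3⟩ := hB m
    exact ⟨vv, h1, h2, h3.tail (hwy m₀)⟩
  · intro m
    obtain ⟨m', hm', hgt⟩ := hs.exists_gt m.toNat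
    refine ⟨v m', hvP m', ?_, hyeq m' hm' ▸ hyv m'⟩
    have h1 := hvle m'
    have h2 : m ≤ (m.toNat : ℤ) := Int.self_le_toNat _
    omega

end Stmt9
namespace Stmt9
variable {Sin Sout : Type} {P : Sin → Sin → Sout → Sout → Prop} {I : ℤ → Sin}

lemma good_exists_fwd [Finite Sout] {u₀ : ℤ × Sout}
    (hmeet : ∀ k : ℕ, ∃ v, RRel P I u₀ v ∧ v.1 ≤ -(k : ℤ))
    (p : ℕ → ℤ × Sout) (hpP : ∀ n, RRel P I u₀ (p n))
    (hpe : ∀ n, InputEdge P I (p n) (p (n + 1))) :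
    ∃ w, Good P I u₀ w := by
  have hp1 : ∀ n : ℕ, (p n).1 = (p 0).1 + n := by
    intro n
    induction n with
    | zero => simp
    | succ n ih => have := (hpe n).1; push_cast; omega
  have hreach : ∀ n m : ℕ, n ≤ m → Reach P I (p n) (p m) := by
    intro n m h
    induction m, h using Nat.le_induction with
    | base => exact Relation.ReflTransGen.refl
    | succ m hm ih => exact ih.tail (hpe m)
  set N : ℕ := (-(p 0).1).toNat with hN
  have hNge : -(p 0).1 ≤ (N : ℤ) := Int.self_le_toNat _
  have key : ∀ m : ℕ, ∃ w n, RRel P I u₀ w ∧ w.1 = 0 ∧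
      (∃ v, RRel P I u₀ v ∧ v.1 ≤ -(m : ℤ) ∧ Reach P I v w) ∧ Reach P I w (p n) := by
    intro m
    obtain ⟨v, hvP, hvle⟩ := hmeet m
    have hfin : (symmDiff (rset P I v) (rset P I (p 0))).Finite :=
      finite_sd_trans (finite_sd_comm hvP.1) (hpP 0).1
    have hinj : Set.InjOn p (Set.Ici N) := by
      intro a _ b _ hab
      have h1 := hp1 a; have h2 := hp1 b
      rw [hab] at h1; omega
    have himg : (p '' Set.Ici N).Infinite := (Set.Ici_infinite N).image hinj
    have hexn : ∃ n, N ≤ n ∧ Relation.ReflTransGen (InputEdge P I) v (p n) := by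
      by_contra hc
      push_neg at hc
      have hsub : p '' Set.Ici N ⊆ symmDiff (rset P I v) (rset P I (p 0)) := by
        rintro _ ⟨n, hn, rfl⟩
        rw [Set.symmDiff_def]
        exact Or.inr ⟨hreach 0 n (Nat.zero_le n), hc n hn⟩
      exact himg (hfin.subset hsub)
    obtain ⟨n, hn, hvpn⟩ := hexn
    have h0le : (0 : ℤ) ≤ (p n).1 := by have := hp1 n; omega
    obtain ⟨w, hw0, hvw, hwpn⟩ := exists_mid hvpn (by omega : v.1 ≤ (0:ℤ)) h0le
    exact ⟨w, n, rrel_between hvP (hpP n) hvw hwpn, hw0, ⟨v, hvP, hvle, hvw⟩, hwpn⟩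
  choose w nn hwP hw0 hback hfwd using key
  obtain ⟨s, hs⟩ := exists_infinite_fiber' (fun m => (w m).2)
  obtain ⟨m₀, hm₀⟩ := hs.nonempty
  have hweq : ∀ m ∈ {m : ℕ | (w m).2 = s}, w m = w m₀ := fun m hm =>
    Prod.ext (by rw [hw0, hw0]) (hm.trans hm₀.symm)
  refine ⟨w m₀, hwP m₀, ?_, ?_⟩
  · intro m
    obtain ⟨m', hm', hgt⟩ := hs.exists_gt (-m).toNat
    obtain ⟨v, h1, h2, h3⟩ := hback m'
    refine ⟨v, h1, ?_, hweq m' hm' ▸ h3⟩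
    have := Int.self_le_toNat (-m); omega
  · intro m
    set k : ℕ := max (nn m₀) ((m - (p 0).1).toNat) with hk
    refine ⟨p k, hpP k, ?_, (hfwd m₀).trans (hreach _ _ (le_max_left _ _))⟩
    have h1 := hp1 k
    have h2 : m - (p 0).1 ≤ ((m - (p 0).1).toNat : ℤ) := Int.self_le_toNat _
    have h3 : (m - (p 0).1).toNat ≤ k := le_max_right _ _
    omega

lemma good_exists_bwd [Finite Sout] {u₀ : ℤ × Sout}
    (hmeet : ∀ k : ℕ, ∃ v, RRel P I u₀ v ∧ (k : ℤ) ≤ v.1)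
    (p : ℕ → ℤ × Sout) (hpP : ∀ n, RRel P I u₀ (p n))
    (hpe : ∀ n, InputEdge P I (p (n + 1)) (p n)) :
    ∃ w, Good P I u₀ w := by
  have hp1 : ∀ n : ℕ, (p n).1 = (p 0).1 - n := by
    intro n
    induction n with
    | zero => simp
    | succ n ih => have := (hpe n).1; push_cast; omega
  have hreach : ∀ n m : ℕ, n ≤ m → Reach P I (p m) (p n) := by
    intro n m h
    induction m, h using Nat.le_induction with
    | base => exact Relation.ReflTransGen.refl
    | succ m hm ih => exact Relation.ReflTransGen.head (hpe m) ih
  set N : ℕ := (p 0).1.toNat with hN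
  have hNge : (p 0).1 ≤ (N : ℤ) := Int.self_le_toNat _
  have key : ∀ m : ℕ, ∃ w n, RRel P I u₀ w ∧ w.1 = 0 ∧
      (∃ v, RRel P I u₀ v ∧ (m : ℤ) ≤ v.1 ∧ Reach P I w v) ∧ Reach P I (p n) w := by
    intro m
    obtain ⟨v, hvP, hvle⟩ := hmeet m
    have hfin : (symmDiff (lset P I v) (lset P I (p 0))).Finite :=
      finite_sd_trans (finite_sd_comm hvP.2) (hpP 0).2
    have hinj : Set.InjOn p (Set.Ici N) := by
      intro a _ b _ hab
      have h1 := hp1 a; have h2 := hp1 b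
      rw [hab] at h1; omega
    have himg : (p '' Set.Ici N).Infinite := (Set.Ici_infinite N).image hinj
    have hexn : ∃ n, N ≤ n ∧ Relation.ReflTransGen (InputEdge P I) (p n) v := by
      by_contra hc
      push_neg at hc
      have hsub : p '' Set.Ici N ⊆ symmDiff (lset P I v) (lset P I (p 0)) := by
        rintro _ ⟨n, hn, rfl⟩
        rw [Set.symmDiff_def]
        exact Or.inr ⟨hreach 0 n (Nat.zero_le n), hc n hn⟩
      exact himg (hfin.subset hsub)
    obtain ⟨n, hn, hpnv⟩ := hexn
    have h0le : (p n).1 ≤ (0 : ℤ) := by have := hp1 n; omega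
    obtain ⟨w, hw0, hpnw, hwv⟩ := exists_mid hpnv h0le (by omega : (0:ℤ) ≤ v.1)
    exact ⟨w, n, rrel_between (hpP n) hvP hpnw hwv, hw0, ⟨v, hvP, hvle, hwv⟩, hpnw⟩
  choose w nn hwP hw0 hfwd hback using key
  obtain ⟨s, hs⟩ := exists_infinite_fiber' (fun m => (w m).2)
  obtain ⟨m₀, hm₀⟩ := hs.nonempty
  have hweq : ∀ m ∈ {m : ℕ | (w m).2 = s}, w m = w m₀ := fun m hm =>
    Prod.ext (by rw [hw0, hw0]) (hm.trans hm₀.symm)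
  refine ⟨w m₀, hwP m₀, ?_, ?_⟩
  · intro m
    set k : ℕ := max (nn m₀) (((p 0).1 - m).toNat) with hk
    refine ⟨p k, hpP k, ?_, (hreach _ _ (le_max_left _ _)).trans (hback m₀)⟩
    have h1 := hp1 k
    have h2 : (p 0).1 - m ≤ (((p 0).1 - m).toNat : ℤ) := Int.self_le_toNat _
    have h3 : ((p 0).1 - m).toNat ≤ k := le_max_right _ _
    omega
  · intro m
    obtain ⟨m', hm', hgt⟩ := hs.exists_gt m.toNat
    obtain ⟨v, h1, h2, h3⟩ := hfwd m'
    refine ⟨v, h1, ?_, hweq m' hm' ▸ h3⟩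
    have := Int.self_le_toNat m; omega

end Stmt9
namespace Stmt9
variable {Sin Sout : Type} {P : Sin → Sin → Sout → Sout → Prop} {I : ℤ → Sin}

lemma assemble [Finite Sout] {u₀ w : ℤ × Sout} (hw : Good P I u₀ w) :
    ∃ q : ℤ → ℤ × Sout, (∀ n, RRel P I u₀ (q n)) ∧
      ∀ n, InputEdge P I (q n) (q (n + 1)) := by
  let f : ℕ → {x : ℤ × Sout // Good P I u₀ x} := fun n =>
    Nat.rec ⟨w, hw⟩ (fun _ x => ⟨(good_succ x.2).choose, (good_succ x.2).choose_spec.1⟩) n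
  let b : ℕ → {x : ℤ × Sout // Good P I u₀ x} := fun n =>
    Nat.rec ⟨w, hw⟩ (fun _ x => ⟨(good_pred x.2).choose, (good_pred x.2).choose_spec.1⟩) n
  have hf : ∀ n : ℕ, InputEdge P I (f n).1 (f (n + 1)).1 := fun n =>
    (good_succ (f n).2).choose_spec.2
  have hb : ∀ n : ℕ, InputEdge P I (b (n + 1)).1 (b n).1 := fun n =>
    (good_pred (b n).2).choose_spec.2
  refine ⟨fun n => if 0 ≤ n then (f n.toNat).1 else (b (-n).toNat).1, ?_, ?_⟩
  · intro n
    dsimp only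
    split
    · exact (f _).2.1
    · exact (b _).2.1
  · intro n
    dsimp only
    by_cases h0 : 0 ≤ n
    · rw [if_pos h0, if_pos (by omega)]
      have hn : (n + 1).toNat = n.toNat + 1 := by omega
      rw [hn]
      exact hf n.toNat
    · rw [if_neg h0]
      by_cases h1 : n = -1
      · subst h1
        rw [if_pos (by omega)]
        have e1 : ((-(-1) : ℤ)).toNat = 1 := by omega
        have e2 : ((-1 + 1 : ℤ)).toNat = 0 := by omega
        rw [e1, e2]
        exact hb 0
      · rw [if_neg (by omega)]
        have hn : (-n).toNat = (-(n + 1)).toNat + 1 := by omega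
        rw [hn]
        exact hb _

end Stmt9

/-- Let `P` be the `ℜ`-class of a vertex `u₀` in the input graph
`G_𝓘`, and assume `P` meets slices arbitrarily far in both directions. If `P` contains
an infinite directed path (going to `+∞` or to `-∞`), then `P` contains a doubly
infinite directed path of `G_𝓘`. -/
theorem class_with_infinite_path_has_doubly_infinite_path {Sin Sout : Type}
    [Fintype Sin] [Fintype Sout] [Nonempty Sin] [Nonempty Sout]
    (P : Sin → Sin → Sout → Sout → Prop) [∀ a b c d, Decidable (P a b c d)]
    (I : ℤ → Sin) (u₀ : ℤ × Sout)
    (hmeet : ∀ k : ℕ, (∃ v, RRel P I u₀ v ∧ v.1 ≤ -(k : ℤ)) ∧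
      (∃ v, RRel P I u₀ v ∧ (k : ℤ) ≤ v.1))
    (hpath :
      (∃ p : ℕ → ℤ × Sout, (∀ n, RRel P I u₀ (p n)) ∧
        ∀ n, InputEdge P I (p n) (p (n + 1))) ∨
      (∃ p : ℕ → ℤ × Sout, (∀ n, RRel P I u₀ (p n)) ∧
        ∀ n, InputEdge P I (p (n + 1)) (p n))) :
    ∃ q : ℤ → ℤ × Sout, (∀ n, RRel P I u₀ (q n)) ∧
      ∀ n, InputEdge P I (q n) (q (n + 1)) := by
  have hgood : ∃ w, Stmt9.Good P I u₀ w := by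
    rcases hpath with ⟨p, hpP, hpe⟩ | ⟨p, hpP, hpe⟩
    · exact Stmt9.good_exists_fwd (fun k => (hmeet k).1) p hpP hpe
    · exact Stmt9.good_exists_bwd (fun k => (hmeet k).2) p hpP hpe
  obtain ⟨w, hw⟩ := hgood
  exact Stmt9.assemble hw
end

section
/- Let Π = (Σ_in, Σ_out, P) be an LCL problem in normal form, 𝓘 : ℤ → Σ_in an input labeling, and P an equivalence class of ℜ on the input graph G_𝓘 that contains a doubly infinite directed path. Then for every (i,a) ∈ P, the sets ((⋃_{j ≥ i} G_𝓘[j]) ∩ P) \ r_{(i,a)} and ((⋃_{j ≤ i} G_𝓘[j]) ∩ P) \ l_{(i,a)} are finite. -/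
section Aux

variable {Sin Sout : Type} {P : Sin → Sin → Sout → Sout → Prop} {I : ℤ → Sin}

private lemma rtg_slice_le {u v : ℤ × Sout}
    (h : Relation.ReflTransGen (InputEdge P I) u v) : u.1 ≤ v.1 := by
  induction h with
  | refl => exact le_refl _
  | tail _ h ih => rw [h.1]; omega

private lemma rtg_cross {u v : ℤ × Sout}
    (h : Relation.ReflTransGen (InputEdge P I) u v) {s : ℤ}
    (h1 : u.1 ≤ s) (h2 : s ≤ v.1) :
    ∃ w : ℤ × Sout, w.1 = s ∧ Relation.ReflTransGen (InputEdge P I) u w ∧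
      Relation.ReflTransGen (InputEdge P I) w v := by
  revert h2
  induction h with
  | refl => exact fun h2 => ⟨u, le_antisymm h1 h2, .refl, .refl⟩
  | @tail b c hub hbc ih =>
      intro h2
      by_cases hs : s ≤ b.1
      · obtain ⟨w, hw1, hw2, hw3⟩ := ih hs
        exact ⟨w, hw1, hw2, hw3.tail hbc⟩
      · have : s = c.1 := by have := hbc.1; omega
        exact ⟨c, this.symm, hub.tail hbc, .refl⟩

private lemma q_reach_nat (q : ℤ → ℤ × Sout)
    (hqe : ∀ n, InputEdge P I (q n) (q (n + 1))) :
    ∀ (d : ℕ) (m : ℤ), Relation.ReflTransGen (InputEdge P I) (q m) (q (m + d))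
  | 0, m => by simpa using Relation.ReflTransGen.refl
  | (d+1), m => by
      have h1 := q_reach_nat q hqe d m
      have h2 := hqe (m + d)
      have : (m : ℤ) + (d + 1 : ℕ) = (m + d) + 1 := by push_cast; ring
      rw [this]
      exact h1.tail h2

private lemma q_reach {q : ℤ → ℤ × Sout}
    (hqe : ∀ n, InputEdge P I (q n) (q (n + 1))) {m n : ℤ} (h : m ≤ n) :
    Relation.ReflTransGen (InputEdge P I) (q m) (q n) := by
  obtain ⟨d, rfl⟩ : ∃ d : ℕ, n = m + d := ⟨(n - m).toNat, by omega⟩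
  exact q_reach_nat q hqe d m

private lemma q_slice {q : ℤ → ℤ × Sout}
    (hqe : ∀ n, InputEdge P I (q n) (q (n + 1))) (m : ℤ) :
    (q m).1 = (q 0).1 + m := by
  induction m using Int.induction_on with
  | zero => simp
  | succ n ih => have := (hqe n).1; omega
  | pred n ih =>
      have h2 := (hqe (-(n:ℤ) - 1)).1
      have e1 : (-(n:ℤ) - 1) + 1 = -(n:ℤ) := by ring
      have e2 : (-(n:ℤ) - 1) = -((n:ℤ) + 1) := by ring
      rw [e1] at h2
      rw [e2] at h2
      rw [e2]
      omega

private lemma rset_sdiff_finite {u₀ x y : ℤ × Sout}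
    (hx : RRel P I u₀ x) (hy : RRel P I u₀ y) :
    (rset P I x \ rset P I y).Finite := by
  apply Set.Finite.subset (hx.1.union hy.1)
  intro v hv
  by_cases h : v ∈ rset P I u₀
  · exact Or.inr (Set.mem_symmDiff.mpr (Or.inl ⟨h, hv.2⟩))
  · exact Or.inl (Set.mem_symmDiff.mpr (Or.inr ⟨hv.1, h⟩))

private lemma lset_sdiff_finite {u₀ x y : ℤ × Sout}
    (hx : RRel P I u₀ x) (hy : RRel P I u₀ y) :
    (lset P I x \ lset P I y).Finite := by
  apply Set.Finite.subset (hx.2.union hy.2)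
  intro v hv
  by_cases h : v ∈ lset P I u₀
  · exact Or.inr (Set.mem_symmDiff.mpr (Or.inl ⟨h, hv.2⟩))
  · exact Or.inl (Set.mem_symmDiff.mpr (Or.inr ⟨hv.1, h⟩))

private lemma exists_q_mem_lset {u₀ : ℤ × Sout} {q : ℤ → ℤ × Sout}
    (hq : ∀ n, RRel P I u₀ (q n))
    (hqe : ∀ n, InputEdge P I (q n) (q (n + 1))) {v : ℤ × Sout}
    (hv : RRel P I u₀ v) : ∃ m : ℤ, Relation.ReflTransGen (InputEdge P I) (q m) v := by
  by_contra hcon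
  push_neg at hcon
  have hfin : (lset P I (q 0) \ lset P I v).Finite := lset_sdiff_finite (hq 0) hv
  have hinf : (lset P I (q 0) \ lset P I v).Infinite := by
    apply Set.infinite_of_injective_forall_mem (f := fun n : ℕ => q (-(n : ℤ)))
    · intro a b hab
      have ha := q_slice hqe (-(a : ℤ))
      have hb := q_slice hqe (-(b : ℤ))
      have hab' : q (-(a:ℤ)) = q (-(b:ℤ)) := hab
      have := congrArg Prod.fst hab'
      omega
    · intro n
      exact ⟨q_reach hqe (by omega), hcon _⟩
  exact hinf hfin

private lemma exists_q_mem_rset {u₀ : ℤ × Sout} {q : ℤ → ℤ × Sout}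
    (hq : ∀ n, RRel P I u₀ (q n))
    (hqe : ∀ n, InputEdge P I (q n) (q (n + 1))) {v : ℤ × Sout}
    (hv : RRel P I u₀ v) : ∃ m : ℤ, Relation.ReflTransGen (InputEdge P I) v (q m) := by
  by_contra hcon
  push_neg at hcon
  have hfin : (rset P I (q 0) \ rset P I v).Finite := rset_sdiff_finite (hq 0) hv
  have hinf : (rset P I (q 0) \ rset P I v).Infinite := by
    apply Set.infinite_of_injective_forall_mem (f := fun n : ℕ => q (n : ℤ))
    · intro a b hab
      have ha := q_slice hqe (a : ℤ)
      have hb := q_slice hqe (b : ℤ)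
      have hab' : q (a:ℤ) = q (b:ℤ) := hab
      have := congrArg Prod.fst hab'
      omega
    · intro n
      exact ⟨q_reach hqe (by omega), hcon _⟩
  exact hinf hfin

end Aux

section Aux2

variable {Sin Sout : Type} {P : Sin → Sin → Sout → Sout → Prop} {I : ℤ → Sin}
  [Fintype Sout] [Nonempty Sout]

private lemma saturation_rset {q : ℤ → ℤ × Sout}
    (hqe : ∀ n, InputEdge P I (q n) (q (n + 1))) (n : ℤ) :
    ∃ k₀ : ℤ, k₀ ≤ n ∧ ∀ a : Sout, (∃ k : ℤ, ((q n).1, a) ∈ rset P I (q k)) →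
      ((q n).1, a) ∈ rset P I (q k₀) := by
  classical
  set f : Sout → ℤ := fun a =>
    if h : ∃ k : ℤ, ((q n).1, a) ∈ rset P I (q k) then h.choose else n with hf
  refine ⟨min n (Finset.univ.inf' Finset.univ_nonempty f), min_le_left _ _, ?_⟩
  intro a ha
  have h1 : ((q n).1, a) ∈ rset P I (q (f a)) := by
    rw [hf]; simp only [dif_pos ha]; exact ha.choose_spec
  have h2 : min n (Finset.univ.inf' Finset.univ_nonempty f) ≤ f a :=
    le_trans (min_le_right _ _) (Finset.inf'_le _ (Finset.mem_univ a))
  exact (q_reach hqe h2).trans h1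

private lemma saturation_lset {q : ℤ → ℤ × Sout}
    (hqe : ∀ n, InputEdge P I (q n) (q (n + 1))) (n : ℤ) :
    ∃ k₀ : ℤ, n ≤ k₀ ∧ ∀ a : Sout, (∃ k : ℤ, ((q n).1, a) ∈ lset P I (q k)) →
      ((q n).1, a) ∈ lset P I (q k₀) := by
  classical
  set f : Sout → ℤ := fun a =>
    if h : ∃ k : ℤ, ((q n).1, a) ∈ lset P I (q k) then h.choose else n with hf
  refine ⟨max n (Finset.univ.sup' Finset.univ_nonempty f), le_max_left _ _, ?_⟩
  intro a ha
  have h1 : ((q n).1, a) ∈ lset P I (q (f a)) := by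
    rw [hf]; simp only [dif_pos ha]; exact ha.choose_spec
  have h2 : f a ≤ max n (Finset.univ.sup' Finset.univ_nonempty f) :=
    le_trans (Finset.le_sup' _ (Finset.mem_univ a)) (le_max_right _ _)
  exact Relation.ReflTransGen.trans h1 (q_reach hqe h2)

private lemma finite_bad_rset_q {u₀ : ℤ × Sout} {q : ℤ → ℤ × Sout}
    (hq : ∀ n, RRel P I u₀ (q n))
    (hqe : ∀ n, InputEdge P I (q n) (q (n + 1))) (n : ℤ) :
    {v : ℤ × Sout | RRel P I u₀ v ∧ (q n).1 ≤ v.1 ∧ v ∉ rset P I (q n)}.Finite := by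
  obtain ⟨k₀, hk₀n, hk₀⟩ := saturation_rset hqe n
  apply Set.Finite.subset (rset_sdiff_finite (hq k₀) (hq n))
  rintro v ⟨hv, hvs, hvn⟩
  refine ⟨?_, hvn⟩
  obtain ⟨m, hm⟩ := exists_q_mem_lset hq hqe hv
  have hmin : Relation.ReflTransGen (InputEdge P I) (q (min m k₀)) v :=
    (q_reach hqe (min_le_left m k₀)).trans hm
  have hs1 : (q (min m k₀)).1 ≤ (q n).1 := by
    have e1 := q_slice hqe (min m k₀)
    have e2 := q_slice hqe n
    have e3 : min m k₀ ≤ n := le_trans (min_le_right _ _) hk₀n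
    omega
  obtain ⟨w, hw1, hw2, hw3⟩ := rtg_cross hmin hs1 hvs
  obtain ⟨ws, wa⟩ := w
  dsimp at hw1
  subst hw1
  have hmem : ((q n).1, wa) ∈ rset P I (q k₀) := hk₀ wa ⟨min m k₀, hw2⟩
  exact Relation.ReflTransGen.trans hmem hw3

private lemma finite_bad_lset_q {u₀ : ℤ × Sout} {q : ℤ → ℤ × Sout}
    (hq : ∀ n, RRel P I u₀ (q n))
    (hqe : ∀ n, InputEdge P I (q n) (q (n + 1))) (n : ℤ) :
    {v : ℤ × Sout | RRel P I u₀ v ∧ v.1 ≤ (q n).1 ∧ v ∉ lset P I (q n)}.Finite := by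
  obtain ⟨k₀, hk₀n, hk₀⟩ := saturation_lset hqe n
  apply Set.Finite.subset (lset_sdiff_finite (hq k₀) (hq n))
  rintro v ⟨hv, hvs, hvn⟩
  refine ⟨?_, hvn⟩
  obtain ⟨m, hm⟩ := exists_q_mem_rset hq hqe hv
  have hmax : Relation.ReflTransGen (InputEdge P I) v (q (max m k₀)) :=
    hm.trans (q_reach hqe (le_max_left m k₀))
  have hs1 : (q n).1 ≤ (q (max m k₀)).1 := by
    have e1 := q_slice hqe (max m k₀)
    have e2 := q_slice hqe n
    have e3 : n ≤ max m k₀ := le_trans hk₀n (le_max_right _ _)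
    omega
  obtain ⟨w, hw1, hw2, hw3⟩ := rtg_cross hmax hvs hs1
  obtain ⟨ws, wa⟩ := w
  dsimp at hw1
  subst hw1
  have hmem : ((q n).1, wa) ∈ lset P I (q k₀) := hk₀ wa ⟨max m k₀, hw3⟩
  exact Relation.ReflTransGen.trans hw2 hmem

omit [Nonempty Sout] in
private lemma finite_band (a b : ℤ) :
    {v : ℤ × Sout | a ≤ v.1 ∧ v.1 < b}.Finite := by
  apply Set.Finite.subset ((Set.finite_Ico a b).prod Set.finite_univ)
  intro v hv
  exact ⟨Set.mem_Ico.mpr ⟨hv.1, hv.2⟩, Set.mem_univ _⟩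

end Aux2


/-- Let `P` be the `ℜ`-class of a vertex `u₀` of `G_𝓘`, and suppose
`P` contains a doubly infinite directed path. Then for every vertex `u ∈ P`, the sets
`((⋃_{j ≥ u.1} G_𝓘[j]) ∩ P) \ r_u` and `((⋃_{j ≤ u.1} G_𝓘[j]) ∩ P) \ l_u` are finite. -/
theorem finiteness_outside_reach {Sin Sout : Type}
    [Fintype Sin] [Fintype Sout] [Nonempty Sin] [Nonempty Sout]
    (P : Sin → Sin → Sout → Sout → Prop) [∀ a b c d, Decidable (P a b c d)]
    (I : ℤ → Sin) (u₀ : ℤ × Sout)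
    (q : ℤ → ℤ × Sout) (hq : ∀ n, RRel P I u₀ (q n))
    (hqe : ∀ n, InputEdge P I (q n) (q (n + 1))) :
    ∀ u : ℤ × Sout, RRel P I u₀ u →
      ({v | RRel P I u₀ v ∧ u.1 ≤ v.1 ∧ v ∉ rset P I u}).Finite ∧
      ({v | RRel P I u₀ v ∧ v.1 ≤ u.1 ∧ v ∉ lset P I u}).Finite := by

  intro u hu
  constructor
  · obtain ⟨n₂, hn₂⟩ := exists_q_mem_rset hq hqe hu
    apply Set.Finite.subset
      ((finite_bad_rset_q hq hqe n₂).union (finite_band u.1 (q n₂).1))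
    rintro v ⟨hv, hvu, hvr⟩
    by_cases hcase : (q n₂).1 ≤ v.1
    · exact Or.inl ⟨hv, hcase, fun hc => hvr (hn₂.trans hc)⟩
    · exact Or.inr ⟨hvu, by omega⟩
  · obtain ⟨n₂, hn₂⟩ := exists_q_mem_lset hq hqe hu
    apply Set.Finite.subset
      ((finite_bad_lset_q hq hqe n₂).union (finite_band ((q n₂).1 + 1) (u.1 + 1)))
    rintro v ⟨hv, hvu, hvl⟩
    by_cases hcase : v.1 ≤ (q n₂).1
    · exact Or.inl ⟨hv, hcase, fun hc => hvl (hc.trans hn₂)⟩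
    · exact Or.inr ⟨by omega, by omega⟩
end

section
/- Let Π = (Σ_in, Σ_out, P) be an LCL problem in normal form and 𝓘 : ℤ → Σ_in an input labeling. Assume every ℜ-class meets slices arbitrarily far in both directions. Let ⊲ be the transitive closure of the relation on ℜ-classes that relates P to P' whenever there is a directed path in G_𝓘 from some vertex of P to some vertex of P'. If P is an ℜ-class containing a doubly infinite directed path and Q ≠ Q' are ℜ-classes with Q ⊲ P ⊲ Q', then Q' ⊲ Q fails. In particular, ⊲ restricted to the ℜ-classes containing doubly infinite directed paths is a partial order. -/
/-- The relation on `ℜ`-classes (represented by vertices): there is a directed path in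
`G_𝓘` from the class of `u` to the class of `v`. -/
def ClassReach {Sin Sout : Type} (P : Sin → Sin → Sout → Sout → Prop) (I : ℤ → Sin)
    (u v : ℤ × Sout) : Prop :=
  ∃ u' v', RRel P I u u' ∧ RRel P I v v' ∧
    Relation.ReflTransGen (InputEdge P I) u' v'

/-- The class of `u` contains a doubly infinite directed path of `G_𝓘`. -/
def HasDIPath {Sin Sout : Type} (P : Sin → Sin → Sout → Sout → Prop) (I : ℤ → Sin)
    (u : ℤ × Sout) : Prop :=
  ∃ q : ℤ → ℤ × Sout, (∀ n, RRel P I u (q n)) ∧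
    ∀ n, InputEdge P I (q n) (q (n + 1))

lemma diff_finite_of_classReach {Sin Sout : Type}
    (P : Sin → Sin → Sout → Sout → Prop) (I : ℤ → Sin)
    {u v : ℤ × Sout} (h : ClassReach P I u v) :
    (rset P I v \ rset P I u).Finite ∧ (lset P I u \ lset P I v).Finite := by
  obtain ⟨u', v', huu, hvv, hpath⟩ := h
  constructor
  · refine (hvv.1.union huu.1).subset ?_
    intro x hx
    by_cases hx' : x ∈ rset P I v'
    · have : x ∈ rset P I u' := Relation.ReflTransGen.trans hpath hx'
      right; rw [Set.mem_symmDiff]; right; exact ⟨this, hx.2⟩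
    · left; rw [Set.mem_symmDiff]; left; exact ⟨hx.1, hx'⟩
  · refine (huu.2.union hvv.2).subset ?_
    intro x hx
    by_cases hx' : x ∈ lset P I u'
    · have : x ∈ lset P I v' := Relation.ReflTransGen.trans hx' hpath
      right; rw [Set.mem_symmDiff]; right; exact ⟨this, hx.2⟩
    · left; rw [Set.mem_symmDiff]; left; exact ⟨hx.1, hx'⟩

lemma diff_finite_of_transGen {Sin Sout : Type}
    (P : Sin → Sin → Sout → Sout → Prop) (I : ℤ → Sin)
    {u v : ℤ × Sout} (h : Relation.TransGen (ClassReach P I) u v) :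
    (rset P I v \ rset P I u).Finite ∧ (lset P I u \ lset P I v).Finite := by
  induction h with
  | single h => exact diff_finite_of_classReach P I h
  | @tail b c _ h ih =>
    obtain ⟨h1, h2⟩ := diff_finite_of_classReach P I h
    refine ⟨(h1.union ih.1).subset fun x hx => ?_, (ih.2.union h2).subset fun x hx => ?_⟩
    · by_cases hx' : x ∈ rset P I b
      · right; exact ⟨hx', hx.2⟩
      · left; exact ⟨hx.1, hx'⟩
    · by_cases hx' : x ∈ lset P I b
      · right; exact ⟨hx', hx.2⟩
      · left; exact ⟨hx.1, hx'⟩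

lemma rrel_of_cycle {Sin Sout : Type}
    (P : Sin → Sin → Sout → Sout → Prop) (I : ℤ → Sin)
    {u v : ℤ × Sout} (h1 : Relation.TransGen (ClassReach P I) u v)
    (h2 : Relation.TransGen (ClassReach P I) v u) : RRel P I u v := by
  obtain ⟨r1, l1⟩ := diff_finite_of_transGen P I h1
  obtain ⟨r2, l2⟩ := diff_finite_of_transGen P I h2
  constructor
  · refine (r2.union r1).subset ?_
    rw [Set.symmDiff_def]
  · refine (l1.union l2).subset ?_
    rw [Set.symmDiff_def]

/-- Assume every `ℜ`-class of `G_𝓘` meets slices arbitrarily far in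
both directions, and let `⊲` be the transitive closure of the reachability relation on
`ℜ`-classes. If the class of `p` contains a doubly infinite directed path and the
classes of `q` and `q'` are distinct with `q ⊲ p ⊲ q'`, then `q' ⊲ q` fails. In
particular, `⊲` is antisymmetric (a partial order) on classes containing doubly
infinite directed paths. -/
theorem classReach_partial_order {Sin Sout : Type}
    [Fintype Sin] [Fintype Sout] [Nonempty Sin] [Nonempty Sout]
    (P : Sin → Sin → Sout → Sout → Prop) [∀ a b c d, Decidable (P a b c d)]
    (I : ℤ → Sin)
    (hmeet : ∀ u : ℤ × Sout, ∀ k : ℕ, (∃ v, RRel P I u v ∧ v.1 ≤ -(k : ℤ)) ∧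
      (∃ v, RRel P I u v ∧ (k : ℤ) ≤ v.1)) :
    (∀ p q q' : ℤ × Sout, HasDIPath P I p → ¬ RRel P I q q' →
      Relation.TransGen (ClassReach P I) q p →
      Relation.TransGen (ClassReach P I) p q' →
      ¬ Relation.TransGen (ClassReach P I) q' q) ∧
    (∀ p p' : ℤ × Sout, HasDIPath P I p → HasDIPath P I p' →
      Relation.TransGen (ClassReach P I) p p' →
      Relation.TransGen (ClassReach P I) p' p → RRel P I p p') := by
  constructor
  · intro p q q' _ hne hqp hpq' hq'q
    exact hne (rrel_of_cycle P I (hqp.trans hpq') hq'q)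
  · intro p p' _ _ h1 h2
    exact rrel_of_cycle P I h1 h2
end

section
/- Let Π = (Σ_in, Σ_out, P) be an LCL problem in normal form, σ ∈ Σ_in and (Υ,∇) a subpartition of Σ_out. If B and B' are permutation σ-blocks on (Υ,∇) witnessed by permutations π_B and π_{B'}, then the concatenation B⌢B' (identifying the last letter of B with the first letter of B') is a permutation σ-block on (Υ,∇) witnessed by the composition π_{B'} ∘ π_B. Consequently, if Γ_{σ,(Υ,∇)} is nonempty, then it is a subgroup of the symmetric group on the set of ∇-classes: it is closed under composition and under taking inverses, and contains the identity. -/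
open MeasureTheory

/-- Concatenation of two blocks, identifying the last letter of the first block (of
length `t`) with the first letter of the second one. -/
def blockConcat {Sin : Type} (B B' : ℕ → Sin) (t : ℕ) : ℕ → Sin :=
  fun k => if k ≤ t then B k else B' (k - t)

/-- Splitting a path in the block graph of a concatenated block. -/
lemma blockConcat_blockType_split {Sin Sout : Type}
    (P : Sin → Sin → Sout → Sout → Prop) (B B' : ℕ → Sin) (t t' : ℕ)
    (hBB' : B t = B' 0) (a b : Sout)
    (h : BlockType P (blockConcat B B' t) (t + t') a b) :
    ∃ c, BlockType P B t a c ∧ BlockType P B' t' c b := by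
  obtain ⟨g, hg0, hgT, hgP⟩ := h
  have hCle : ∀ j ≤ t, blockConcat B B' t j = B j := by
    intro j hj; simp [blockConcat, hj]
  have hCge : ∀ j, blockConcat B B' t (t + j) = B' j := by
    intro j
    rcases Nat.eq_zero_or_pos j with rfl | hj
    · simpa [blockConcat] using hBB'
    · unfold blockConcat
      rw [if_neg (by omega)]
      congr 1
      omega
  refine ⟨g t, ⟨g, hg0, rfl, ?_⟩, ⟨fun k => g (t + k), rfl, by simpa using hgT, ?_⟩⟩
  · intro j hj
    have := hgP j (by omega)
    rwa [hCle j (by omega), hCle (j + 1) (by omega)] at this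
  · intro j hj
    have := hgP (t + j) (by omega)
    rwa [hCge j, show t + j + 1 = t + (j + 1) from rfl, hCge (j + 1)] at this

/-- The concatenation of two permutation `σ`-blocks on a subpartition
`(Υ,∇)`, witnessed by `π_B` and `π_{B'}`, is a permutation `σ`-block witnessed by the
composition `π_{B'} ∘ π_B`. Consequently, if `Γ_{σ,(Υ,∇)}` is nonempty then it is a
subgroup of the symmetric group on the set of `∇`-classes: it is closed under
composition and inverses and contains the identity. -/
theorem permutationBlock_concat_and_Gamma_subgroup {Sin Sout : Type}
    [Fintype Sin] [Fintype Sout] [Nonempty Sin] [Nonempty Sout]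
    (P : Sin → Sin → Sout → Sout → Prop) [∀ a b c d, Decidable (P a b c d)]
    (σ : Sin) (sp : Subpartition Sout) :
    (∀ (B B' : ℕ → Sin) (t t' : ℕ) (π π' : Equiv.Perm sp.Classes),
      IsPermutationBlock P σ sp B t π → IsPermutationBlock P σ sp B' t' π' →
      IsPermutationBlock P σ sp (blockConcat B B' t) (t + t') (π' * π)) ∧
    ((Gamma P σ sp).Nonempty →
      (∀ π₁ ∈ Gamma P σ sp, ∀ π₂ ∈ Gamma P σ sp, π₁ * π₂ ∈ Gamma P σ sp) ∧
      (∀ π₁ ∈ Gamma P σ sp, π₁⁻¹ ∈ Gamma P σ sp) ∧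
      (1 : Equiv.Perm sp.Classes) ∈ Gamma P σ sp) := by
    classical
  have main : ∀ (B B' : ℕ → Sin) (t t' : ℕ) (π π' : Equiv.Perm sp.Classes),
      IsPermutationBlock P σ sp B t π → IsPermutationBlock P σ sp B' t' π' →
      IsPermutationBlock P σ sp (blockConcat B B' t) (t + t') (π' * π) := by
    rintro B B' t t' π π' ⟨hB0, hBt, h1, h2, h3, h4⟩ ⟨hB'0, hB't, h1', h2', h3', h4'⟩
    have hBB' : B t = B' 0 := by rw [hBt, hB'0]
    have split := blockConcat_blockType_split P B B' t t' hBB'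
    have hCge : ∀ j, blockConcat B B' t (t + j) = B' j := by
      intro j
      rcases Nat.eq_zero_or_pos j with rfl | hj
      · simpa [blockConcat] using hBB'
      · unfold blockConcat
        rw [if_neg (by omega)]
        congr 1
        omega
    refine ⟨?_, ?_, ?_, ?_, ?_, ?_⟩
    · simpa [blockConcat] using hB0
    · rw [hCge t']; exact hB't
    · intro a b hab
      obtain ⟨c, hc⟩ := Quotient.exists_rep (π (sp.cls a))
      have hc' : sp.cls c = π (sp.cls a) := hc
      have hac : sp.pp a c := h1 a c hc'.symm
      have hcb : sp.pp c b := by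
        apply h1' c b
        rw [hc']
        simpa using hab
      exact sp.pp_equiv.trans hac hcb
    · intro a b hab
      obtain ⟨c, hac, hcb⟩ := split a b hab
      exact sp.preceq_trans (h2 a c hac) (h2' c b hcb)
    · intro a b ha hab hpp
      obtain ⟨c, hac, hcb⟩ := split a b hab
      have pac := h2 a c hac
      have pca : sp.preceq c a :=
        sp.preceq_congr (sp.pp_equiv.refl c) (sp.pp_equiv.symm hpp) (h2' c b hcb)
      exact h3 a c ha hac (sp.preceq_antisymm pac pca)
    · intro a b hab hpp
      obtain ⟨c, hac, hcb⟩ := split a b hab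
      have pac := h2 _ c hac
      have pca : sp.preceq c (a : Sout) :=
        sp.preceq_congr (sp.pp_equiv.refl c) (sp.pp_equiv.symm hpp) (h2' c b hcb)
      have ppac : sp.pp (a : Sout) c := sp.preceq_antisymm pac pca
      have ppcb : sp.pp c (b : Sout) := sp.pp_equiv.trans (sp.pp_equiv.symm ppac) hpp
      have hcd : c ∈ sp.dom := by
        by_contra hcd
        exact h3' c b hcd hcb ppcb
      have e1 : π (sp.cls a) = sp.cls ⟨c, hcd⟩ := h4 a ⟨c, hcd⟩ hac ppac
      have e2 : π' (sp.cls ⟨c, hcd⟩) = sp.cls b := h4' ⟨c, hcd⟩ b hcb ppcb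
      simpa [Equiv.Perm.mul_apply, e1] using e2
  refine ⟨main, ?_⟩
  rintro ⟨π0, hπ0⟩
  have hmul : ∀ π₁ ∈ Gamma P σ sp, ∀ π₂ ∈ Gamma P σ sp, π₁ * π₂ ∈ Gamma P σ sp := by
    rintro π₁ ⟨B1, t1, hb1⟩ π₂ ⟨B2, t2, hb2⟩
    exact ⟨blockConcat B2 B1 t2, t2 + t1, main B2 B1 t2 t1 π₂ π₁ hb2 hb1⟩
  have hpow : ∀ (n : ℕ), ∀ π₁ ∈ Gamma P σ sp, π₁ ^ (n + 1) ∈ Gamma P σ sp := by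
    intro n
    induction n with
    | zero => intro π₁ h; simpa using h
    | succ n ih =>
      intro π₁ h
      rw [pow_succ]
      exact hmul _ (ih π₁ h) _ h
  haveI : Finite sp.Classes := Quotient.finite sp.domSetoid
  have hfin : ∀ π₁ : Equiv.Perm sp.Classes, ∃ m : ℕ, π₁ ^ (m + 1) = 1 := by
    intro π₁
    refine ⟨orderOf π₁ - 1, ?_⟩
    rw [Nat.sub_add_cancel (orderOf_pos π₁)]
    exact pow_orderOf_eq_one π₁
  obtain ⟨m0, hm0⟩ := hfin π0
  have hone : (1 : Equiv.Perm sp.Classes) ∈ Gamma P σ sp := by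
    rw [← hm0]; exact hpow m0 π0 hπ0
  refine ⟨hmul, ?_, hone⟩
  intro π₁ hπ₁
  obtain ⟨m, hm⟩ := hfin π₁
  have key : π₁ ^ (2 * m + 1) = π₁⁻¹ := by
    apply eq_inv_of_mul_eq_one_left
    have : π₁ ^ (2 * m + 1) * π₁ = (π₁ ^ (m + 1)) * (π₁ ^ (m + 1)) := by
      rw [← pow_succ, ← pow_add]
      congr 1
      omega
    rw [this, hm, one_mul]
  rw [← key]
  exact hpow (2 * m) π₁ hπ₁
end

section
/- Let Π = (Σ_in, Σ_out, P) be an LCL problem in normal form and σ ∈ Σ_in. For every σ-block B there exists a σ-block B' with type(B') = type(B) and length at most |Σ_in| · 2^{|Σ_out|·|Σ_out|}. -/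
open MeasureTheory

lemma blockType_congr {Sin Sout : Type} (P : Sin → Sin → Sout → Sout → Prop)
    {B1 B2 : ℕ → Sin} {t : ℕ} (h : ∀ n ≤ t, B1 n = B2 n) (a b : Sout) :
    BlockType P B1 t a b ↔ BlockType P B2 t a b := by
  constructor <;> rintro ⟨g, hg0, hgt, hg⟩ <;> refine ⟨g, hg0, hgt, fun j hj => ?_⟩
  · rw [← h j (by omega), ← h (j + 1) (by omega)]; exact hg j hj
  · rw [h j (by omega), h (j + 1) (by omega)]; exact hg j hj

lemma blockType_split {Sin Sout : Type} (P : Sin → Sin → Sout → Sout → Prop)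
    (B : ℕ → Sin) {j t : ℕ} (hj : j ≤ t) (a b : Sout) :
    BlockType P B t a b ↔
      ∃ c, BlockType P B j a c ∧ BlockType P (fun n => B (j + n)) (t - j) c b := by
  constructor
  · rintro ⟨g, hg0, hgt, hg⟩
    refine ⟨g j, ⟨g, hg0, rfl, fun m hm => hg m (lt_of_lt_of_le hm hj)⟩,
      ⟨fun n => g (j + n), rfl, ?_, ?_⟩⟩
    · show g (j + (t - j)) = b
      rw [Nat.add_sub_cancel' hj, hgt]
    · intro m hm
      have h := hg (j + m) (by omega)
      simpa [Nat.add_assoc] using h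
  · rintro ⟨c, ⟨g1, hg10, hg1j, hg1⟩, ⟨g2, hg20, hg2t, hg2⟩⟩
    refine ⟨fun n => if n ≤ j then g1 n else g2 (n - j), by simp [hg10], ?_, ?_⟩
    · by_cases h : t ≤ j
      · have : t = j := le_antisymm h hj
        simp only [this, le_refl, if_pos]
        rw [hg1j, ← hg20]
        simpa [this] using hg2t
      · simp only [if_neg h]
        exact hg2t
    · intro n hn
      by_cases h1 : n + 1 ≤ j
      · simp only [if_pos h1, if_pos (by omega : n ≤ j)]
        exact hg1 n (by omega)
      · by_cases h2 : n ≤ j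
        · have hnj : n = j := by omega
          simp only [if_pos h2, if_neg h1]
          have h := hg2 0 (by omega)
          simp only [Nat.add_zero] at h
          rw [hg20, ← hg1j] at h
          have : n + 1 - j = 1 := by omega
          rw [this, hnj]
          simpa [hnj] using h
        · simp only [if_neg h2, if_neg h1]
          have h := hg2 (n - j) (by omega)
          have e1 : j + (n - j) = n := by omega
          have e2 : n + 1 - j = n - j + 1 := by omega
          rw [e2]
          simpa [e1, ← Nat.add_assoc] using h

open Classical in
lemma block_pumping_aux {Sin Sout : Type}
    [Fintype Sin] [Fintype Sout]
    (P : Sin → Sin → Sout → Sout → Prop) (σ : Sin) :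
    ∀ t : ℕ, ∀ B : ℕ → Sin, B 0 = σ → B t = σ →
    ∃ (B' : ℕ → Sin) (t' : ℕ), B' 0 = σ ∧ B' t' = σ ∧
      t' ≤ Fintype.card Sin * 2 ^ (Fintype.card Sout * Fintype.card Sout) ∧
      ∀ a b : Sout, BlockType P B' t' a b ↔ BlockType P B t a b := by
  intro t
  induction t using Nat.strong_induction_on with
  | _ t ih =>
  intro B h0 ht
  set N := Fintype.card Sin * 2 ^ (Fintype.card Sout * Fintype.card Sout) with hN
  by_cases hle : t ≤ N
  · exact ⟨B, t, h0, ht, hle, fun a b => Iff.rfl⟩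
  · push_neg at hle
    -- pigeonhole
    have hcard : Fintype.card (Sin × (Sout × Sout → Bool)) < Fintype.card (Fin (t + 1)) := by
      simp [Fintype.card_fun, ← hN]
      omega
    obtain ⟨i1, i2, hne, heq⟩ := Fintype.exists_ne_map_eq_of_card_lt
      (fun m : Fin (t + 1) =>
        (B m, fun p : Sout × Sout => decide (BlockType P B m p.1 p.2))) hcard
    -- wlog i1 < i2
    obtain ⟨j, k, hjk, hkt, hBeq, hTeq⟩ :
        ∃ j k : ℕ, j < k ∧ k ≤ t ∧ (B j = B k ∧
          ∀ a b : Sout, BlockType P B j a b ↔ BlockType P B k a b) := by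
      rcases lt_or_gt_of_ne (fun h => hne (by exact h)) with h | h
      · refine ⟨i1, i2, h, by omega, ?_, ?_⟩
        · exact congrArg Prod.fst heq
        · intro a b
          have := congrFun (congrArg Prod.snd heq) (a, b)
          simpa using this
      · refine ⟨i2, i1, h, by omega, ?_, ?_⟩
        · exact (congrArg Prod.fst heq).symm
        · intro a b
          have := congrFun (congrArg Prod.snd heq) (a, b)
          simpa using this.symm
    set d := k - j with hd
    set t2 := t - d with ht2
    set B2 : ℕ → Sin := fun n => if n ≤ j then B n else B (n + d) with hB2
    have hjt2 : j ≤ t2 := by omega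
    have hB20 : B2 0 = σ := by simp [hB2, h0]
    have hB2t : B2 t2 = σ := by
      by_cases h : t2 ≤ j
      · have : t2 = j := by omega
        have : k = t := by omega
        simp only [hB2, if_pos h]
        rw [show t2 = j by omega, hBeq, this, ht]
      · simp only [hB2, if_neg h]
        rw [show t2 + d = t by omega, ht]
    have hiff : ∀ a b : Sout, BlockType P B2 t2 a b ↔ BlockType P B t a b := by
      intro a b
      rw [blockType_split P B2 hjt2, blockType_split P B (by omega : k ≤ t)]
      have e1 : ∀ c, BlockType P B2 j a c ↔ BlockType P B k a c := by
        intro c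
        rw [blockType_congr P (B2 := B) (fun n hn => by simp [hB2, hn])]
        exact hTeq a c
      have e2 : ∀ c, BlockType P (fun n => B2 (j + n)) (t2 - j) c b ↔
          BlockType P (fun n => B (k + n)) (t - k) c b := by
        intro c
        have hlen : t2 - j = t - k := by omega
        rw [hlen]
        refine blockType_congr P (fun n _ => ?_) c b
        rcases Nat.eq_zero_or_pos n with h | h
        · simp [h, hB2, hBeq]
        · simp only [hB2, if_neg (by omega : ¬ j + n ≤ j)]
          congr 1
          omega
      constructor
      · rintro ⟨c, h1, h2⟩; exact ⟨c, (e1 c).mp h1, (e2 c).mp h2⟩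
      · rintro ⟨c, h1, h2⟩; exact ⟨c, (e1 c).mpr h1, (e2 c).mpr h2⟩
    obtain ⟨B', t', h0', ht', hle', hiff'⟩ := ih t2 (by omega) B2 hB20 hB2t
    exact ⟨B', t', h0', ht', hle', fun a b => (hiff' a b).trans (hiff a b)⟩

/-- Every `σ`-block has the same type as some `σ`-block of length at
most `|Σin| · 2^{|Σout|·|Σout|}`. -/
theorem block_pumping {Sin Sout : Type}
    [Fintype Sin] [Fintype Sout] [Nonempty Sin] [Nonempty Sout]
    (P : Sin → Sin → Sout → Sout → Prop) [∀ a b c d, Decidable (P a b c d)]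
    (σ : Sin) (B : ℕ → Sin) (t : ℕ) (h0 : B 0 = σ) (ht : B t = σ) :
    ∃ (B' : ℕ → Sin) (t' : ℕ), B' 0 = σ ∧ B' t' = σ ∧
      t' ≤ Fintype.card Sin * 2 ^ (Fintype.card Sout * Fintype.card Sout) ∧
      ∀ a b : Sout, BlockType P B' t' a b ↔ BlockType P B t a b := by
  exact block_pumping_aux P σ t B h0 ht
end

section
/- Let Π = (Σ_in, Σ_out, P) be an LCL problem in normal form. There exists an input labeling 𝓘 : ℤ → Σ_in that admits no Π-coloring if and only if there exist σ ∈ Σ_in and a σ-block B with type(B) = ∅. -/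
open MeasureTheory

section Proof15

variable {Sin Sout : Type}

private lemma segment_colorable_aux [Nonempty Sout]
    (P : Sin → Sin → Sout → Sout → Prop)
    (hB : ∀ (B : ℕ → Sin) (t : ℕ), B 0 = B t → ∃ a b, BlockType P B t a b)
    (I : ℤ → Sin) (n : ℕ) :
    ∃ f : ℤ → Sout, ∀ i : ℤ, -(n:ℤ) ≤ i → i < n →
      P (I i) (I (i+1)) (f i) (f (i+1)) := by
  set B : ℕ → Sin := fun j => if j = 2*n+1 then I (-(n:ℤ)) else I ((j:ℤ) - n) with hBdef
  have h0 : B 0 = B (2*n+1) := by simp [hBdef]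
  obtain ⟨a, b, g, hg0, hgt, hg⟩ := hB B (2*n+1) h0
  refine ⟨fun i => g (i + n).toNat, ?_⟩
  intro i h1 h2
  have hj : ((i + n).toNat : ℤ) = i + n := Int.toNat_of_nonneg (by omega)
  have hj1 : (i + 1 + n).toNat = (i + n).toNat + 1 := by omega
  have hlt : (i + n).toNat < 2*n+1 := by omega
  have key := hg (i+n).toNat hlt
  have e1 : B (i+n).toNat = I i := by
    have hne : (i+n).toNat ≠ 2*n+1 := by omega
    simp only [hBdef, if_neg hne]
    congr 1; omega
  have e2 : B ((i+n).toNat + 1) = I (i+1) := by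
    have hne : (i+n).toNat + 1 ≠ 2*n+1 := by omega
    simp only [hBdef, if_neg hne]
    congr 1; push_cast; omega
  rw [e1, e2] at key
  simpa [hj1] using key

private lemma all_colorable_of_blocks [Fintype Sout] [Nonempty Sout]
    (P : Sin → Sin → Sout → Sout → Prop)
    (hB : ∀ (B : ℕ → Sin) (t : ℕ), B 0 = B t → ∃ a b, BlockType P B t a b)
    (I : ℤ → Sin) :
    ∃ f : ℤ → Sout, ∀ i : ℤ, P (I i) (I (i+1)) (f i) (f (i+1)) := by
  letI : TopologicalSpace Sout := ⊥
  haveI : DiscreteTopology Sout := ⟨rfl⟩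
  set C : ℕ → Set (ℤ → Sout) := fun n =>
    {f | ∀ i : ℤ, -(n:ℤ) ≤ i → i < n → P (I i) (I (i+1)) (f i) (f (i+1))} with hCdef
  have hmono : ∀ {m n : ℕ}, m ≤ n → C n ⊆ C m := by
    intro m n hmn f hf i h1 h2
    exact hf i (by omega) (by omega)
  have hclosed : ∀ n, IsClosed (C n) := by
    intro n
    have : C n = ⋂ i : ℤ,
        {f : ℤ → Sout | -(n:ℤ) ≤ i → i < n → P (I i) (I (i+1)) (f i) (f (i+1))} := by
      ext f; simp [hCdef, Set.mem_iInter]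
    rw [this]
    refine isClosed_iInter fun i => ?_
    by_cases h1 : -(n:ℤ) ≤ i ∧ i < n
    · have : {f : ℤ → Sout | -(n:ℤ) ≤ i → i < n → P (I i) (I (i+1)) (f i) (f (i+1))}
          = (fun f : ℤ → Sout => (f i, f (i+1))) ⁻¹'
            {p : Sout × Sout | P (I i) (I (i+1)) p.1 p.2} := by
        ext f; simp [h1.1, h1.2]
      rw [this]
      exact (isClosed_discrete _).preimage
        ((continuous_apply i).prodMk (continuous_apply (i+1)))
    · have : {f : ℤ → Sout | -(n:ℤ) ≤ i → i < n → P (I i) (I (i+1)) (f i) (f (i+1))}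
          = Set.univ := by
        ext f; simp only [Set.mem_setOf_eq, Set.mem_univ, iff_true]
        intro hi1 hi2; exact absurd ⟨hi1, hi2⟩ h1
      rw [this]; exact isClosed_univ
  have hne : ∀ n, (C n).Nonempty := fun n => segment_colorable_aux P hB I n
  have hdir : Directed (· ⊇ ·) C := fun m n =>
    ⟨max m n, hmono (le_max_left m n), hmono (le_max_right m n)⟩
  obtain ⟨f, hf⟩ := IsCompact.nonempty_iInter_of_directed_nonempty_isCompact_isClosed
    C hdir hne (fun n => (hclosed n).isCompact) hclosed
  refine ⟨f, fun i => ?_⟩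
  have hmem := Set.mem_iInter.mp hf (i.natAbs + 1)
  exact hmem i (by omega) (by omega)

end Proof15

/-- There exists an input labeling `𝓘 : ℤ → Σin` admitting no
`Π`-coloring if and only if there exist `σ ∈ Σin` and a `σ`-block `B` with
`type(B) = ∅`. -/
theorem exists_unsolvable_input_iff_empty_type_block {Sin Sout : Type}
    [Fintype Sin] [Fintype Sout] [Nonempty Sin] [Nonempty Sout]
    (P : Sin → Sin → Sout → Sout → Prop) [∀ a b c d, Decidable (P a b c d)] :
    (∃ I : ℤ → Sin, ¬ ∃ f : ℤ → Sout, ∀ i : ℤ, P (I i) (I (i + 1)) (f i) (f (i + 1))) ↔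
    (∃ (σ : Sin) (B : ℕ → Sin) (t : ℕ), B 0 = σ ∧ B t = σ ∧
      ∀ a b : Sout, ¬ BlockType P B t a b) := by
  constructor
  · rintro ⟨I, hI⟩
    by_contra h
    push_neg at h
    apply hI
    apply all_colorable_of_blocks P
    intro B t hBt
    obtain ⟨a, b, hab⟩ := h (B 0) B t rfl hBt.symm
    exact ⟨a, b, hab⟩
  · rintro ⟨σ, B, t, hB0, hBt, hempty⟩
    refine ⟨fun i => B i.toNat, ?_⟩
    rintro ⟨f, hf⟩
    refine hempty (f 0) (f t) ⟨fun j => f j, rfl, by simp, ?_⟩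
    intro j hj
    have := hf (j : ℤ)
    have e1 : ((j:ℤ)).toNat = j := by omega
    have e2 : ((j:ℤ) + 1).toNat = j + 1 := by omega
    simp only at this ⊢
    rw [e1, e2] at this
    push_cast
    exact this
end

section
/- Let α be an irrational real number. There is no Lebesgue (Haar) measurable function f : ℝ/ℤ → Bool such that f(x + α) ≠ f(x) for almost every x ∈ ℝ/ℤ. In particular, the graph on the circle induced by rotation by α admits no Lebesgue measurable proper 2-coloring. -/
open MeasureTheory Set Function AddSubgroup

attribute [local instance] ZeroLEOneClass.factZeroLtOne

private lemma denseRange_zsmul_coe_of_irrational (β : ℝ) (hβ : Irrational β) :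
    DenseRange (fun n : ℤ => n • (β : AddCircle (1 : ℝ))) := by
  have hS : Dense ((AddSubgroup.closure ({1, β} : Set ℝ) : AddSubgroup ℝ) : Set ℝ) := by
    rcases AddSubgroup.dense_or_cyclic (AddSubgroup.closure ({1, β} : Set ℝ)) with h | ⟨a, ha⟩
    · exact h
    · exfalso
      have h1 : (1:ℝ) ∈ AddSubgroup.closure ({1, β} : Set ℝ) :=
        AddSubgroup.subset_closure (by simp)
      have hb : β ∈ AddSubgroup.closure ({1, β} : Set ℝ) :=
        AddSubgroup.subset_closure (by simp)
      rw [ha, AddSubgroup.mem_closure_singleton] at h1 hb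
      obtain ⟨m, hm⟩ := h1
      obtain ⟨n, hn⟩ := hb
      refine hβ ⟨(n : ℚ) / m, ?_⟩
      have hm0 : (m:ℝ) ≠ 0 := by
        rintro h0
        rw [zsmul_eq_mul] at hm
        simp [h0] at hm
      rw [zsmul_eq_mul] at hm hn
      have key : (n:ℝ) = β * m := by
        calc (n:ℝ) = n * ((m:ℝ) * a) := by rw [hm]; ring
        _ = β * m := by rw [← hn]; ring
      push_cast
      rw [div_eq_iff hm0]
      exact key
  have hmap : (AddSubgroup.closure ({1, β} : Set ℝ)).map
      (QuotientAddGroup.mk' (AddSubgroup.zmultiples (1:ℝ)))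
      = AddSubgroup.zmultiples ((β : AddCircle (1:ℝ))) := by
    rw [AddMonoidHom.map_closure]
    have : (QuotientAddGroup.mk' (AddSubgroup.zmultiples (1:ℝ))) '' ({1, β} : Set ℝ)
        = {0, (β : AddCircle (1:ℝ))} := by
      rw [Set.image_pair]
      congr 1
      exact (QuotientAddGroup.eq_zero_iff _).2 (AddSubgroup.mem_zmultiples (1:ℝ))
    rw [this, AddSubgroup.zmultiples_eq_closure]
    apply le_antisymm
    · rw [AddSubgroup.closure_le]
      rintro y (rfl | rfl)
      · exact SetLike.mem_coe.2 (zero_mem _)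
      · exact SetLike.mem_coe.2 (AddSubgroup.mem_zmultiples _)
    · exact AddSubgroup.zmultiples_le.2 (AddSubgroup.subset_closure (by simp))
  have hc : Continuous (QuotientAddGroup.mk' (AddSubgroup.zmultiples (1:ℝ))) :=
    continuous_quotient_mk'
  have hsurj : DenseRange (QuotientAddGroup.mk' (AddSubgroup.zmultiples (1:ℝ))) :=
    (QuotientAddGroup.mk'_surjective _).denseRange
  have hdense : Dense ((AddSubgroup.zmultiples ((β : AddCircle (1:ℝ)))) : Set (AddCircle (1:ℝ))) := by
    rw [← hmap, AddSubgroup.coe_map]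
    exact hsurj.dense_image hc hS
  have : Set.range (fun n : ℤ => n • (β : AddCircle (1 : ℝ)))
      = ((AddSubgroup.zmultiples ((β : AddCircle (1:ℝ)))) : Set (AddCircle (1:ℝ))) := by
    ext x
    simp [AddSubgroup.mem_zmultiples_iff, eq_comm]
  rw [DenseRange, this]
  exact hdense

/-- For irrational `α`, there is no Lebesgue (Haar) measurable
`f : ℝ/ℤ → Bool` with `f (x + α) ≠ f x` for almost every `x`; that is, the graph on the
circle induced by the rotation by `α` admits no Lebesgue measurable proper 2-coloring. -/
theorem no_measurable_two_coloring_of_irrational_rotation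
    (α : ℝ) (hα : Irrational α) :
    ¬ ∃ f : AddCircle (1 : ℝ) → Bool, Measurable f ∧
      ∀ᵐ x : AddCircle (1 : ℝ), f (x + (α : AddCircle (1 : ℝ))) ≠ f x := by
  rintro ⟨f, hf, hae⟩
  have hβ : Irrational (2 * α) := by
    have := hα.intCast_mul (m := 2) (by norm_num)
    simpa using this
  have hdr : DenseRange (fun n : ℤ => n • ((2 * α : ℝ) : AddCircle (1 : ℝ))) := by
    exact denseRange_zsmul_coe_of_irrational _ hβ
  have hE : Ergodic (fun x => ((2 * α : ℝ) : AddCircle (1 : ℝ)) + x) volume :=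
    ergodic_add_left_of_denseRange_zsmul hdr volume
  set s : Set (AddCircle (1:ℝ)) := f ⁻¹' {true} with hs_def
  have hsm : MeasurableSet s := hf (measurableSet_singleton true)
  set T : AddCircle (1:ℝ) → AddCircle (1:ℝ) := fun x => (α : AddCircle (1:ℝ)) + x with hT
  have hTqmp : Measure.QuasiMeasurePreserving T volume volume :=
    (measurePreserving_add_left volume _).quasiMeasurePreserving
  have hpre : T ⁻¹' s =ᵐ[volume] sᶜ := by
    refine Filter.eventuallyEq_set.2 ?_
    filter_upwards [hae] with x hx
    show (α : AddCircle (1:ℝ)) + x ∈ f ⁻¹' {true} ↔ x ∈ (f ⁻¹' {true})ᶜ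
    simp only [Set.mem_preimage, Set.mem_compl_iff, Set.mem_singleton_iff, add_comm]
    revert hx
    cases f (x + (α : AddCircle (1:ℝ))) <;> cases f x <;> simp
  have h2 : (fun x => ((2 * α : ℝ) : AddCircle (1 : ℝ)) + x) ⁻¹' s =ᵐ[volume] s := by
    have hcast : ((2 * α : ℝ) : AddCircle (1 : ℝ)) = (α : AddCircle (1:ℝ)) + α := by
      rw [two_mul]; rfl
    have hcomp : (fun x => ((2 * α : ℝ) : AddCircle (1 : ℝ)) + x) ⁻¹' s = T ⁻¹' (T ⁻¹' s) := by
      ext x; simp [hT, hcast, add_assoc, add_comm, add_left_comm]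
    rw [hcomp]
    have e1 : T ⁻¹' (T ⁻¹' s) =ᵐ[volume] T ⁻¹' sᶜ := hTqmp.preimage_ae_eq hpre
    have e3 : (T ⁻¹' s)ᶜ =ᵐ[volume] s := by
      have := hpre.compl
      exact this.trans (Filter.EventuallyEq.of_eq (compl_compl s))
    exact e1.trans e3
  have hmeq : volume s = volume sᶜ := by
    refine Eq.trans ?_ (measure_congr hpre)
    exact ((measurePreserving_add_left volume ((α : AddCircle (1:ℝ)))).measure_preimage hsm.nullMeasurableSet).symm
  have h01 : s =ᵐ[volume] (∅ : Set (AddCircle (1:ℝ))) ∨ s =ᵐ[volume] Set.univ :=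
    hE.quasiErgodic.ae_empty_or_univ₀ hsm.nullMeasurableSet h2
  have htot : volume s + volume sᶜ = 1 := by
    rw [measure_add_measure_compl hsm]
    simp
  rcases h01 with h | h
  · have : volume s = 0 := by rw [measure_congr h]; simp
    rw [this, ← hmeq, this] at htot
    simp at htot
  · have : volume sᶜ = 0 := by
      rw [measure_congr h.compl]
      simp
    rw [this, hmeq, this] at htot
    simp at htot
end

section
/- Let α ∈ (0,1) be an irrational real number. There exists a function f : ℝ/ℤ → Fin 3 such that f(x + α) ≠ f(x) for every x ∈ ℝ/ℤ, and for each color c ∈ Fin 3 the preimage f⁻¹(c) is a finite union of arcs (images under the quotient map ℝ → ℝ/ℤ of finitely many half-open intervals). -/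
open Set

private lemma arc_coloring_aux (β : ℝ) (h0 : 0 < β) (h2 : β < 1/2) (hβ : Irrational β) :
    ∃ f : AddCircle (1 : ℝ) → Fin 3,
      (∀ x : AddCircle (1 : ℝ), f (x + (β : AddCircle (1 : ℝ))) ≠ f x) ∧
      ∀ c : Fin 3, ∃ (n : ℕ) (a b : Fin n → ℝ),
        (∀ k, b k - a k < 1) ∧
        f ⁻¹' {c} = ⋃ k, (fun r : ℝ => (r : AddCircle (1 : ℝ))) '' Set.Ico (a k) (b k) := by
  haveI : Fact ((0:ℝ) < 1) := ⟨one_pos⟩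
  set N : ℕ := ⌊1/β⌋₊ with hNdef
  have hβ0 : β ≠ 0 := ne_of_gt h0
  have hN2 : 2 ≤ N := Nat.le_floor (by rw [le_div_iff₀ h0]; push_cast; linarith)
  have hNβle : (N : ℝ) * β ≤ 1 := by
    have h := Nat.floor_le (le_of_lt (by positivity : (0:ℝ) < 1/β))
    rw [le_div_iff₀ h0] at h
    exact h
  have hNβ : (N : ℝ) * β < 1 := by
    rcases lt_or_eq_of_le hNβle with h | h
    · exact h
    · exfalso
      have hNne : (N : ℝ) ≠ 0 := by positivity
      have : β = ((1 / (N : ℚ) : ℚ) : ℝ) := by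
        push_cast
        field_simp at h ⊢
        linarith
      exact (Rat.not_irrational _) (this ▸ hβ)
  have hNβ1 : 1 < ((N : ℝ) + 1) * β := by
    have h := Nat.lt_succ_floor (1/β)
    rw [Nat.succ_eq_add_one] at h
    have : 1 / β < ((N : ℝ) + 1) := by exact_mod_cast h
    rw [div_lt_iff₀ h0] at this
    linarith
  -- the coloring of intervals
  set col : ℕ → Fin 3 := fun k =>
    if k + 2 ≤ N then (if k % 2 = 0 then (0 : Fin 3) else 1)
    else if k = N - 1 then (if N % 2 = 0 then 1 else 2)
    else (if N % 2 = 0 then 2 else 1) with hcol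
  have col_succ : ∀ k, k + 1 ≤ N → col (k + 1) ≠ col k := by
    intro k hk
    simp only [hcol, ne_eq]
    split_ifs <;> first | decide | omega | (exfalso; omega)
  have col_zero : col 0 = 0 := by
    simp only [hcol]
    split_ifs <;> first | rfl | omega | (exfalso; omega)
  have col_ne0 : ∀ k, N - 1 ≤ k → k ≤ N → col k ≠ 0 := by
    intro k hk1 hk2
    simp only [hcol, ne_eq]
    split_ifs <;> first | decide | omega | (exfalso; omega)
  -- data about the representative
  set e : AddCircle (1:ℝ) → ℝ := fun x => ((AddCircle.equivIco 1 0 x : ℝ)) with he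
  have he_mem : ∀ x, e x ∈ Ico (0:ℝ) 1 := by
    intro x
    have := (AddCircle.equivIco 1 0 x).2
    simpa using this
  have he_coe : ∀ x, ((e x : ℝ) : AddCircle (1:ℝ)) = x := by
    intro x
    exact (AddCircle.equivIco 1 0).symm_apply_apply x
  have he_fract : ∀ r : ℝ, e ((r : ℝ) : AddCircle (1:ℝ)) = Int.fract r := by
    intro r
    show ((AddCircle.equivIco 1 0 ((r : ℝ) : AddCircle (1:ℝ))) : ℝ) = Int.fract r
    rw [AddCircle.coe_equivIco_mk_apply]
    simp
  refine ⟨fun x => col ⌊e x / β⌋₊, ?_, ?_⟩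
  · -- properness
    intro x
    set t := e x with ht
    have htm := he_mem x
    set k := ⌊t / β⌋₊ with hk
    have htβ0 : 0 ≤ t / β := div_nonneg htm.1 (le_of_lt h0)
    have hk1 : (k : ℝ) * β ≤ t := by
      have := Nat.floor_le htβ0
      rwa [le_div_iff₀ h0] at this
    have hk2 : t < ((k : ℝ) + 1) * β := by
      have := Nat.lt_succ_floor (t / β)
      rw [Nat.succ_eq_add_one] at this
      have h' : t / β < (k : ℝ) + 1 := by exact_mod_cast this
      rwa [div_lt_iff₀ h0] at h'
    have hkN : k ≤ N := by
      by_contra h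
      push_neg at h
      have : (N : ℝ) + 1 ≤ (k : ℝ) := by exact_mod_cast h
      nlinarith [htm.2]
    have hadd : x + ((β : ℝ) : AddCircle (1:ℝ)) = (((t + β : ℝ)) : AddCircle (1:ℝ)) := by
      rw [← he_coe x]
      push_cast
      rfl
    by_cases hw : t + β < 1
    · -- no wrap
      have hfr : e (x + ((β:ℝ) : AddCircle (1:ℝ))) = t + β := by
        rw [hadd, he_fract]
        exact Int.fract_eq_self.2 ⟨by linarith [htm.1], hw⟩
      have hfloor : ⌊(t + β) / β⌋₊ = k + 1 := by
        rw [add_div, div_self hβ0, Nat.floor_add_one htβ0]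
      have hk1N : k + 1 ≤ N := by
        by_contra h
        push_neg at h
        have hkeq : k = N := by omega
        rw [hkeq] at hk1
        nlinarith
      simp only [hfr, hfloor]
      exact col_succ k hk1N
    · -- wrap around
      push_neg at hw
      have hfr : e (x + ((β:ℝ) : AddCircle (1:ℝ))) = t + β - 1 := by
        rw [hadd, he_fract]
        have : Int.fract (t + β) = Int.fract (t + β - (1:ℤ)) := (Int.fract_sub_intCast _ _).symm
        rw [this]
        push_cast
        exact Int.fract_eq_self.2 ⟨by linarith, by linarith [htm.2, h2]⟩
      have hfloor : ⌊(t + β - 1) / β⌋₊ = 0 := by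
        apply Nat.floor_eq_zero.2
        rw [div_lt_one h0]
        linarith [htm.2]
      have hkN1 : N - 1 ≤ k := by
        by_contra h
        push_neg at h
        have h' : (k : ℝ) + 1 ≤ (N : ℝ) - 1 := by
          have hn : k + 2 ≤ N := by omega
          have := (Nat.cast_le (α := ℝ)).2 hn
          push_cast at this
          linarith
        have ht' : 1 - β ≤ t := by linarith
        nlinarith
      simp only [hfr, hfloor, col_zero]
      exact fun hcontra => col_ne0 k hkN1 hkN hcontra.symm
  · -- color classes are unions of arcs
    intro c
    refine ⟨N + 1, fun k => if col k = c then (k : ℝ) * β else 0,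
      fun k => if col k = c then min (((k : ℝ) + 1) * β) 1 else 0, ?_, ?_⟩
    · intro k
      dsimp only
      split_ifs
      · have : min (((k : ℝ) + 1) * β) 1 ≤ ((k : ℝ) + 1) * β := min_le_left _ _
        nlinarith
      · norm_num
    · ext x
      simp only [mem_preimage, mem_singleton_iff, mem_iUnion, mem_image]
      constructor
      · intro hc
        set t := e x with ht
        have htm := he_mem x
        set k := ⌊t / β⌋₊ with hk
        have htβ0 : 0 ≤ t / β := div_nonneg htm.1 (le_of_lt h0)
        have hk1 : (k : ℝ) * β ≤ t := by
          have := Nat.floor_le htβ0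
          rwa [le_div_iff₀ h0] at this
        have hk2 : t < ((k : ℝ) + 1) * β := by
          have := Nat.lt_succ_floor (t / β)
          rw [Nat.succ_eq_add_one] at this
          have h' : t / β < (k : ℝ) + 1 := by exact_mod_cast this
          rwa [div_lt_iff₀ h0] at h'
        have hkN : k ≤ N := by
          by_contra h
          push_neg at h
          have : (N : ℝ) + 1 ≤ (k : ℝ) := by exact_mod_cast h
          nlinarith [htm.2]
        refine ⟨⟨k, by omega⟩, t, ?_, he_coe x⟩
        simp only [hc, if_pos]
        exact ⟨hk1, lt_min hk2 htm.2⟩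
      · rintro ⟨k, t, htmem, hπ⟩
        by_cases hck : col (k : ℕ) = c
        · rw [if_pos hck, if_pos hck] at htmem
          obtain ⟨hta, htb⟩ := htmem
          have ht0 : 0 ≤ t := le_trans (by positivity) hta
          have ht1 : t < 1 := lt_of_lt_of_le htb (min_le_right _ _)
          have hex : e x = t := by
            rw [← hπ, he_fract]
            exact Int.fract_eq_self.2 ⟨ht0, ht1⟩
          have hfl : ⌊t / β⌋₊ = (k : ℕ) := by
            rw [Nat.floor_eq_iff (div_nonneg ht0 (le_of_lt h0))]
            constructor
            · rw [le_div_iff₀ h0]; exact hta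
            · rw [div_lt_iff₀ h0]
              exact lt_of_lt_of_le htb (le_trans (min_le_left _ _) (by push_cast; linarith))
          rw [hex, hfl, hck]
        · rw [if_neg hck, if_neg hck] at htmem
          exact absurd htmem.2 (not_lt.2 htmem.1)

/-- For irrational `α ∈ (0,1)`, there is a proper 3-coloring
`f : ℝ/ℤ → Fin 3` of the graph induced by the rotation by `α` whose color classes are
finite unions of arcs (images of half-open intervals under the projection `ℝ → ℝ/ℤ`). -/
theorem three_coloring_by_arcs_of_irrational_rotation
    (α : ℝ) (h0 : 0 < α) (h1 : α < 1) (hα : Irrational α) :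
    ∃ f : AddCircle (1 : ℝ) → Fin 3,
      (∀ x : AddCircle (1 : ℝ), f (x + (α : AddCircle (1 : ℝ))) ≠ f x) ∧
      ∀ c : Fin 3, ∃ (n : ℕ) (a b : Fin n → ℝ),
        (∀ k, b k - a k < 1) ∧
        f ⁻¹' {c} = ⋃ k, (fun r : ℝ => (r : AddCircle (1 : ℝ))) '' Set.Ico (a k) (b k) := by
  have hhalf : α ≠ 1/2 := by
    intro h
    rw [h] at hα
    exact (Rat.not_irrational (1/2)) (by push_cast at hα ⊢; exact hα)
  rcases lt_or_gt_of_ne hhalf with hlt | hgt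
  · exact arc_coloring_aux α h0 hlt hα
  · obtain ⟨f, hf1, hf2⟩ := arc_coloring_aux (1 - α) (by linarith) (by linarith)
      (by
        have h := Irrational.add_intCast (hα.neg) 1
        have : -α + ((1:ℤ):ℝ) = 1 - α := by push_cast; ring
        rwa [this] at h)
    refine ⟨f, ?_, hf2⟩
    intro x
    have key := hf1 (x + ((α : ℝ) : AddCircle (1:ℝ)))
    have hsum : x + ((α : ℝ) : AddCircle (1:ℝ)) + (((1 - α : ℝ)) : AddCircle (1:ℝ)) = x := by
      have h1' : ((α : ℝ) : AddCircle (1:ℝ)) + (((1 - α : ℝ)) : AddCircle (1:ℝ))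
          = (((1 : ℝ)) : AddCircle (1:ℝ)) := by
        push_cast
        norm_num
      have h2' : (((1 : ℝ)) : AddCircle (1:ℝ)) = 0 := by
        exact_mod_cast AddCircle.coe_period (1:ℝ)
      rw [add_assoc, h1', h2', add_zero]
    rw [hsum] at key
    exact fun h => key h.symm
end
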